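/- arXiv:math/0605166 — 5 statements merged into one kernel-verified Lean document; each statement's English description precedes it below -/
import Mathlib

section
/- Let Π₁, Π₂ be partitions of ℕ. The Young subgroups 𝔖_{Π₁} and 𝔖_{Π₂} are conjugate in 𝔖_ℕ (i.e. g𝔖_{Π₁}g⁻¹ = 𝔖_{Π₂} for some finitary permutation g of ℕ) if and only if Π₁ and Π₂ are tail-equivalent. -/
/-- The infinite symmetric group `𝔖_ℕ`: the subgroup of `Equiv.Perm ℕ` consisting of
finitary permutations, i.e. bijections of `ℕ` moving only finitely many points. -/
def finitaryPerms : Subgroup (Equiv.Perm ℕ) where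
  carrier := {σ | {x | σ x ≠ x}.Finite}
  one_mem' := by simp
  mul_mem' := by
    intro a b ha hb
    refine Set.Finite.subset (ha.union hb) ?_
    intro x hx
    by_contra hmem
    simp only [Set.mem_union, Set.mem_setOf_eq, not_or, not_not] at hmem
    exact hx (by simp [Equiv.Perm.mul_apply, hmem.2, hmem.1])
  inv_mem' := by
    intro a ha
    refine Set.Finite.subset (ha.image a) ?_
    intro x hx
    refine ⟨a⁻¹ x, ?_, Equiv.apply_symm_apply a x⟩
    simp only [Set.mem_setOf_eq, Equiv.Perm.coe_inv, Equiv.apply_symm_apply]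
    exact fun h => hx h.symm

/-- The Young subgroup `𝔖_Π` associated to a partition `Π` of `ℕ`: the subgroup of finitary
permutations mapping each block of `Π` onto itself. -/
def youngSubgroup (P : Set (Set ℕ)) : Subgroup (Equiv.Perm ℕ) where
  carrier := {σ | {x | σ x ≠ x}.Finite ∧ ∀ A ∈ P, σ '' A = A}
  one_mem' := by
    constructor
    · simp
    · intro A _; simp
  mul_mem' := by
    rintro a b ⟨ha, ha'⟩ ⟨hb, hb'⟩
    constructor
    · refine Set.Finite.subset (ha.union hb) ?_
      intro x hx
      by_contra hmem
      simp only [Set.mem_union, Set.mem_setOf_eq, not_or, not_not] at hmem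
      exact hx (by simp [Equiv.Perm.mul_apply, hmem.2, hmem.1])
    · intro A hA
      have : ⇑(a * b) = ⇑a ∘ ⇑b := rfl
      rw [this, Set.image_comp, hb' A hA, ha' A hA]
  inv_mem' := by
    rintro a ⟨ha, ha'⟩
    constructor
    · refine Set.Finite.subset (ha.image a) ?_
      intro x hx
      refine ⟨a⁻¹ x, ?_, Equiv.apply_symm_apply a x⟩
      simp only [Set.mem_setOf_eq, Equiv.Perm.coe_inv, Equiv.apply_symm_apply]
      exact fun h => hx h.symm
    · intro A hA
      have := congrArg (Set.image ⇑a⁻¹) (ha' A hA)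
      rw [← Set.image_comp, (by funext x; simp : ⇑a⁻¹ ∘ ⇑a = id), Set.image_id] at this
      exact this.symm

section Aux

open Equiv

lemma mem_young_iff {P : Set (Set ℕ)} {σ : Equiv.Perm ℕ} :
    σ ∈ youngSubgroup P ↔ {x | σ x ≠ x}.Finite ∧ ∀ A ∈ P, σ '' A = A := Iff.rfl

lemma img_inv (g : Equiv.Perm ℕ) (A : Set ℕ) : ⇑g⁻¹ '' (⇑g '' A) = A := by
  rw [Set.image_image]
  simp

lemma img_inv' (g : Equiv.Perm ℕ) (A : Set ℕ) : ⇑g '' (⇑g⁻¹ '' A) = A := by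
  rw [Set.image_image]
  simp

lemma swap_support_finite (x y : ℕ) : {z | Equiv.swap x y z ≠ z}.Finite := by
  apply Set.Finite.subset (Set.toFinite ({x, y} : Set ℕ))
  intro z hz
  simp only [Set.mem_setOf_eq] at hz
  rcases eq_or_ne z x with h | h
  · simp [h]
  rcases eq_or_ne z y with h' | h'
  · simp [h']
  exact absurd (Equiv.swap_apply_of_ne_of_ne h h') hz

lemma swap_image_of_mem {A : Set ℕ} {x y : ℕ} (hx : x ∈ A) (hy : y ∈ A) :
    Equiv.swap x y '' A = A := by
  have key : ∀ z ∈ A, Equiv.swap x y z ∈ A := by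
    intro z hz
    rcases eq_or_ne z x with h | h
    · simpa [h] using hy
    rcases eq_or_ne z y with h' | h'
    · simpa [h'] using hx
    · rwa [Equiv.swap_apply_of_ne_of_ne h h']
  apply Set.Subset.antisymm
  · rintro _ ⟨z, hz, rfl⟩; exact key z hz
  · intro z hz
    refine ⟨Equiv.swap x y z, key z hz, ?_⟩
    simp

lemma swap_image_of_not_mem {A : Set ℕ} {x y : ℕ} (hx : x ∉ A) (hy : y ∉ A) :
    Equiv.swap x y '' A = A := by
  have : ∀ z ∈ A, Equiv.swap x y z = z := by
    intro z hz
    exact Equiv.swap_apply_of_ne_of_ne (fun h => hx (h ▸ hz)) (fun h => hy (h ▸ hz))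
  rw [Set.image_congr this, Set.image_id']

lemma swap_mem_young_iff {P : Set (Set ℕ)} (hP : Setoid.IsPartition P) (x y : ℕ) :
    Equiv.swap x y ∈ youngSubgroup P ↔ ∃ A ∈ P, x ∈ A ∧ y ∈ A := by
  constructor
  · rintro ⟨-, hbl⟩
    obtain ⟨A, ⟨hA, hxA⟩, -⟩ := hP.2 x
    refine ⟨A, hA, hxA, ?_⟩
    have : Equiv.swap x y x ∈ Equiv.swap x y '' A := ⟨x, hxA, rfl⟩
    rw [hbl A hA] at this
    simpa using this
  · rintro ⟨A, hA, hxA, hyA⟩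
    refine ⟨swap_support_finite x y, ?_⟩
    intro B hB
    by_cases hxB : x ∈ B
    · have hBA : B = A := (hP.2 x).unique ⟨hB, hxB⟩ ⟨hA, hxA⟩
      subst hBA
      exact swap_image_of_mem hxB hyA
    · have hyB : y ∉ B := fun hyB => hxB (((hP.2 y).unique ⟨hB, hyB⟩ ⟨hA, hyA⟩) ▸ hxA)
      exact swap_image_of_not_mem hxB hyB

lemma young_subset {P Q : Set (Set ℕ)} (hP : Setoid.IsPartition P) (hQ : Setoid.IsPartition Q)
    (h : youngSubgroup P = youngSubgroup Q) : P ⊆ Q := by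
  intro A hA
  have hne : A.Nonempty := Set.nonempty_iff_ne_empty.2 (fun he => hP.1 (he ▸ hA))
  obtain ⟨a, ha⟩ := hne
  obtain ⟨B, ⟨hB, haB⟩, -⟩ := hQ.2 a
  have hAB : A = B := by
    ext z
    constructor
    · intro hz
      have : Equiv.swap z a ∈ youngSubgroup Q := by
        rw [← h, swap_mem_young_iff hP]
        exact ⟨A, hA, hz, ha⟩
      rw [swap_mem_young_iff hQ] at this
      obtain ⟨C, hC, hzC, haC⟩ := this
      rwa [(hQ.2 a).unique ⟨hC, haC⟩ ⟨hB, haB⟩] at hzC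
    · intro hz
      have : Equiv.swap z a ∈ youngSubgroup P := by
        rw [h, swap_mem_young_iff hQ]
        exact ⟨B, hB, hz, haB⟩
      rw [swap_mem_young_iff hP] at this
      obtain ⟨C, hC, hzC, haC⟩ := this
      rwa [(hP.2 a).unique ⟨hC, haC⟩ ⟨hA, ha⟩] at hzC
  exact hAB ▸ hB

lemma young_inj {P Q : Set (Set ℕ)} (hP : Setoid.IsPartition P) (hQ : Setoid.IsPartition Q)
    (h : youngSubgroup P = youngSubgroup Q) : P = Q :=
  Set.Subset.antisymm (young_subset hP hQ h) (young_subset hQ hP h.symm)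

lemma isPartition_image (g : Equiv.Perm ℕ) {P : Set (Set ℕ)} (hP : Setoid.IsPartition P) :
    Setoid.IsPartition ((fun A => ⇑g '' A) '' P) := by
  constructor
  · rintro ⟨A, hA, hAe⟩
    have : A = ∅ := Set.image_eq_empty.mp hAe
    exact hP.1 (this ▸ hA)
  · intro a
    obtain ⟨B, ⟨hB, hmem⟩, huniq⟩ := hP.2 (g⁻¹ a)
    refine ⟨⇑g '' B, ⟨⟨B, hB, rfl⟩, ⟨g⁻¹ a, hmem, by simp⟩⟩, ?_⟩
    rintro C ⟨⟨A, hA, rfl⟩, b, hbA, hb⟩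
    have : g⁻¹ a ∈ A := by
      have : g⁻¹ (g b) = b := by simp
      rw [← hb, this]; exact hbA
    rw [huniq A ⟨hA, this⟩]

lemma map_conj_young (g : Equiv.Perm ℕ) (P : Set (Set ℕ)) :
    Subgroup.map (MulAut.conj g).toMonoidHom (youngSubgroup P) =
      youngSubgroup ((fun A => ⇑g '' A) '' P) := by
  have coe_conj : ∀ σ : Equiv.Perm ℕ, ⇑(g * σ * g⁻¹) = ⇑g ∘ ⇑σ ∘ ⇑g⁻¹ := fun σ => rfl
  ext τ
  simp only [Subgroup.mem_map, MulEquiv.coe_toMonoidHom, MulAut.conj_apply]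
  constructor
  · rintro ⟨σ, ⟨hfin, hbl⟩, rfl⟩
    constructor
    · refine Set.Finite.subset (hfin.image g) ?_
      intro x hx
      simp only [Set.mem_setOf_eq, Equiv.Perm.mul_apply] at hx
      refine ⟨g⁻¹ x, ?_, by simp⟩
      intro h
      exact hx (by rw [h]; simp)
    · rintro B ⟨A, hA, rfl⟩
      rw [coe_conj, Set.image_comp, Set.image_comp, img_inv, hbl A hA]
  · rintro ⟨hfin, hbl⟩
    refine ⟨g⁻¹ * τ * g, ⟨?_, ?_⟩, by group⟩
    · refine Set.Finite.subset (hfin.image ⇑g⁻¹) ?_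
      intro x hx
      simp only [Set.mem_setOf_eq, Equiv.Perm.mul_apply] at hx
      refine ⟨g x, ?_, g.symm_apply_apply x⟩
      intro h
      exact hx (by rw [h]; simp)
    · intro A hA
      have hbA : τ '' (⇑g '' A) = ⇑g '' A := hbl (⇑g '' A) ⟨A, hA, rfl⟩
      have : ⇑(g⁻¹ * τ * g) = ⇑g⁻¹ ∘ ⇑τ ∘ ⇑g := rfl
      rw [this, Set.image_comp, Set.image_comp, hbA, img_inv]

end Aux

/-- Young subgroups `𝔖_{Π₁}` and `𝔖_{Π₂}` are conjugate in the infinite symmetric group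
(i.e. by a finitary permutation) if and only if the partitions are tail-equivalent, i.e.
`Π₂` consists of the images of the blocks of `Π₁` under some finitary permutation. -/
theorem youngSubgroups_conjugate_iff_tailEquivalent
    (P₁ P₂ : Set (Set ℕ)) (h₁ : Setoid.IsPartition P₁) (h₂ : Setoid.IsPartition P₂) :
    (∃ g : Equiv.Perm ℕ, {x | g x ≠ x}.Finite ∧
        Subgroup.map (MulAut.conj g).toMonoidHom (youngSubgroup P₁) = youngSubgroup P₂) ↔
    (∃ g : Equiv.Perm ℕ, {x | g x ≠ x}.Finite ∧ P₂ = (fun A => g '' A) '' P₁) := by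
  constructor
  · rintro ⟨g, hg, hmap⟩
    refine ⟨g, hg, ?_⟩
    rw [map_conj_young] at hmap
    exact (young_inj (isPartition_image g h₁) h₂ hmap).symm
  · rintro ⟨g, hg, hPeq⟩
    exact ⟨g, hg, by rw [map_conj_young, ← hPeq]⟩
end

section
/- Let λ and μ be partitions of k, and let n be an integer with n ≥ k + max(λ₁, μ₁). Then K_{(n−k,μ),(n−k,λ)} = K_{μ,λ}. -/
open scoped BigOperators

/-- The Kostka number `K_{μ,w}`: the number of semistandard Young tableaux of shape `μ` and
weight `w`, i.e. having exactly `w i` entries equal to `i` for each `i`. -/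
noncomputable def kostka (μ : YoungDiagram) (w : ℕ → ℕ) : ℕ :=
  Nat.card {T : SemistandardYoungTableau μ //
    ∀ i : ℕ, (μ.cells.filter fun c => T c.1 c.2 = i).card = w i}

/-- The number of saturated chains `μ = t₀ ⊂ t₁ ⊂ ⋯ ⊂ t_m = ν` of Young diagrams in which each
`t_{i+1}` is obtained from `t_i` by adding one cell (the number of standard skew tableaux of
shape `ν/μ`). -/
noncomputable def chainCount (μ ν : YoungDiagram) (m : ℕ) : ℕ :=
  Nat.card {t : Fin (m + 1) → YoungDiagram //
    t 0 = μ ∧ t (Fin.last m) = ν ∧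
    ∀ i : Fin m, t i.castSucc ≤ t i.succ ∧ (t i.succ).card = (t i.castSucc).card + 1}

/-- `dimSYT μ` is the number of standard Young tableaux of shape `μ`: the number of saturated
chains from the empty diagram to `μ` adding one cell at a time. -/
noncomputable def dimSYT (μ : YoungDiagram) : ℕ :=
  chainCount ⊥ μ μ.card

/-- The two-row Young diagram `(a, b)` (for `b ≤ a`). -/
def twoRow (a b : ℕ) : YoungDiagram :=
  YoungDiagram.ofRowLens [a, min a b] (by simp [List.sortedGE_iff_pairwise])

/-- The dominance order on Young diagrams: `dominates μ ν` means `μ ⊵ ν`, i.e. every partial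
sum of row lengths of `μ` is at least the corresponding partial sum for `ν`. -/
def dominates (μ ν : YoungDiagram) : Prop :=
  ∀ m : ℕ, ∑ i ∈ Finset.range m, ν.rowLen i ≤ ∑ i ∈ Finset.range m, μ.rowLen i



section Aux

variable {n k : ℕ} {mu mu' : YoungDiagram}

theorem memSucc (hrest : ∀ i : ℕ, mu'.rowLen (i + 1) = mu.rowLen i) (i j : ℕ) :
    (i + 1, j) ∈ mu' ↔ (i, j) ∈ mu := by
  rw [YoungDiagram.mem_iff_lt_rowLen, YoungDiagram.mem_iff_lt_rowLen, hrest]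

theorem memZero (h0 : mu'.rowLen 0 = n - k) (j : ℕ) : (0, j) ∈ mu' ↔ j < n - k := by
  rw [YoungDiagram.mem_iff_lt_rowLen, h0]

theorem one_le_entry (T : SemistandardYoungTableau mu') {i j : ℕ}
    (h : (i + 1, j) ∈ mu') : 1 ≤ T (i + 1) j :=
  Nat.succ_le_of_lt (lt_of_le_of_lt (Nat.zero_le _) (T.col_strict (Nat.succ_pos i) h))

/-- Strip the top row. -/
def delRow (hrest : ∀ i : ℕ, mu'.rowLen (i + 1) = mu.rowLen i)
    (T : SemistandardYoungTableau mu') : SemistandardYoungTableau mu where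
  entry i j := if (i, j) ∈ mu then T (i + 1) j - 1 else 0
  row_weak' {i j1 j2} hj hcell := by
    rw [if_pos hcell, if_pos (mu.up_left_mem le_rfl hj.le hcell)]
    have := T.row_weak hj ((memSucc hrest i j2).mpr hcell)
    omega
  col_strict' {i1 i2 j} hi hcell := by
    rw [if_pos hcell, if_pos (mu.up_left_mem hi.le le_rfl hcell)]
    have h2 : T (i1 + 1) j < T (i2 + 1) j :=
      T.col_strict (by omega) ((memSucc hrest i2 j).mpr hcell)
    have h1 := one_le_entry T ((memSucc hrest i1 j).mpr (mu.up_left_mem hi.le le_rfl hcell))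
    omega
  zeros' {i j} h := if_neg h

/-- Add a top row of zeros. -/
def addRow (hrest : ∀ i : ℕ, mu'.rowLen (i + 1) = mu.rowLen i)
    (S : SemistandardYoungTableau mu) : SemistandardYoungTableau mu' where
  entry i j := if (i, j) ∈ mu' then (match i with | 0 => 0 | r + 1 => S r j + 1) else 0
  row_weak' {i j1 j2} hj hcell := by
    rw [if_pos hcell, if_pos (mu'.up_left_mem le_rfl hj.le hcell)]
    match i with
    | 0 => exact le_rfl
    | r + 1 =>
      exact Nat.succ_le_succ (S.row_weak hj ((memSucc hrest r j2).mp hcell))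
  col_strict' {i1 i2 j} hi hcell := by
    rw [if_pos hcell, if_pos (mu'.up_left_mem hi.le le_rfl hcell)]
    match i2 with
    | 0 => omega
    | r + 1 =>
      match i1 with
      | 0 => exact Nat.succ_pos _
      | s + 1 =>
        exact Nat.succ_lt_succ (S.col_strict (by omega) ((memSucc hrest r j).mp hcell))
  zeros' {i j} h := if_neg h

theorem delRow_addRow (hrest : ∀ i : ℕ, mu'.rowLen (i + 1) = mu.rowLen i)
    (S : SemistandardYoungTableau mu) : delRow hrest (addRow hrest S) = S := by
  ext i j
  show (if (i, j) ∈ mu then addRow hrest S (i + 1) j - 1 else 0) = S i j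
  by_cases hc : (i, j) ∈ mu
  · rw [if_pos hc]
    show (if (i + 1, j) ∈ mu' then S i j + 1 else 0) - 1 = S i j
    rw [if_pos ((memSucc hrest i j).mpr hc)]
    omega
  · rw [if_neg hc, (S.zeros hc).symm]

end Aux

section Aux2

variable {n k : ℕ} {mu mu' : YoungDiagram}

theorem row0_zero (h0 : mu'.rowLen 0 = n - k) (T : SemistandardYoungTableau mu')
    (hw : (mu'.cells.filter fun c => T c.1 c.2 = 0).card = n - k) :
    ∀ j, (0, j) ∈ mu' → T 0 j = 0 := by
  have hsub : (mu'.cells.filter fun c => T c.1 c.2 = 0) ⊆ mu'.row 0 := by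
    rintro ⟨i, j⟩ hc
    rw [Finset.mem_filter, YoungDiagram.mem_cells] at hc
    obtain ⟨hc1, hc2⟩ := hc
    rw [YoungDiagram.mem_row_iff]
    refine ⟨hc1, ?_⟩
    match i with
    | 0 => rfl
    | r + 1 =>
      exfalso
      have := one_le_entry T hc1
      simp only at hc2
      omega
  have hcard : (mu'.row 0).card = n - k := by
    rw [← YoungDiagram.rowLen_eq_card, h0]
  have heq : (mu'.cells.filter fun c => T c.1 c.2 = 0) = mu'.row 0 :=
    Finset.eq_of_subset_of_card_le hsub (by rw [hcard, hw])
  intro j hj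
  have : ((0 : ℕ), j) ∈ mu'.cells.filter fun c => T c.1 c.2 = 0 := by
    rw [heq, YoungDiagram.mem_row_iff]; exact ⟨hj, rfl⟩
  exact (Finset.mem_filter.mp this).2

theorem addRow_delRow (hrest : ∀ i : ℕ, mu'.rowLen (i + 1) = mu.rowLen i)
    (T : SemistandardYoungTableau mu') (hz : ∀ j, (0, j) ∈ mu' → T 0 j = 0) :
    addRow hrest (delRow hrest T) = T := by
  ext i j
  show (if (i, j) ∈ mu' then _ else 0) = T i j
  by_cases hc : (i, j) ∈ mu'
  · rw [if_pos hc]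
    match i with
    | 0 => exact (hz j hc).symm
    | r + 1 =>
      show (if (r, j) ∈ mu then T (r + 1) j - 1 else 0) + 1 = T (r + 1) j
      rw [if_pos ((memSucc hrest r j).mp hc)]
      have := one_le_entry T hc
      omega
  · rw [if_neg hc, (T.zeros hc).symm]

theorem card_filter_succ (hrest : ∀ i : ℕ, mu'.rowLen (i + 1) = mu.rowLen i)
    (T : SemistandardYoungTableau mu') (hz : ∀ j, (0, j) ∈ mu' → T 0 j = 0) (m : ℕ) :
    (mu'.cells.filter fun c => T c.1 c.2 = m + 1).card =
      (mu.cells.filter fun c => (delRow hrest T) c.1 c.2 = m).card := by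
  refine Finset.card_nbij' (fun c => (c.1 - 1, c.2)) (fun c => (c.1 + 1, c.2)) ?_ ?_ ?_ ?_
  · rintro ⟨i, j⟩ hc
    rw [Finset.mem_coe, Finset.mem_filter, YoungDiagram.mem_cells] at hc ⊢
    obtain ⟨hc1, hc2⟩ := hc
    match i with
    | 0 => exact absurd hc2 (by rw [hz j hc1]; omega)
    | r + 1 =>
      refine ⟨(memSucc hrest r j).mp hc1, ?_⟩
      show (if (r, j) ∈ mu then T (r + 1) j - 1 else 0) = m
      rw [if_pos ((memSucc hrest r j).mp hc1)]
      simp only at hc2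
      omega
  · rintro ⟨i, j⟩ hc
    rw [Finset.mem_coe, Finset.mem_filter, YoungDiagram.mem_cells] at hc ⊢
    obtain ⟨hc1, hc2⟩ := hc
    refine ⟨(memSucc hrest i j).mpr hc1, ?_⟩
    have hd : (if (i, j) ∈ mu then T (i + 1) j - 1 else 0) = m := hc2
    rw [if_pos hc1] at hd
    have := one_le_entry T ((memSucc hrest i j).mpr hc1)
    simp only
    omega
  · rintro ⟨i, j⟩ hc
    rw [Finset.mem_coe, Finset.mem_filter, YoungDiagram.mem_cells] at hc
    obtain ⟨hc1, hc2⟩ := hc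
    match i with
    | 0 => exact absurd hc2 (by rw [hz j hc1]; omega)
    | r + 1 => rfl
  · rintro ⟨i, j⟩ _
    rfl

theorem card_filter_zero (h0 : mu'.rowLen 0 = n - k)
    (hrest : ∀ i : ℕ, mu'.rowLen (i + 1) = mu.rowLen i)
    (T : SemistandardYoungTableau mu') (hz : ∀ j, (0, j) ∈ mu' → T 0 j = 0) :
    (mu'.cells.filter fun c => T c.1 c.2 = 0).card = n - k := by
  have heq : (mu'.cells.filter fun c => T c.1 c.2 = 0) = mu'.row 0 := by
    ext c
    obtain ⟨i, j⟩ := c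
    rw [Finset.mem_filter, YoungDiagram.mem_row_iff, YoungDiagram.mem_cells]
    constructor
    · rintro ⟨hc1, hc2⟩
      refine ⟨hc1, ?_⟩
      match i with
      | 0 => rfl
      | r + 1 =>
        exfalso
        have := one_le_entry T hc1
        simp only at hc2
        omega
    · rintro ⟨hc1, hc2⟩
      simp only at hc2
      subst hc2
      exact ⟨hc1, hz j hc1⟩
  rw [heq, ← YoungDiagram.rowLen_eq_card, h0]

end Aux2

/-- For partitions `λ, μ` of `k` and `n ≥ k + max(λ₁, μ₁)`, the Kostka number of the shape
`(n-k, μ)` (first row `n-k`, remaining rows `μ`) with weight `(n-k, λ)` equals `K_{μ,λ}`.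
The shape `(n-k, μ)` is characterized by its row lengths. -/
theorem kostka_prepend_row (k : ℕ) (lam mu : YoungDiagram)
    (hlam : lam.card = k) (hmu : mu.card = k)
    (n : ℕ) (hn : k + max (lam.rowLen 0) (mu.rowLen 0) ≤ n)
    (mu' : YoungDiagram) (h0 : mu'.rowLen 0 = n - k)
    (hrest : ∀ i : ℕ, mu'.rowLen (i + 1) = mu.rowLen i) :
    kostka mu' (fun i => if i = 0 then n - k else lam.rowLen (i - 1)) =
      kostka mu (fun i => lam.rowLen i) := by
  unfold kostka
  apply Nat.card_congr
  exact {
    toFun := fun T => ⟨delRow hrest T.1, by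
      intro i
      have hz := row0_zero h0 T.1 (by simpa using T.2 0)
      rw [← card_filter_succ hrest T.1 hz i]
      simpa using T.2 (i + 1)⟩
    invFun := fun S => ⟨addRow hrest S.1, by
      intro i
      have hz : ∀ j, (0, j) ∈ mu' → addRow hrest S.1 0 j = 0 := by
        intro j hj
        show (if ((0 : ℕ), j) ∈ mu' then _ else 0) = 0
        rw [if_pos hj]
      match i with
      | 0 => simpa using card_filter_zero h0 hrest (addRow hrest S.1) hz
      | m + 1 =>
        rw [card_filter_succ hrest _ hz m, delRow_addRow]
        simpa using S.2 m⟩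
    left_inv := fun T =>
      Subtype.ext (addRow_delRow hrest T.1 (row0_zero h0 T.1 (by simpa using T.2 0)))
    right_inv := fun S => Subtype.ext (delRow_addRow hrest S.1) }
end

section
/- Let μ be a partition of k. Then k!·dim (n−k,μ) / n^k tends to dim μ as n → ∞, where dim (n−k,μ) is the number of standard Young tableaux of shape (n−k,μ) (defined for n ≥ k + μ₁). -/
open scoped BigOperators

open Finset

namespace YoungDiagram

/-- deletes the first row -/
def restrictTail (mu : YoungDiagram) : YoungDiagram where
  cells := mu.cells.filter (fun c => (c.1 + 1, c.2) ∈ mu)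
  isLowerSet := by
    rintro ⟨a, b⟩ ⟨c, d⟩ ⟨h1, h2⟩ hm
    simp only [coe_filter, Set.mem_setOf_eq, mem_cells] at hm ⊢
    exact ⟨mu.up_left_mem h1 h2 hm.1, mu.up_left_mem (by omega) h2 hm.2⟩

@[simp] lemma mem_restrictTail (mu : YoungDiagram) (i j : ℕ) :
    (i, j) ∈ mu.restrictTail ↔ (i + 1, j) ∈ mu := by
  show (i, j) ∈ mu.cells.filter _ ↔ _
  simp only [mem_filter, mem_cells]
  exact ⟨fun h => h.2, fun h => ⟨mu.up_left_mem (by omega) le_rfl h, h⟩⟩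

lemma rowLen_restrictTail (mu : YoungDiagram) (i : ℕ) :
    mu.restrictTail.rowLen i = mu.rowLen (i + 1) := by
  refine eq_of_forall_lt_iff fun c => ?_
  rw [← mem_iff_lt_rowLen, ← mem_iff_lt_rowLen, mem_restrictTail]

lemma shiftEmb_injective : Function.Injective fun c : ℕ × ℕ => (c.1 + 1, c.2) := by
  rintro ⟨a, b⟩ ⟨c, d⟩ h; simpa using h

def shiftEmb : ℕ × ℕ ↪ ℕ × ℕ :=
  ⟨fun c => (c.1 + 1, c.2), shiftEmb_injective⟩

/-- prepend a row of length `max a (first row of nu)` -/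
def prepend (a : ℕ) (nu : YoungDiagram) : YoungDiagram where
  cells := {0} ×ˢ Finset.range (max a (nu.rowLen 0)) ∪ nu.cells.map shiftEmb
  isLowerSet := by
    rintro ⟨x, y⟩ ⟨c, d⟩ ⟨h1, h2⟩ hm
    simp only [coe_union, Set.mem_union, coe_product, Set.mem_prod, coe_singleton,
      Set.mem_singleton_iff, coe_range, Set.mem_Iio, coe_map, Set.mem_image, mem_cells,
      shiftEmb, Function.Embedding.coeFn_mk] at hm ⊢
    simp only at h1 h2
    obtain ⟨h3, h4⟩ | ⟨⟨e, f⟩, hef, hc⟩ := hm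
    · subst h3; left; omega
    · obtain ⟨rfl, rfl⟩ : e + 1 = x ∧ f = y := by simpa using hc
      rcases Nat.eq_zero_or_pos c with rfl | hc0
      · left
        refine ⟨rfl, lt_of_lt_of_le ?_ (le_max_right _ _)⟩
        have hmem : (e, f) ∈ nu := hef
        have h0 : (0, d) ∈ nu := nu.up_left_mem (Nat.zero_le e) h2 hmem
        rw [mem_iff_lt_rowLen] at h0
        omega
      · right
        exact ⟨(c - 1, d), nu.up_left_mem (by omega) h2 hef, by simp; omega⟩

@[simp] lemma mem_prepend (a : ℕ) (nu : YoungDiagram) (i j : ℕ) :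
    (i, j) ∈ prepend a nu ↔
      (i = 0 ∧ j < max a (nu.rowLen 0)) ∨ (∃ i', i = i' + 1 ∧ (i', j) ∈ nu) := by
  simp only [prepend, mem_mk, mem_union, mem_product, mem_singleton, mem_range, mem_map, mem_cells, shiftEmb,
    Function.Embedding.coeFn_mk]
  constructor
  · rintro (⟨rfl, h⟩ | ⟨⟨e, f⟩, hef, hc⟩)
    · exact Or.inl ⟨rfl, h⟩
    · obtain ⟨rfl, rfl⟩ : e + 1 = i ∧ f = j := by simpa using hc
      exact Or.inr ⟨e, rfl, hef⟩
  · rintro (⟨rfl, h⟩ | ⟨i', rfl, h⟩)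
    · exact Or.inl ⟨rfl, h⟩
    · exact Or.inr ⟨(i', j), h, rfl⟩

@[simp] lemma restrictTail_prepend (a : ℕ) (nu : YoungDiagram) :
    (prepend a nu).restrictTail = nu := by
  ext1
  ext ⟨i, j⟩
  simp only [mem_cells, mem_restrictTail, mem_prepend]
  constructor
  · rintro (⟨h, -⟩ | ⟨i', hi, h⟩)
    · omega
    · obtain rfl : i = i' := by omega
      exact h
  · intro h; exact Or.inr ⟨i, rfl, h⟩

lemma rowLen_prepend_zero (a : ℕ) (nu : YoungDiagram) :
    (prepend a nu).rowLen 0 = max a (nu.rowLen 0) := by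
  refine eq_of_forall_lt_iff fun c => ?_
  rw [← mem_iff_lt_rowLen, mem_prepend]
  constructor
  · rintro (⟨-, h⟩ | ⟨i', h, -⟩)
    · exact h
    · exact absurd h (by omega)
  · intro h; exact Or.inl ⟨rfl, h⟩

lemma rowLen_prepend_succ (a : ℕ) (nu : YoungDiagram) (i : ℕ) :
    (prepend a nu).rowLen (i + 1) = nu.rowLen i := by
  rw [← rowLen_restrictTail, restrictTail_prepend]

lemma ext_rowLen {mu nu : YoungDiagram} (h : ∀ i, mu.rowLen i = nu.rowLen i) : mu = nu := by
  ext1; ext ⟨i, j⟩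
  simp only [mem_cells, mem_iff_lt_rowLen, h]

lemma rowLen_le_of_le {mu nu : YoungDiagram} (h : mu ≤ nu) (i : ℕ) :
    mu.rowLen i ≤ nu.rowLen i := by
  by_contra hc
  push_neg at hc
  have := mem_iff_lt_rowLen.mpr hc
  have : (i, nu.rowLen i) ∈ nu := h this
  rw [mem_iff_lt_rowLen] at this
  omega

lemma prepend_restrictTail (mu : YoungDiagram) :
    prepend (mu.rowLen 0) mu.restrictTail = mu := by
  refine ext_rowLen fun i => ?_
  cases i with
  | zero =>
      rw [rowLen_prepend_zero, rowLen_restrictTail]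
      exact max_eq_left (mu.rowLen_anti 0 1 (by omega))
  | succ i => rw [rowLen_prepend_succ, rowLen_restrictTail]

lemma restrictTail_mono {mu nu : YoungDiagram} (h : mu ≤ nu) :
    mu.restrictTail ≤ nu.restrictTail := by
  intro c hm
  obtain ⟨i, j⟩ := c
  rw [mem_restrictTail] at hm ⊢
  exact h hm

lemma prepend_mono {a b : ℕ} {mu nu : YoungDiagram} (hab : a ≤ b) (h : mu ≤ nu) :
    prepend a mu ≤ prepend b nu := by
  intro c hm
  obtain ⟨i, j⟩ := c
  rw [mem_prepend] at hm ⊢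
  rcases hm with ⟨rfl, hj⟩ | ⟨i', rfl, hi⟩
  · exact Or.inl ⟨rfl, lt_of_lt_of_le hj (max_le_max hab (rowLen_le_of_le h 0))⟩
  · exact Or.inr ⟨i', rfl, h hi⟩

lemma card_split (mu : YoungDiagram) :
    mu.card = mu.rowLen 0 + mu.restrictTail.card := by
  have hcells : mu.cells = {0} ×ˢ Finset.range (mu.rowLen 0) ∪ mu.restrictTail.cells.map shiftEmb := by
    ext ⟨i, j⟩
    simp only [mem_cells, mem_union, mem_product, mem_singleton, mem_range, mem_map,
      shiftEmb, Function.Embedding.coeFn_mk]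
    constructor
    · intro h
      cases i with
      | zero => exact Or.inl ⟨rfl, mem_iff_lt_rowLen.mp h⟩
      | succ i => exact Or.inr ⟨(i, j), by simpa using h, rfl⟩
    · rintro (⟨rfl, hj⟩ | ⟨⟨e, f⟩, hef, hc⟩)
      · exact mem_iff_lt_rowLen.mpr hj
      · obtain ⟨rfl, rfl⟩ : e + 1 = i ∧ f = j := by simpa using hc
        simpa using hef
  rw [YoungDiagram.card, hcells, card_union_of_disjoint, card_map]
  · congr 1
    simp
  · rw [disjoint_left]
    rintro ⟨i, j⟩ hm hm2
    simp only [mem_product, mem_singleton, mem_range] at hm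
    simp only [mem_map, shiftEmb, Function.Embedding.coeFn_mk] at hm2
    obtain ⟨⟨e, f⟩, -, hc⟩ := hm2
    obtain ⟨h3, h4⟩ : e + 1 = i ∧ f = j := by simpa using hc
    obtain ⟨h1, -⟩ := hm
    omega

lemma card_prepend (a : ℕ) (nu : YoungDiagram) :
    (prepend a nu).card = max a (nu.rowLen 0) + nu.card := by
  rw [card_split, rowLen_prepend_zero, restrictTail_prepend]

lemma eq_of_le_of_card_le {mu nu : YoungDiagram} (h : mu ≤ nu) (hc : nu.card ≤ mu.card) :
    mu = nu := by
  ext1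
  exact Finset.eq_of_subset_of_card_le h hc

lemma card_le_of_le {mu nu : YoungDiagram} (h : mu ≤ nu) : mu.card ≤ nu.card :=
  Finset.card_le_card h

lemma rowLen_bot (i : ℕ) : (⊥ : YoungDiagram).rowLen i = 0 := by
  by_contra h
  have : (i, 0) ∈ (⊥ : YoungDiagram) := mem_iff_lt_rowLen.mpr (by omega)
  exact notMem_bot _ this

lemma eq_bot_of_card_eq_zero {mu : YoungDiagram} (h : mu.card = 0) : mu = ⊥ := by
  ext1
  rw [cells_bot]
  exact Finset.card_eq_zero.mp h

@[simp] lemma restrictTail_bot : (⊥ : YoungDiagram).restrictTail = ⊥ := by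
  apply eq_bot_of_card_eq_zero
  have := card_split (⊥ : YoungDiagram)
  have h2 : (⊥ : YoungDiagram).card = 0 := by simp [YoungDiagram.card]
  omega

lemma prepend_zero_bot : prepend 0 (⊥ : YoungDiagram) = ⊥ := by
  refine ext_rowLen fun i => ?_
  cases i with
  | zero => rw [rowLen_prepend_zero]; simp [rowLen_bot]
  | succ i => rw [rowLen_prepend_succ]; simp [rowLen_bot]

end YoungDiagram

open Finset

namespace YoungDiagram

lemma card_bot : (⊥ : YoungDiagram).card = 0 := by simp [YoungDiagram.card]

/-- `ℕ`-indexed saturated chain from `⊥` to `mu` of length `n`, constant above `n`. -/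
def IsNChain (mu : YoungDiagram) (n : ℕ) (T : ℕ → YoungDiagram) : Prop :=
  T 0 = ⊥ ∧ (∀ i, n ≤ i → T i = mu) ∧
    ∀ i < n, T i ≤ T (i + 1) ∧ (T (i + 1)).card = (T i).card + 1

lemma IsNChain.mono {mu : YoungDiagram} {n : ℕ} {T : ℕ → YoungDiagram}
    (h : IsNChain mu n T) : Monotone T := by
  apply monotone_nat_of_le_succ
  intro i
  rcases lt_or_ge i n with hi | hi
  · exact (h.2.2 i hi).1
  · rw [h.2.1 i hi, h.2.1 (i + 1) (by omega)]

lemma IsNChain.card_eq {mu : YoungDiagram} {n : ℕ} {T : ℕ → YoungDiagram}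
    (h : IsNChain mu n T) : ∀ i ≤ n, (T i).card = i := by
  intro i
  induction i with
  | zero => intro _; rw [h.1, card_bot]
  | succ i ih =>
      intro hi
      rw [(h.2.2 i (by omega)).2, ih (by omega)]

lemma IsNChain.card_mu {mu : YoungDiagram} {n : ℕ} {T : ℕ → YoungDiagram}
    (h : IsNChain mu n T) : mu.card = n := by
  rw [← h.2.1 n le_rfl, h.card_eq n le_rfl]

instance finiteNChain (mu : YoungDiagram) (n : ℕ) :
    Finite {T : ℕ → YoungDiagram // IsNChain mu n T} := by
  have key : ∀ (T : {T : ℕ → YoungDiagram // IsNChain mu n T}) (i : ℕ),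
      (T.1 i).cells ⊆ mu.cells := by
    intro T i
    rcases le_total i n with hi | hi
    · exact cells_subset_iff.mpr (le_trans (T.2.mono hi) (le_of_eq (T.2.2.1 n le_rfl)))
    · rw [T.2.2.1 i hi]
  apply Finite.of_injective
    (fun T => fun i : Fin (n + 1) => (⟨(T.1 i.1).cells, Finset.mem_powerset.mpr (key T i.1)⟩ :
        ↥mu.cells.powerset))
  intro T T' h
  ext i : 2
  rcases le_total i n with hi | hi
  · have := congrFun h ⟨i, by omega⟩
    have hc : (T.1 i).cells = (T'.1 i).cells := by simpa using this
    rw [show T.1 i = T'.1 i from YoungDiagram.ext hc]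
  · rw [T.2.2.1 i hi, T'.2.2.1 i hi]

/-- transfer `chainCount` to `ℕ`-indexed chains -/
lemma chainCount_eq_nchain (mu : YoungDiagram) (n : ℕ) :
    chainCount ⊥ mu n = Nat.card {T : ℕ → YoungDiagram // IsNChain mu n T} := by
  apply Nat.card_congr
  refine ⟨fun t => ⟨fun i => t.1 ⟨min i n, by omega⟩, ?_, ?_, ?_⟩,
    fun T => ⟨fun i => T.1 i.1, ?_, ?_, ?_⟩, ?_, ?_⟩
  · show t.1 ⟨min 0 n, by omega⟩ = ⊥
    have h : (⟨min 0 n, by omega⟩ : Fin (n + 1)) = 0 := by ext; simp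
    rw [h]; exact t.2.1
  · intro i hi
    show t.1 ⟨min i n, by omega⟩ = mu
    have h : (⟨min i n, by omega⟩ : Fin (n + 1)) = Fin.last n := by
      ext; simp [Fin.last, min_eq_right hi]
    rw [h]; exact t.2.2.1
  · intro i hi
    show t.1 ⟨min i n, by omega⟩ ≤ t.1 ⟨min (i + 1) n, by omega⟩ ∧
      (t.1 ⟨min (i + 1) n, by omega⟩).card = (t.1 ⟨min i n, by omega⟩).card + 1
    have h1 : (⟨min i n, by omega⟩ : Fin (n + 1)) = (⟨i, by omega⟩ : Fin n).castSucc := by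
      ext; simp [min_eq_left (by omega : i ≤ n)]
    have h2 : (⟨min (i + 1) n, by omega⟩ : Fin (n + 1)) = (⟨i, by omega⟩ : Fin n).succ := by
      ext; simp [min_eq_left (by omega : i + 1 ≤ n)]
    rw [h1, h2]
    exact t.2.2.2 ⟨i, by omega⟩
  · exact T.2.1
  · exact T.2.2.1 n le_rfl
  · intro i
    exact T.2.2.2 i.1 i.2
  · intro t
    ext i : 2
    show t.1 ⟨min i.1 n, by omega⟩ = t.1 i
    congr 1
    ext
    simp [min_eq_left (by omega : i.1 ≤ n)]
  · intro T
    ext i : 2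
    show T.1 (min i n) = T.1 i
    rcases le_total i n with hi | hi
    · rw [min_eq_left hi]
    · rw [min_eq_right hi, T.2.2.1 n le_rfl, T.2.2.1 i hi]

lemma dimSYT_eq_nchain (mu : YoungDiagram) :
    dimSYT mu = Nat.card {T : ℕ → YoungDiagram // IsNChain mu mu.card T} :=
  chainCount_eq_nchain mu mu.card

/-- dichotomy for a covering step -/
lemma step_cases {nu nu' : YoungDiagram} (hle : nu ≤ nu') (hcard : nu'.card = nu.card + 1) :
    (nu'.restrictTail = nu.restrictTail ∧ nu'.rowLen 0 = nu.rowLen 0 + 1) ∨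
    (nu'.restrictTail.card = nu.restrictTail.card + 1 ∧ nu'.rowLen 0 = nu.rowLen 0) := by
  have h1 := card_split nu
  have h2 := card_split nu'
  have h3 := rowLen_le_of_le hle 0
  have h4 := card_le_of_le (restrictTail_mono hle)
  by_cases h : nu'.restrictTail.card = nu.restrictTail.card
  · left
    refine ⟨(eq_of_le_of_card_le (restrictTail_mono hle) (by omega)).symm, by omega⟩
  · right
    omega

lemma nat_ivt {f : ℕ → ℕ} (hstep : ∀ i, f (i + 1) ≤ f i + 1) :
    ∀ n j, f 0 ≤ j → j ≤ f n → ∃ i, i ≤ n ∧ f i = j := by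
  intro n
  induction n with
  | zero => intro j h1 h2; exact ⟨0, le_rfl, by omega⟩
  | succ n ih =>
      intro j h1 h2
      by_cases h : j ≤ f n
      · obtain ⟨i, hi, hfi⟩ := ih j h1 h
        exact ⟨i, by omega, hfi⟩
      · exact ⟨n + 1, le_rfl, by have := hstep n; omega⟩

lemma filter_lt_succ (S : Finset ℕ) (i : ℕ) :
    S.filter (· < i + 1) = if i ∈ S then insert i (S.filter (· < i)) else S.filter (· < i) := by
  split_ifs with h <;> ext x <;> simp only [mem_filter, mem_insert] <;> constructor
  · rintro ⟨hx, hlt⟩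
    rcases eq_or_ne x i with rfl | hne
    · exact Or.inl rfl
    · exact Or.inr ⟨hx, by omega⟩
  · rintro (rfl | ⟨hx, hlt⟩)
    · exact ⟨h, by omega⟩
    · exact ⟨hx, by omega⟩
  · rintro ⟨hx, hlt⟩
    refine ⟨hx, ?_⟩
    rcases eq_or_ne x i with rfl | hne
    · exact absurd hx h
    · omega
  · rintro ⟨hx, hlt⟩; exact ⟨hx, by omega⟩

lemma card_filter_lt_succ (S : Finset ℕ) (i : ℕ) :
    (S.filter (· < i + 1)).card =
      (S.filter (· < i)).card + if i ∈ S then 1 else 0 := by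
  rw [filter_lt_succ]
  split_ifs with h
  · rw [Finset.card_insert_of_notMem (by simp)]
  · rfl

end YoungDiagram

open Finset

namespace YoungDiagram

section ChainAnalysis

variable {lam : YoungDiagram} {n : ℕ} {T : ℕ → YoungDiagram}

lemma rho_mono (hT : IsNChain lam n T) {i j : ℕ} (h : i ≤ j) :
    ((T i).restrictTail).card ≤ ((T j).restrictTail).card :=
  card_le_of_le (restrictTail_mono (hT.mono h))

lemma rho_step (hT : IsNChain lam n T) (i : ℕ) :
    ((T (i + 1)).restrictTail).card ≤ ((T i).restrictTail).card + 1 := by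
  rcases lt_or_ge i n with hi | hi
  · obtain ⟨h1, h2⟩ := hT.2.2 i hi
    rcases step_cases h1 h2 with ⟨h3, -⟩ | ⟨h3, -⟩
    · rw [h3]; omega
    · omega
  · rw [hT.2.1 i hi, hT.2.1 (i + 1) (by omega)]; omega

lemma rho_zero (hT : IsNChain lam n T) : ((T 0).restrictTail).card = 0 := by
  rw [hT.1, restrictTail_bot, card_bot]

lemma rho_n (hT : IsNChain lam n T) :
    ((T n).restrictTail).card = lam.restrictTail.card := by
  rw [hT.2.1 n le_rfl]

lemma restr_welldef (hT : IsNChain lam n T) {i i' : ℕ}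
    (h : ((T i).restrictTail).card = ((T i').restrictTail).card) :
    (T i).restrictTail = (T i').restrictTail := by
  rcases le_total i i' with hle | hle
  · exact eq_of_le_of_card_le (restrictTail_mono (hT.mono hle)) (by omega)
  · exact (eq_of_le_of_card_le (restrictTail_mono (hT.mono hle)) (by omega)).symm

lemma exists_rho (hT : IsNChain lam n T) (j : ℕ) :
    ∃ i, ((T i).restrictTail).card = min j lam.restrictTail.card := by
  obtain ⟨i, -, hi⟩ := nat_ivt (f := fun i => ((T i).restrictTail).card) (rho_step hT) n
    (min j lam.restrictTail.card)
    (by rw [rho_zero hT]; omega)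
    (by rw [rho_n hT]; exact min_le_right _ _)
  exact ⟨i, hi⟩

/-- the underlying chain of first-row-deleted diagrams, reparametrized by cell count -/
noncomputable def sFun (hT : IsNChain lam n T) (j : ℕ) : YoungDiagram :=
  (T (Classical.choose (exists_rho hT j))).restrictTail

lemma sFun_card (hT : IsNChain lam n T) (j : ℕ) :
    (sFun hT j).card = min j lam.restrictTail.card :=
  Classical.choose_spec (exists_rho hT j)

lemma sFun_eq_of_card (hT : IsNChain lam n T) {j i : ℕ}
    (h : ((T i).restrictTail).card = min j lam.restrictTail.card) :
    sFun hT j = (T i).restrictTail :=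
  restr_welldef hT ((Classical.choose_spec (exists_rho hT j)).trans h.symm)

lemma sFun_chain (hT : IsNChain lam n T) :
    IsNChain lam.restrictTail lam.restrictTail.card (sFun hT) := by
  refine ⟨?_, ?_, ?_⟩
  · apply eq_bot_of_card_eq_zero
    rw [sFun_card hT 0]; omega
  · intro j hj
    have h1 : (sFun hT j).card = lam.restrictTail.card := by
      rw [sFun_card hT j]; omega
    have h2 : sFun hT j = (T n).restrictTail := by
      apply restr_welldef hT (i := Classical.choose (exists_rho hT j))
      rw [show (T (Classical.choose (exists_rho hT j))).restrictTail = sFun hT j from rfl, h1,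
        rho_n hT]
    rw [h2, hT.2.1 n le_rfl]
  · intro j hj
    have hc1 : (sFun hT j).card = j := by rw [sFun_card hT j]; omega
    have hc2 : (sFun hT (j + 1)).card = j + 1 := by rw [sFun_card hT (j + 1)]; omega
    constructor
    · rcases le_total (Classical.choose (exists_rho hT j))
        (Classical.choose (exists_rho hT (j + 1))) with hle | hle
      · exact restrictTail_mono (hT.mono hle)
      · have := card_le_of_le (restrictTail_mono (hT.mono hle))
        have h3 : sFun hT (j + 1) ≤ sFun hT j := restrictTail_mono (hT.mono hle)
        have h4 := card_le_of_le h3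
        omega
    · omega

open scoped Classical in
/-- the set of steps at which the added cell is below the first row -/
noncomputable def stepSet (n : ℕ) (T : ℕ → YoungDiagram) : Finset ℕ :=
  (range n).filter fun m => (T (m + 1)).restrictTail ≠ (T m).restrictTail

lemma mem_stepSet {x : ℕ} :
    x ∈ stepSet n T ↔ x < n ∧ (T (x + 1)).restrictTail ≠ (T x).restrictTail := by
  simp [stepSet]

lemma count_eq (hT : IsNChain lam n T) :
    ∀ i ≤ n, ((T i).restrictTail).card = ((stepSet n T).filter (· < i)).card := by
  intro i
  induction i with
  | zero =>
      intro _
      rw [rho_zero hT]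
      rw [Finset.filter_eq_empty_iff.mpr (by intro x _; simp)]
      simp
  | succ i ih =>
      intro hi
      have hin : i < n := by omega
      rw [card_filter_lt_succ, ← ih (by omega)]
      have hmem : i ∈ stepSet n T ↔ (T (i + 1)).restrictTail ≠ (T i).restrictTail := by
        simp [stepSet, hin]
      obtain ⟨h1, h2⟩ := hT.2.2 i hin
      rcases step_cases h1 h2 with ⟨h3, -⟩ | ⟨h3, -⟩
      · rw [if_neg (by rw [hmem]; simpa using h3), h3]; omega
      · rw [if_pos (hmem.mpr (fun heq => by rw [heq] at h3; omega)), h3]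

lemma stepSet_mem_powersetCard (hT : IsNChain lam n T) :
    stepSet n T ∈ Finset.powersetCard lam.restrictTail.card (range n) := by
  rw [Finset.mem_powersetCard]
  refine ⟨fun x hx => mem_range.mpr (mem_stepSet.mp hx).1, ?_⟩
  have h1 := count_eq hT n le_rfl
  rw [rho_n hT] at h1
  rw [h1]
  congr 1
  exact (Finset.filter_true_of_mem (fun x hx => (mem_stepSet.mp hx).1)).symm

lemma upper_bound (lam : YoungDiagram) :
    Nat.card {T : ℕ → YoungDiagram // IsNChain lam lam.card T} ≤
      lam.card.choose lam.restrictTail.card *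
        Nat.card {s : ℕ → YoungDiagram //
          IsNChain lam.restrictTail lam.restrictTail.card s} := by
  classical
  set n := lam.card
  set k := lam.restrictTail.card
  have key : Nat.card {T : ℕ → YoungDiagram // IsNChain lam n T} ≤
      Nat.card (↥(Finset.powersetCard k (range n)) ×
        {s : ℕ → YoungDiagram // IsNChain lam.restrictTail k s}) := by
    apply Nat.card_le_card_of_injective
      (fun T => (⟨stepSet n T.1, stepSet_mem_powersetCard T.2⟩, ⟨sFun T.2, sFun_chain T.2⟩))
    intro T T' h
    have hS : stepSet n T.1 = stepSet n T'.1 := congrArg (fun x => (x.1 : Finset ℕ)) h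
    have hs : sFun T.2 = sFun T'.2 := congrArg (fun x => (x.2 : ℕ → YoungDiagram)) h
    ext i : 2
    rcases le_or_gt i n with hi | hi
    · have hρ : ((T.1 i).restrictTail).card = ((T'.1 i).restrictTail).card := by
        rw [count_eq T.2 i hi, count_eq T'.2 i hi, hS]
      have hjk : ((T.1 i).restrictTail).card ≤ k := by
        have := rho_mono T.2 hi
        rwa [rho_n T.2] at this
      have h1 : sFun T.2 ((T.1 i).restrictTail).card = (T.1 i).restrictTail :=
        sFun_eq_of_card T.2 (by omega)
      have h2 : sFun T'.2 ((T.1 i).restrictTail).card = (T'.1 i).restrictTail :=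
        sFun_eq_of_card T'.2 (by omega)
      have hrestr : (T.1 i).restrictTail = (T'.1 i).restrictTail := by
        rw [← h1, ← h2, hs]
      have hcards : (T.1 i).card = i := T.2.card_eq i hi
      have hcards' : (T'.1 i).card = i := T'.2.card_eq i hi
      have hsp := card_split (T.1 i)
      have hsp' := card_split (T'.1 i)
      have hrow : (T.1 i).rowLen 0 = (T'.1 i).rowLen 0 := by
        rw [hrestr] at hsp
        omega
      calc T.1 i = prepend ((T.1 i).rowLen 0) ((T.1 i).restrictTail) :=
              (prepend_restrictTail _).symm
        _ = prepend ((T'.1 i).rowLen 0) ((T'.1 i).restrictTail) := by rw [hrow, hrestr]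
        _ = T'.1 i := prepend_restrictTail _
    · rw [T.2.2.1 i (by omega), T'.2.2.1 i (by omega)]
  rw [Nat.card_prod, Nat.card_eq_finsetCard, Finset.card_powersetCard, card_range] at key
  exact key

end ChainAnalysis

end YoungDiagram

open Finset

namespace YoungDiagram

section Lower

/-- number of elements of `S` below `i` -/
def cnt (S : Finset ℕ) (i : ℕ) : ℕ := (S.filter (· < i)).card

lemma cnt_succ (S : Finset ℕ) (i : ℕ) :
    cnt S (i + 1) = cnt S i + if i ∈ S then 1 else 0 := card_filter_lt_succ S i

lemma cnt_le_self (S : Finset ℕ) (i : ℕ) : cnt S i ≤ i := by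
  have : S.filter (· < i) ⊆ range i := fun x hx => mem_range.mpr (mem_filter.mp hx).2
  exact le_trans (card_le_card this) (le_of_eq (card_range i))

noncomputable def chainOf (S : Finset ℕ) (s : ℕ → YoungDiagram) (n : ℕ) (i : ℕ) :
    YoungDiagram :=
  prepend (min i n - cnt S (min i n)) (s (cnt S (min i n)))

variable {mu : YoungDiagram} {k n : ℕ} {S : Finset ℕ} {s : ℕ → YoungDiagram}

lemma chainOf_isNChain (hk : mu.card = k) (hn : k + mu.rowLen 0 ≤ n)
    (hS : S ⊆ Finset.Ico (mu.rowLen 0 + k) n) (hScard : S.card = k)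
    (hs : IsNChain mu k s) : IsNChain (prepend (n - k) mu) n (chainOf S s n) := by
  have hcle : ∀ i, cnt S i ≤ k := fun i =>
    le_trans (card_le_card (filter_subset _ _)) (le_of_eq hScard)
  have hczero : ∀ i, i ≤ mu.rowLen 0 + k → cnt S i = 0 := by
    intro i hi
    rw [cnt, Finset.card_eq_zero, Finset.filter_eq_empty_iff]
    intro x hx
    have := Finset.mem_Ico.mp (hS hx)
    omega
  have hcn : cnt S n = k := by
    rw [cnt, Finset.filter_true_of_mem, hScard]
    intro x hx
    exact (Finset.mem_Ico.mp (hS hx)).2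
  have hsle : ∀ j, j ≤ k → s j ≤ mu := by
    intro j hj
    have := hs.mono hj
    rwa [hs.2.1 k le_rfl] at this
  have hrow0 : ∀ i, (s (cnt S i)).rowLen 0 ≤ i - cnt S i := by
    intro i
    rcases Nat.eq_zero_or_pos (cnt S i) with h0 | hpos
    · rw [h0, hs.1, rowLen_bot]; omega
    · obtain ⟨x, hx⟩ := Finset.card_pos.mp hpos
      obtain ⟨hxS, hxi⟩ := mem_filter.mp hx
      have hx2 := Finset.mem_Ico.mp (hS hxS)
      have h1 : (s (cnt S i)).rowLen 0 ≤ mu.rowLen 0 :=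
        rowLen_le_of_le (hsle _ (hcle i)) 0
      have := hcle i
      have hxi' : x < i := by simpa using hxi
      omega
  have hscard : ∀ i, (s (cnt S i)).card = cnt S i := fun i => hs.card_eq _ (hcle i)
  refine ⟨?_, ?_, ?_⟩
  · have h1 : min 0 n = 0 := by omega
    rw [chainOf, h1, hczero 0 (by omega), hs.1]
    exact prepend_zero_bot
  · intro i hi
    rw [chainOf, min_eq_right hi, hcn, hs.2.1 k le_rfl]
  · intro i hi
    have hmin1 : min i n = i := by omega
    have hmin2 : min (i + 1) n = i + 1 := by omega
    have hci := cnt_le_self S i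
    rw [chainOf, chainOf, hmin1, hmin2]
    by_cases hm : i ∈ S
    · have hc1 : cnt S (i + 1) = cnt S i + 1 := by rw [cnt_succ, if_pos hm]
      have hlt : cnt S i < k := by have := hcle (i + 1); omega
      have e : i + 1 - cnt S (i + 1) = i - cnt S i := by omega
      obtain ⟨hstep1, hstep2⟩ := hs.2.2 (cnt S i) hlt
      have h5 : (s (cnt S i + 1)).rowLen 0 ≤ i - cnt S i := by
        have h := hrow0 (i + 1)
        rw [hc1] at h
        omega
      rw [e, hc1]
      refine ⟨prepend_mono le_rfl hstep1, ?_⟩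
      rw [card_prepend, card_prepend, max_eq_left h5, max_eq_left (hrow0 i), hscard i]
      rw [hscard i] at hstep2
      omega
    · have hc1 : cnt S (i + 1) = cnt S i := by rw [cnt_succ, if_neg hm]; omega
      have e : i + 1 - cnt S (i + 1) = i - cnt S i + 1 := by omega
      rw [e, hc1]
      refine ⟨prepend_mono (by omega) le_rfl, ?_⟩
      rw [card_prepend, card_prepend, max_eq_left (by have := hrow0 i; omega),
        max_eq_left (hrow0 i)]
      omega

lemma lower_bound (mu : YoungDiagram) (k n : ℕ) (hk : mu.card = k)
    (hn : k + mu.rowLen 0 ≤ n) :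
    (n - (mu.rowLen 0 + k)).choose k * Nat.card {s : ℕ → YoungDiagram // IsNChain mu k s} ≤
      Nat.card {T : ℕ → YoungDiagram // IsNChain (prepend (n - k) mu) n T} := by
  classical
  have key : Nat.card (↥(Finset.powersetCard k (Finset.Ico (mu.rowLen 0 + k) n)) ×
      {s : ℕ → YoungDiagram // IsNChain mu k s}) ≤
      Nat.card {T : ℕ → YoungDiagram // IsNChain (prepend (n - k) mu) n T} := by
    apply Nat.card_le_card_of_injective (fun P =>
      ⟨chainOf P.1.1 P.2.1 n,
        chainOf_isNChain hk hn (Finset.mem_powersetCard.mp P.1.2).1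
          (Finset.mem_powersetCard.mp P.1.2).2 P.2.2⟩)
    rintro ⟨⟨S, hSmem⟩, ⟨s, hs⟩⟩ ⟨⟨S', hSmem'⟩, ⟨s', hs'⟩⟩ h
    have hT : chainOf S s n = chainOf S' s' n := congrArg Subtype.val h
    obtain ⟨hSsub, hScard⟩ := Finset.mem_powersetCard.mp hSmem
    obtain ⟨hSsub', hScard'⟩ := Finset.mem_powersetCard.mp hSmem'
    have hcle : ∀ i, cnt S i ≤ k := fun i =>
      le_trans (card_le_card (filter_subset _ _)) (le_of_eq hScard)
    have hcle' : ∀ i, cnt S' i ≤ k := fun i =>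
      le_trans (card_le_card (filter_subset _ _)) (le_of_eq hScard')
    -- restrictTail of the chain recovers s at cnt
    have hrestr : ∀ i ≤ n, (chainOf S s n i).restrictTail = s (cnt S i) := by
      intro i hi
      rw [chainOf, min_eq_left hi, restrictTail_prepend]
    have hrestr' : ∀ i ≤ n, (chainOf S' s' n i).restrictTail = s' (cnt S' i) := by
      intro i hi
      rw [chainOf, min_eq_left hi, restrictTail_prepend]
    have hcard : ∀ i ≤ n, ((chainOf S s n i).restrictTail).card = cnt S i := by
      intro i hi
      rw [hrestr i hi, hs.card_eq _ (hcle i)]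
    have hcard' : ∀ i ≤ n, ((chainOf S' s' n i).restrictTail).card = cnt S' i := by
      intro i hi
      rw [hrestr' i hi, hs'.card_eq _ (hcle' i)]
    -- membership characterization
    have hchar : ∀ (S₀ : Finset ℕ) (s₀ : ℕ → YoungDiagram), S₀ ⊆ Finset.Ico (mu.rowLen 0 + k) n →
        (∀ i ≤ n, ((chainOf S₀ s₀ n i).restrictTail).card = cnt S₀ i) →
        ∀ x, x ∈ S₀ ↔ x < n ∧
          ((chainOf S₀ s₀ n (x + 1)).restrictTail).card ≠
            ((chainOf S₀ s₀ n x).restrictTail).card := by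
      intro S₀ s₀ hsub hcard₀ x
      constructor
      · intro hx
        have hxn : x < n := (Finset.mem_Ico.mp (hsub hx)).2
        refine ⟨hxn, ?_⟩
        rw [hcard₀ x (by omega), hcard₀ (x + 1) (by omega), cnt_succ, if_pos hx]
        omega
      · rintro ⟨hxn, hne⟩
        by_contra hx
        rw [hcard₀ x (by omega), hcard₀ (x + 1) (by omega), cnt_succ, if_neg hx] at hne
        omega
    have hSeq : S = S' := by
      ext x
      rw [hchar S s hSsub hcard x, hchar S' s' hSsub' hcard' x, hT]
    subst hSeq
    have hseq : s = s' := by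
      funext j
      rcases le_or_gt j k with hj | hj
      · -- find i with cnt S i = j
        have hcn : cnt S n = k := by
          rw [cnt, Finset.filter_true_of_mem, hScard]
          intro x hx
          exact (Finset.mem_Ico.mp (hSsub hx)).2
        obtain ⟨i, hin, hci⟩ := nat_ivt (f := cnt S)
          (fun i => by rw [cnt_succ]; split_ifs <;> omega) n j
          (by simp [cnt]) (by omega)
        have e1 : s j = (chainOf S s n i).restrictTail := by rw [hrestr i hin, hci]
        have e2 : s' j = (chainOf S s' n i).restrictTail := by rw [hrestr' i hin, hci]
        rw [e1, e2, hT]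
      · rw [hs.2.1 j (by omega), hs'.2.1 j (by omega)]
    subst hseq
    rfl
  calc (n - (mu.rowLen 0 + k)).choose k *
        Nat.card {s : ℕ → YoungDiagram // IsNChain mu k s}
      = Nat.card (↥(Finset.powersetCard k (Finset.Ico (mu.rowLen 0 + k) n)) ×
          {s : ℕ → YoungDiagram // IsNChain mu k s}) := by
        rw [Nat.card_prod, Nat.card_eq_finsetCard, Finset.card_powersetCard, Nat.card_Ico]
    _ ≤ _ := key

end Lower

end YoungDiagram

open Finset Filter YoungDiagram

lemma desc_asymp (D : ℝ) (k a : ℕ) :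
    Tendsto (fun n : ℕ => D * ((n - a).descFactorial k : ℝ) / (n : ℝ) ^ k)
      atTop (nhds D) := by
  have h1 : ∀ i ∈ range k,
      Tendsto (fun n : ℕ => ((n - (a + i) : ℕ) : ℝ) / (n : ℝ)) atTop (nhds 1) := by
    intro i _
    have h2 : Tendsto (fun n : ℕ => 1 - ((a + i : ℕ) : ℝ) / (n : ℝ)) atTop (nhds 1) := by
      simpa using (tendsto_const_div_atTop_nhds_zero_nat ((a + i : ℕ) : ℝ)).const_sub 1
    apply h2.congr'
    filter_upwards [Filter.eventually_ge_atTop (a + i + 1)] with n hn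
    have hn0 : (n : ℝ) ≠ 0 := by
      have : (0 : ℝ) < n := by exact_mod_cast Nat.pos_of_ne_zero (by omega)
      exact ne_of_gt this
    rw [Nat.cast_sub (by omega), sub_div, div_self hn0]
  have h2 := (tendsto_finset_prod (range k) h1).const_mul D
  rw [Finset.prod_const_one, mul_one] at h2
  apply h2.congr
  intro n
  rw [Nat.descFactorial_eq_prod_range, Nat.cast_prod, mul_div_assoc]
  congr 1
  rw [show ((n : ℝ)) ^ k = ∏ _i ∈ range k, (n : ℝ) from by rw [prod_const, card_range],
    ← Finset.prod_div_distrib]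
  refine Finset.prod_congr rfl fun i _ => ?_
  congr 2
  omega

/-- For a partition `μ` of `k`, the quantity `k! · dim (n-k, μ) / n^k` tends to `dim μ` as
`n → ∞`, where `dim (n-k, μ)` (defined for `n ≥ k + μ₁`) is the number of standard Young
tableaux of the shape with first row `n-k` and remaining rows `μ`, here encoded by any
function `d` agreeing with it for all `n ≥ k + μ₁`. -/
theorem dim_prepend_row_asymptotics (k : ℕ) (mu : YoungDiagram) (hmu : mu.card = k)
    (d : ℕ → ℕ)
    (hd : ∀ n : ℕ, k + mu.rowLen 0 ≤ n → ∀ mu' : YoungDiagram,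
      mu'.rowLen 0 = n - k → (∀ i : ℕ, mu'.rowLen (i + 1) = mu.rowLen i) →
      d n = dimSYT mu') :
    Filter.Tendsto (fun n : ℕ => (k.factorial : ℝ) * (d n : ℝ) / (n : ℝ) ^ k)
      Filter.atTop (nhds (dimSYT mu : ℝ)) := by
  set D := dimSYT mu with hD
  have hDchain : D = Nat.card {s : ℕ → YoungDiagram // IsNChain mu k s} := by
    rw [hD, dimSYT_eq_nchain, hmu]
  have hbounds : ∀ n, k + mu.rowLen 0 ≤ n →
      (n - (mu.rowLen 0 + k)).choose k * D ≤ d n ∧ d n ≤ n.choose k * D := by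
    intro n hn
    set lam := prepend (n - k) mu with hlam
    have hr0 : lam.rowLen 0 = n - k := by
      rw [hlam, rowLen_prepend_zero]
      exact max_eq_left (by omega)
    have hdn : d n = dimSYT lam := hd n hn lam hr0 (fun i => rowLen_prepend_succ _ _ i)
    have hcard : lam.card = n := by
      rw [hlam, card_prepend, max_eq_left (by omega : mu.rowLen 0 ≤ n - k), hmu]
      omega
    have hrestr : lam.restrictTail = mu := restrictTail_prepend _ _
    have hdimchain : dimSYT lam = Nat.card {T : ℕ → YoungDiagram // IsNChain lam n T} := by
      rw [dimSYT_eq_nchain, hcard]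
    constructor
    · have hlow := lower_bound mu k n hmu hn
      rw [← hlam, ← hdimchain, ← hDchain] at hlow
      rw [hdn]
      exact hlow
    · have hup := upper_bound lam
      rw [hcard, hrestr, hmu, ← hDchain, ← hdimchain] at hup
      rw [hdn]
      exact hup
  refine tendsto_of_tendsto_of_tendsto_of_le_of_le'
    (desc_asymp (D : ℝ) k (mu.rowLen 0 + k)) (desc_asymp (D : ℝ) k 0) ?_ ?_
  · filter_upwards [Filter.eventually_ge_atTop (k + mu.rowLen 0 + 1)] with n hn
    obtain ⟨hb, -⟩ := hbounds n (by omega)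
    have hnum : (n - (mu.rowLen 0 + k)).descFactorial k * D ≤ k.factorial * d n := by
      rw [Nat.descFactorial_eq_factorial_mul_choose, mul_assoc]
      exact Nat.mul_le_mul_left _ hb
    have hpos : (0 : ℝ) < (n : ℝ) ^ k := by
      have : (0 : ℝ) < (n : ℝ) := by exact_mod_cast Nat.pos_of_ne_zero (by omega)
      positivity
    rw [div_le_div_iff_of_pos_right hpos, mul_comm (D : ℝ)]
    exact_mod_cast hnum
  · filter_upwards [Filter.eventually_ge_atTop (k + mu.rowLen 0 + 1)] with n hn
    obtain ⟨-, hb⟩ := hbounds n (by omega)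
    have hnum : k.factorial * d n ≤ (n - 0).descFactorial k * D := by
      rw [Nat.sub_zero, Nat.descFactorial_eq_factorial_mul_choose, mul_assoc]
      exact Nat.mul_le_mul_left _ hb
    have hpos : (0 : ℝ) < (n : ℝ) ^ k := by
      have : (0 : ℝ) < (n : ℝ) := by exact_mod_cast Nat.pos_of_ne_zero (by omega)
      positivity
    rw [div_le_div_iff_of_pos_right hpos, mul_comm (D : ℝ)]
    exact_mod_cast hnum
end

section
/- Let λ and μ be partitions of k, and for n ≥ k + max(λ₁, μ₁) set D_n = n!/((n−k)!·∏ᵢ λᵢ!). Then the real sequence K_{(n−k,μ),(n−k,λ)}·dim (n−k,μ) / D_n tends to K_{μ,λ}·dim μ·(∏ᵢ λᵢ!)/k! as n → ∞. -/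
open scoped BigOperators

namespace KD

open YoungDiagram Filter

/-- Prepend a row of length `m` to a Young diagram `σ` (requires `σ.rowLen 0 ≤ m`). -/
def cons (m : ℕ) (σ : YoungDiagram) (h : σ.rowLen 0 ≤ m) : YoungDiagram where
  cells := ({0} ×ˢ Finset.range m) ∪ σ.cells.map
    ⟨fun c => (c.1 + 1, c.2), by intro a b hab; simpa [Prod.ext_iff] using hab⟩
  isLowerSet := by
    rintro ⟨i2, j2⟩ ⟨i1, j1⟩ ⟨hi : i1 ≤ i2, hj : j1 ≤ j2⟩ hmem
    simp only [Finset.coe_union, Set.mem_union, Finset.coe_map, Set.mem_image,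
      Finset.mem_coe, Finset.mem_product, Finset.mem_singleton, Finset.mem_range,
      Function.Embedding.coeFn_mk] at hmem ⊢
    rcases hmem with ⟨hi2, hj2⟩ | ⟨⟨a, b⟩, hab, hEq⟩
    · subst hi2
      interval_cases i1
      exact Or.inl ⟨rfl, lt_of_le_of_lt hj hj2⟩
    · obtain ⟨ha, hb⟩ : a + 1 = i2 ∧ b = j2 := Prod.ext_iff.mp hEq
      subst ha hb
      rcases Nat.eq_zero_or_eq_succ_pred i1 with h0 | h1
      · subst h0
        refine Or.inl ⟨rfl, ?_⟩
        have : (0, j1) ∈ σ := σ.up_left_mem (Nat.zero_le a) hj (σ.mem_cells _ |>.mp hab)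
        have := (σ.mem_iff_lt_rowLen).mp this
        omega
      · refine Or.inr ⟨(i1 - 1, j1), ?_, by show (i1 - 1 + 1, j1) = (i1, j1); simp [Prod.ext_iff]; omega⟩
        exact (σ.mem_cells _).mpr <| σ.up_left_mem (by omega) hj ((σ.mem_cells _).mp hab)

@[simp] theorem mem_cons_zero {m : ℕ} {σ : YoungDiagram} {h : σ.rowLen 0 ≤ m} {j : ℕ} :
    (0, j) ∈ cons m σ h ↔ j < m := by
  simp [cons, ← YoungDiagram.mem_cells, Prod.ext_iff]

@[simp] theorem mem_cons_succ {m : ℕ} {σ : YoungDiagram} {h : σ.rowLen 0 ≤ m} {i j : ℕ} :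
    (i + 1, j) ∈ cons m σ h ↔ (i, j) ∈ σ := by
  constructor
  · intro hmem
    simp only [cons, ← YoungDiagram.mem_cells, YoungDiagram.mem_mk, Finset.mem_union,
      Finset.mem_product, Finset.mem_singleton, Finset.mem_range, Finset.mem_map,
      Function.Embedding.coeFn_mk] at hmem
    rcases hmem with ⟨h0, _⟩ | ⟨⟨a, b⟩, hab, hEq⟩
    · omega
    · obtain ⟨ha, hb⟩ : a + 1 = i + 1 ∧ b = j := Prod.ext_iff.mp hEq
      obtain rfl : a = i := by omega
      subst hb; exact (σ.mem_cells _).mp hab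
  · intro hmem
    simp only [cons, ← YoungDiagram.mem_cells, YoungDiagram.mem_mk, Finset.mem_union,
      Finset.mem_map, Function.Embedding.coeFn_mk]
    exact Or.inr ⟨(i, j), (σ.mem_cells _).mpr hmem, rfl⟩

theorem rowLen_eq_of_forall {μ : YoungDiagram} {i m : ℕ} (h : ∀ j, (i, j) ∈ μ ↔ j < m) :
    μ.rowLen i = m := by
  refine eq_of_forall_lt_iff fun j => ?_
  rw [← YoungDiagram.mem_iff_lt_rowLen, h]

@[simp] theorem rowLen_cons_zero {m : ℕ} {σ : YoungDiagram} {h : σ.rowLen 0 ≤ m} :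
    (cons m σ h).rowLen 0 = m :=
  rowLen_eq_of_forall fun _ => mem_cons_zero

@[simp] theorem rowLen_cons_succ {m : ℕ} {σ : YoungDiagram} {h : σ.rowLen 0 ≤ m} {i : ℕ} :
    (cons m σ h).rowLen (i + 1) = σ.rowLen i :=
  rowLen_eq_of_forall fun _ => by rw [mem_cons_succ, YoungDiagram.mem_iff_lt_rowLen]

@[simp] theorem card_cons {m : ℕ} {σ : YoungDiagram} {h : σ.rowLen 0 ≤ m} :
    (cons m σ h).card = m + σ.card := by
  show (({0} ×ˢ Finset.range m) ∪ _).card = _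
  rw [Finset.card_union_of_disjoint, Finset.card_product, Finset.card_map]
  · simp
  · rw [Finset.disjoint_left]
    rintro ⟨a, b⟩ hab hmem
    simp only [Finset.mem_product, Finset.mem_singleton, Finset.mem_range] at hab
    simp only [Finset.mem_map, Function.Embedding.coeFn_mk, Prod.ext_iff] at hmem
    obtain ⟨⟨x, y⟩, _, hx, _⟩ := hmem
    change x + 1 = a at hx
    omega

/-- The Young diagram obtained by deleting the first row. -/
def tail (μ : YoungDiagram) : YoungDiagram where
  cells := μ.cells.filter fun c => (c.1 + 1, c.2) ∈ μ
  isLowerSet := by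
    rintro ⟨i2, j2⟩ ⟨i1, j1⟩ ⟨hi : i1 ≤ i2, hj : j1 ≤ j2⟩ hmem
    simp only [Finset.coe_filter, Set.mem_setOf_eq, Finset.mem_coe, YoungDiagram.mem_cells]
      at hmem ⊢
    exact ⟨μ.up_left_mem hi hj hmem.1, μ.up_left_mem (by omega) hj hmem.2⟩

@[simp] theorem mem_tail {μ : YoungDiagram} {i j : ℕ} :
    (i, j) ∈ tail μ ↔ (i + 1, j) ∈ μ := by
  constructor
  · intro hmem
    simpa [tail, ← YoungDiagram.mem_cells, -YoungDiagram.mem_cells] using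
      (Finset.mem_filter.mp hmem).2
  · intro hmem
    refine Finset.mem_filter.mpr ⟨?_, hmem⟩
    exact (μ.mem_cells _).mpr <| μ.up_left_mem (Nat.le_succ i) le_rfl hmem

@[simp] theorem rowLen_tail {μ : YoungDiagram} {i : ℕ} :
    (tail μ).rowLen i = μ.rowLen (i + 1) :=
  rowLen_eq_of_forall fun _ => by rw [mem_tail, YoungDiagram.mem_iff_lt_rowLen]

theorem tail_rowLen_le (μ : YoungDiagram) : (tail μ).rowLen 0 ≤ μ.rowLen 0 := by
  rw [rowLen_tail]; exact μ.rowLen_anti 0 1 (by omega)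

theorem cons_tail (μ : YoungDiagram) : cons (μ.rowLen 0) (tail μ) (tail_rowLen_le μ) = μ := by
  ext ⟨i, j⟩
  rw [YoungDiagram.mem_cells, YoungDiagram.mem_cells]
  cases i with
  | zero => rw [mem_cons_zero, YoungDiagram.mem_iff_lt_rowLen]
  | succ i => rw [mem_cons_succ, mem_tail]

theorem card_eq_rowLen_add_tail (μ : YoungDiagram) :
    μ.card = μ.rowLen 0 + (tail μ).card := by
  conv_lhs => rw [← cons_tail μ]
  exact card_cons

@[simp] theorem tail_cons {m : ℕ} {σ : YoungDiagram} {h : σ.rowLen 0 ≤ m} :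
    tail (cons m σ h) = σ := by
  ext ⟨i, j⟩
  rw [YoungDiagram.mem_cells, YoungDiagram.mem_cells]
  rw [mem_tail, mem_cons_succ]

theorem tail_mono {μ ν : YoungDiagram} (hμν : μ ≤ ν) : tail μ ≤ tail ν := by
  intro c hc
  obtain ⟨i, j⟩ := c
  have : (i, j) ∈ tail μ := hc
  rw [mem_tail] at this
  exact (mem_tail (μ := ν)).mpr (hμν this)

theorem cons_mono {m m' : ℕ} {σ σ' : YoungDiagram} {h : σ.rowLen 0 ≤ m}
    {h' : σ'.rowLen 0 ≤ m'} (hm : m ≤ m') (hσ : σ ≤ σ') :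
    cons m σ h ≤ cons m' σ' h' := by
  intro c hc
  obtain ⟨i, j⟩ := c
  cases i with
  | zero =>
    have : (0, j) ∈ cons m σ h := hc
    exact (mem_cons_zero (σ := σ')).mpr (lt_of_lt_of_le (mem_cons_zero.mp this) hm)
  | succ i =>
    have : (i + 1, j) ∈ cons m σ h := hc
    exact (mem_cons_succ (σ := σ')).mpr (hσ (mem_cons_succ.mp this))

theorem eq_of_le_of_card_le {μ ν : YoungDiagram} (h : μ ≤ ν) (hc : ν.card ≤ μ.card) :
    μ = ν := by
  ext c
  have := Finset.eq_of_subset_of_card_le (YoungDiagram.cells_subset_iff.mpr h) hc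
  rw [this]

theorem eq_bot_of_card_eq_zero {μ : YoungDiagram} (h : μ.card = 0) : μ = ⊥ := by
  have : μ.cells = ∅ := Finset.card_eq_zero.mp h
  ext c
  simp [← YoungDiagram.mem_cells, this]

theorem rowLen_mono {μ ν : YoungDiagram} (h : μ ≤ ν) (i : ℕ) : μ.rowLen i ≤ ν.rowLen i := by
  by_contra hc
  push_neg at hc
  have : (i, μ.rowLen i - 1) ∈ μ := by
    rw [YoungDiagram.mem_iff_lt_rowLen]; omega
  have h2 := h this
  rw [YoungDiagram.mem_iff_lt_rowLen] at h2
  omega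

@[simp] theorem rowLen_bot (i : ℕ) : (⊥ : YoungDiagram).rowLen i = 0 :=
  rowLen_eq_of_forall fun j => by simp [YoungDiagram.notMem_bot]

@[simp] theorem tail_bot : tail ⊥ = ⊥ := by
  ext ⟨i, j⟩
  simp [YoungDiagram.notMem_bot]

theorem cons_zero_bot (h : (⊥ : YoungDiagram).rowLen 0 ≤ 0) : cons 0 ⊥ h = ⊥ := by
  ext ⟨i, j⟩
  cases i with
  | zero => simp [YoungDiagram.notMem_bot]
  | succ i => simp [YoungDiagram.notMem_bot]

theorem eq_of_rowLen_tail {μ ν : YoungDiagram} (h0 : μ.rowLen 0 = ν.rowLen 0)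
    (ht : tail μ = tail ν) : μ = ν := by
  ext ⟨i, j⟩
  rw [YoungDiagram.mem_cells, YoungDiagram.mem_cells]
  cases i with
  | zero => rw [YoungDiagram.mem_iff_lt_rowLen, YoungDiagram.mem_iff_lt_rowLen, h0]
  | succ i =>
    rw [← mem_tail, ← mem_tail, ht]


/-- ℕ-indexed saturated chains from `⊥` to `ν` of length `n`, constant after `n`. -/
def NChain (ν : YoungDiagram) (n : ℕ) (T : ℕ → YoungDiagram) : Prop :=
  T 0 = ⊥ ∧ (∀ i, n ≤ i → T i = ν) ∧
    ∀ i < n, T i ≤ T (i + 1) ∧ (T (i + 1)).card = (T i).card + 1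

def clamp (n i : ℕ) : Fin (n + 1) := ⟨min i n, by omega⟩

theorem clamp_zero (n : ℕ) : clamp n 0 = 0 := by ext; simp [clamp]

theorem clamp_of_le {n i : ℕ} (h : n ≤ i) : clamp n i = Fin.last n := by
  ext; simp [clamp, Nat.min_eq_right h]

theorem clamp_castSucc {n i : ℕ} (hi : i < n) : clamp n i = (⟨i, hi⟩ : Fin n).castSucc := by
  ext; simp [clamp, Nat.min_eq_left (le_of_lt hi)]

theorem clamp_succ {n i : ℕ} (hi : i < n) : clamp n (i + 1) = (⟨i, hi⟩ : Fin n).succ := by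
  ext; simp [clamp, Nat.min_eq_left hi]

theorem clamp_of_le' {n i : ℕ} (h : i ≤ n) : clamp n i = ⟨i, by omega⟩ := by
  ext; simp [clamp, Nat.min_eq_left h]

def chainEquiv (ν : YoungDiagram) (n : ℕ) :
    {t : Fin (n + 1) → YoungDiagram //
      t 0 = ⊥ ∧ t (Fin.last n) = ν ∧
      ∀ i : Fin n, t i.castSucc ≤ t i.succ ∧ (t i.succ).card = (t i.castSucc).card + 1} ≃
    {T : ℕ → YoungDiagram // NChain ν n T} where
  toFun t := ⟨fun i => t.1 (clamp n i), by
    obtain ⟨t, h0, hlast, hstep⟩ := t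
    refine ⟨?_, ?_, ?_⟩
    · show t (clamp n 0) = ⊥
      rw [clamp_zero, h0]
    · intro i hi
      show t (clamp n i) = ν
      rw [clamp_of_le hi, hlast]
    · intro i hi
      show t (clamp n i) ≤ t (clamp n (i + 1)) ∧
        (t (clamp n (i + 1))).card = (t (clamp n i)).card + 1
      rw [clamp_castSucc hi, clamp_succ hi]
      exact hstep ⟨i, hi⟩⟩
  invFun T := ⟨fun i => T.1 i, by
    obtain ⟨T, h0, hconst, hstep⟩ := T
    refine ⟨h0, hconst n le_rfl, ?_⟩
    intro i
    exact hstep i i.2⟩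
  left_inv t := by
    apply Subtype.ext
    funext i
    show t.1 (clamp n i.val) = t.1 i
    have hi := i.isLt
    congr 1
    rw [clamp_of_le' (by omega)]
  right_inv T := by
    apply Subtype.ext
    funext i
    show T.1 (clamp n i : ℕ) = T.1 i
    rcases le_or_gt i n with h | h
    · rw [clamp_of_le' h]
    · rw [clamp_of_le (le_of_lt h)]
      show T.1 n = T.1 i
      rw [T.2.2.1 n le_rfl, T.2.2.1 i (le_of_lt h)]

theorem chainCount_eq (ν : YoungDiagram) (n : ℕ) :
    chainCount ⊥ ν n = Nat.card {T : ℕ → YoungDiagram // NChain ν n T} :=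
  Nat.card_congr (chainEquiv ν n)

theorem NChain.mono {ν : YoungDiagram} {n : ℕ} {T : ℕ → YoungDiagram} (h : NChain ν n T) :
    Monotone T := by
  apply monotone_nat_of_le_succ
  intro i
  rcases lt_or_ge i n with hi | hi
  · exact (h.2.2 i hi).1
  · rw [h.2.1 i hi, h.2.1 (i+1) (by omega)]

theorem NChain.le {ν : YoungDiagram} {n : ℕ} {T : ℕ → YoungDiagram} (h : NChain ν n T)
    (i : ℕ) : T i ≤ ν := by
  rcases le_or_gt i n with hi | hi
  · rw [← h.2.1 n le_rfl]; exact h.mono hi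
  · rw [h.2.1 i (le_of_lt hi)]

theorem NChain.card_eq {ν : YoungDiagram} {n : ℕ} {T : ℕ → YoungDiagram} (h : NChain ν n T) :
    ∀ i, (T i).card = min i n := by
  intro i
  induction i with
  | zero => simp [h.1]
  | succ i ih =>
    rcases lt_or_ge i n with hi | hi
    · rw [(h.2.2 i hi).2, ih]; omega
    · have hTi : T i = ν := h.2.1 i hi
      rw [h.2.1 (i+1) (by omega), ← hTi, ih]
      omega

instance finite_le (ν : YoungDiagram) : Finite {d : YoungDiagram // d ≤ ν} := by
  have : Function.Injective (fun d : {d : YoungDiagram // d ≤ ν} =>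
      (fun x : ↥ν.cells => (x : ℕ × ℕ) ∈ d.1) : _ → (↥ν.cells → Prop)) := by
    rintro ⟨d, hd⟩ ⟨d', hd'⟩ hEq
    apply Subtype.ext
    ext c
    rw [YoungDiagram.mem_cells, YoungDiagram.mem_cells]
    constructor
    · intro hc
      have hcν : c ∈ ν.cells := (ν.mem_cells c).mpr (hd hc)
      have h2 := congrFun hEq ⟨c, hcν⟩
      simp only [eq_iff_iff] at h2
      exact h2.mp hc
    · intro hc
      have hcν : c ∈ ν.cells := (ν.mem_cells c).mpr (hd' hc)
      have := congrFun hEq ⟨c, hcν⟩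
      simp only [eq_iff_iff] at this
      exact this.mpr hc
  exact Finite.of_injective _ this

instance finite_nchain (ν : YoungDiagram) (n : ℕ) : Finite {T : ℕ → YoungDiagram // NChain ν n T} := by
  have : Function.Injective (fun T : {T : ℕ → YoungDiagram // NChain ν n T} =>
      (fun i : Fin (n+1) => (⟨T.1 i, T.2.le i⟩ : {d : YoungDiagram // d ≤ ν}))) := by
    rintro ⟨T, hT⟩ ⟨T', hT'⟩ hEq
    apply Subtype.ext
    funext i
    show T i = T' i
    rcases le_or_gt i n with hi | hi
    · have := congrFun hEq ⟨i, by omega⟩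
      simpa using congrArg Subtype.val this
    · rw [hT.2.1 i (le_of_lt hi), hT'.2.1 i (le_of_lt hi)]
  exact Finite.of_injective _ this

theorem nat_ivt {g : ℕ → ℕ} (h0 : g 0 = 0) (hstep : ∀ i, g (i + 1) ≤ g i + 1) :
    ∀ {n j : ℕ}, j ≤ g n → ∃ i, i ≤ n ∧ g i = j := by
  intro n
  induction n with
  | zero => intro j hj; exact ⟨0, le_rfl, by omega⟩
  | succ n ih =>
    intro j hj
    rcases le_or_gt j (g n) with h | h
    · obtain ⟨i, hi, hgi⟩ := ih h
      exact ⟨i, by omega, hgi⟩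
    · have := hstep n
      exact ⟨n + 1, le_rfl, by omega⟩


@[simp] theorem card_bot : (⊥ : YoungDiagram).card = 0 := by
  show (⊥ : YoungDiagram).cells.card = 0
  simp [YoungDiagram.cells_bot]

/-- number of cells below the first row at time `i` -/
noncomputable def lc (T : ℕ → YoungDiagram) (i : ℕ) : ℕ := (tail (T i)).card

section LC

variable {ν : YoungDiagram} {n : ℕ} {T : ℕ → YoungDiagram}

theorem lc_zero (h : NChain ν n T) : lc T 0 = 0 := by
  rw [lc, h.1, tail_bot, card_bot]

theorem lc_stable (h : NChain ν n T) {i : ℕ} (hi : n ≤ i) : lc T i = (tail ν).card := by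
  rw [lc, h.2.1 i hi]

theorem lc_mono (h : NChain ν n T) : Monotone (lc T) := fun a b hab =>
  Finset.card_le_card (YoungDiagram.cells_subset_iff.mpr (tail_mono (h.mono hab)))

theorem lc_succ_le (h : NChain ν n T) (i : ℕ) : lc T (i + 1) ≤ lc T i + 1 := by
  rcases lt_or_ge i n with hi | hi
  · have hcard := (h.2.2 i hi).2
    have h1 := card_eq_rowLen_add_tail (T i)
    have h2 := card_eq_rowLen_add_tail (T (i + 1))
    have h3 : (T i).rowLen 0 ≤ (T (i + 1)).rowLen 0 := rowLen_mono (h.2.2 i hi).1 0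
    simp only [lc] at *
    omega
  · rw [lc_stable h hi, lc_stable h (by omega : n ≤ i + 1)]
    omega

theorem lc_le (h : NChain ν n T) (i : ℕ) : lc T i ≤ (tail ν).card := by
  rcases le_or_gt i n with hi | hi
  · rw [← lc_stable h (le_refl n)]; exact lc_mono h hi
  · rw [lc_stable h (le_of_lt hi)]

theorem tail_eq_of_lc_eq (h : NChain ν n T) {a b : ℕ} (hab : lc T a = lc T b) :
    tail (T a) = tail (T b) := by
  rcases le_total a b with hle | hle
  · exact eq_of_le_of_card_le (tail_mono (h.mono hle)) (le_of_eq hab.symm)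
  · exact (eq_of_le_of_card_le (tail_mono (h.mono hle)) (le_of_eq hab)).symm

theorem exists_lc (h : NChain ν n T) {j : ℕ} (hj : j ≤ (tail ν).card) :
    ∃ i, lc T i = j := by
  obtain ⟨i, _, hi⟩ := nat_ivt (lc_zero h) (lc_succ_le h)
    (hj.trans (lc_stable h (le_refl n)).ge)
  exact ⟨i, hi⟩

theorem rowLen0_eq (h : NChain ν n T) (i : ℕ) : (T i).rowLen 0 = min i n - lc T i := by
  have h1 := card_eq_rowLen_add_tail (T i)
  have h2 := h.card_eq i
  simp only [lc] at *
  omega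

theorem count_lc (h : NChain ν n T) :
    ∀ i, i ≤ n →
      ((Finset.range i).filter (fun j => lc T (j + 1) = lc T j + 1)).card = lc T i := by
  intro i
  induction i with
  | zero => intro _; simp [lc_zero h]
  | succ i ih =>
    intro hi
    rw [Finset.range_add_one, Finset.filter_insert]
    have hstep1 : lc T i ≤ lc T (i + 1) := lc_mono h (by omega)
    have hstep2 : lc T (i + 1) ≤ lc T i + 1 := lc_succ_le h i
    by_cases hj : lc T (i + 1) = lc T i + 1
    · rw [if_pos hj, Finset.card_insert_of_notMem (by simp), ih (by omega), hj]
    · rw [if_neg hj, ih (by omega)]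
      omega

/-- choice of a time at which `lc` equals `j` -/
noncomputable def stime (T : ℕ → YoungDiagram) (j : ℕ) : ℕ :=
  @dite _ (∃ i, lc T i = j) (Classical.propDecidable _) (fun hx => Classical.choose hx)
    (fun _ => 0)

theorem stime_spec {T : ℕ → YoungDiagram} {j : ℕ} (hx : ∃ i, lc T i = j) :
    lc T (stime T j) = j := by
  have h1 : stime T j = Classical.choose hx := dif_pos hx
  rw [h1]
  exact Classical.choose_spec hx

end LC

/-- The subchain of lower parts. -/
noncomputable def lowerChain (kk : ℕ) (T : ℕ → YoungDiagram) : ℕ → YoungDiagram :=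
  fun j => tail (T (stime T (min j kk)))

section LowerChain

variable {ν : YoungDiagram} {n : ℕ} {T : ℕ → YoungDiagram} {kk : ℕ}

theorem lowerChain_lc (h : NChain ν n T) (hkk : (tail ν).card = kk) (j : ℕ) :
    lc T (stime T (min j kk)) = min j kk :=
  stime_spec (exists_lc h (by omega))

theorem lowerChain_card (h : NChain ν n T) (hkk : (tail ν).card = kk) (j : ℕ) :
    (lowerChain kk T j).card = min j kk :=
  lowerChain_lc h hkk j

theorem lowerChain_eq_tail (h : NChain ν n T) (hkk : (tail ν).card = kk) (i : ℕ) :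
    lowerChain kk T (lc T i) = tail (T i) := by
  have h1 : min (lc T i) kk = lc T i := by
    have := lc_le h i
    omega
  rw [lowerChain, h1]
  exact tail_eq_of_lc_eq h (by rw [stime_spec ⟨i, rfl⟩])

theorem lowerChain_nchain (h : NChain ν n T) (hkk : (tail ν).card = kk) :
    NChain (tail ν) kk (lowerChain kk T) := by
  refine ⟨?_, ?_, ?_⟩
  · apply eq_bot_of_card_eq_zero
    rw [lowerChain_card h hkk 0]
    omega
  · intro j hj
    have h1 : min j kk = kk := by omega
    rw [lowerChain, h1]
    have h2 : lc T n = kk := by rw [lc_stable h le_rfl, hkk]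
    have h3 : tail (T (stime T kk)) = tail (T n) :=
      tail_eq_of_lc_eq h (by rw [stime_spec ⟨n, h2⟩, h2])
    rw [h3, h.2.1 n le_rfl]
  · intro j hj
    have hc1 : (lowerChain kk T j).card = j := by rw [lowerChain_card h hkk]; omega
    have hc2 : (lowerChain kk T (j + 1)).card = j + 1 := by
      rw [lowerChain_card h hkk]; omega
    constructor
    · rcases le_total (stime T (min j kk)) (stime T (min (j + 1) kk)) with hle | hle
      · exact tail_mono (h.mono hle)
      · exfalso
        have : (lowerChain kk T (j + 1)).card ≤ (lowerChain kk T j).card :=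
          Finset.card_le_card (YoungDiagram.cells_subset_iff.mpr (tail_mono (h.mono hle)))
        omega
    · omega

end LowerChain

/-- `cons` with truncation, to avoid dependent proofs. -/
noncomputable def cons' (m : ℕ) (σ : YoungDiagram) : YoungDiagram :=
  cons (max m (σ.rowLen 0)) σ (le_max_right _ _)

theorem cons'_eq {m : ℕ} {σ : YoungDiagram} (h : σ.rowLen 0 ≤ m) :
    cons' m σ = cons m σ h := by
  ext ⟨i, j⟩
  rw [YoungDiagram.mem_cells, YoungDiagram.mem_cells]
  cases i with
  | zero => rw [cons', mem_cons_zero, mem_cons_zero, max_eq_left h]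
  | succ i => rw [cons', mem_cons_succ, mem_cons_succ]

theorem tail_cons' {m : ℕ} {σ : YoungDiagram} : tail (cons' m σ) = σ := tail_cons

theorem filter_lt_succ_card (B : Finset ℕ) (i : ℕ) :
    (B.filter (· < i + 1)).card = (B.filter (· < i)).card + (if i ∈ B then 1 else 0) := by
  classical
  have hsplit : B.filter (· < i + 1) = (B.filter (· < i)) ∪ (B.filter (· = i)) := by
    ext b
    by_cases hb : b ∈ B <;> simp only [Finset.mem_filter, Finset.mem_union, hb, true_and,
      false_and, or_self, false_or, iff_false, not_and, and_true] <;> omega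
  rw [hsplit, Finset.card_union_of_disjoint]
  · congr 1
    rw [Finset.filter_eq']
    split_ifs with h <;> simp [h]
  · rw [Finset.disjoint_left]
    intro a ha ha'
    simp only [Finset.mem_filter] at ha ha'
    omega

section Bounds

variable {mu : YoungDiagram} {k n : ℕ}

theorem chainCount_le (hmu : mu.card = k) (hm : mu.rowLen 0 ≤ n - k) :
    chainCount ⊥ (cons (n - k) mu hm) n ≤ n.choose k * chainCount ⊥ mu k := by
  classical
  set ν := cons (n - k) mu hm with hν
  have htail : tail ν = mu := tail_cons
  have hkk : (tail ν).card = k := by rw [htail, hmu]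
  rw [chainCount_eq, chainCount_eq]
  have hS : ∀ T : {T : ℕ → YoungDiagram // NChain ν n T}, NChain mu k (lowerChain k T.1) := by
    intro T
    have := lowerChain_nchain T.2 hkk
    rwa [htail] at this
  set F : {T : ℕ → YoungDiagram // NChain ν n T} →
      ({A : Finset ℕ // A ∈ (Finset.range n).powersetCard k} ×
       {S : ℕ → YoungDiagram // NChain mu k S}) := fun T =>
    ⟨⟨(Finset.range n).filter (fun j => lc T.1 (j + 1) = lc T.1 j + 1), by
        rw [Finset.mem_powersetCard]
        refine ⟨Finset.filter_subset _ _, ?_⟩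
        rw [count_lc T.2 n le_rfl, lc_stable T.2 le_rfl, hkk]⟩,
     ⟨lowerChain k T.1, hS T⟩⟩ with hF
  have hinj : Function.Injective F := by
    rintro ⟨T, hT⟩ ⟨T', hT'⟩ hEq
    simp only [hF, Prod.mk.injEq, Subtype.mk.injEq] at hEq
    obtain ⟨hA, hLC⟩ := hEq
    -- equal lc functions
    have hlc : ∀ i, lc T i = lc T' i := by
      intro i
      rcases le_or_gt i n with hi | hi
      · have e1 : (Finset.range i).filter (fun j => lc T (j + 1) = lc T j + 1) =
            ((Finset.range n).filter (fun j => lc T (j + 1) = lc T j + 1)).filter (· < i) := by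
          ext j
          simp only [Finset.mem_filter, Finset.mem_range]
          constructor
          · rintro ⟨hj, hj2⟩; exact ⟨⟨by omega, hj2⟩, hj⟩
          · rintro ⟨⟨hj, hj2⟩, hj3⟩; exact ⟨hj3, hj2⟩
        have e1' : (Finset.range i).filter (fun j => lc T' (j + 1) = lc T' j + 1) =
            ((Finset.range n).filter (fun j => lc T' (j + 1) = lc T' j + 1)).filter (· < i) := by
          ext j
          simp only [Finset.mem_filter, Finset.mem_range]
          constructor
          · rintro ⟨hj, hj2⟩; exact ⟨⟨by omega, hj2⟩, hj⟩
          · rintro ⟨⟨hj, hj2⟩, hj3⟩; exact ⟨hj3, hj2⟩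
        rw [← count_lc hT i hi, ← count_lc hT' i hi, e1, e1', hA]
      · rw [lc_stable hT (le_of_lt hi), lc_stable hT' (le_of_lt hi)]
    have htails : ∀ i, tail (T i) = tail (T' i) := by
      intro i
      rw [← lowerChain_eq_tail hT hkk i, ← lowerChain_eq_tail hT' hkk i, hlc i, hLC]
    apply Subtype.ext
    funext i
    refine eq_of_rowLen_tail ?_ (htails i)
    rw [rowLen0_eq hT i, rowLen0_eq hT' i, hlc i]
  calc Nat.card {T : ℕ → YoungDiagram // NChain ν n T}
      ≤ Nat.card ({A : Finset ℕ // A ∈ (Finset.range n).powersetCard k} ×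
          {S : ℕ → YoungDiagram // NChain mu k S}) := Nat.card_le_card_of_injective F hinj
    _ = n.choose k * Nat.card {S : ℕ → YoungDiagram // NChain mu k S} := by
        rw [Nat.card_prod, Nat.card_eq_finsetCard, Finset.card_powersetCard, Finset.card_range]

theorem le_chainCount (hmu : mu.card = k) (hn : k + mu.rowLen 0 < n) (hm : mu.rowLen 0 ≤ n - k) :
    (n - (k + mu.rowLen 0)).choose k * chainCount ⊥ mu k ≤
      chainCount ⊥ (cons (n - k) mu hm) n := by
  classical
  set c := k + mu.rowLen 0 with hc
  set ν := cons (n - k) mu hm with hν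
  rw [chainCount_eq, chainCount_eq]
  set G : ({B : Finset ℕ // B ∈ (Finset.Ico c n).powersetCard k} ×
      {S : ℕ → YoungDiagram // NChain mu k S}) → (ℕ → YoungDiagram) := fun BS =>
    fun i => cons' (min i n - (BS.1.1.filter (· < i)).card)
      (BS.2.1 ((BS.1.1.filter (· < i)).card)) with hG
  -- facts about the counting function for a fixed B
  have hBfacts : ∀ B : Finset ℕ, B ∈ (Finset.Ico c n).powersetCard k →
      (∀ i, (B.filter (· < i)).card ≤ k) ∧ (∀ i, (B.filter (· < i)).card ≤ i) ∧
      (∀ i, i ≤ c → (B.filter (· < i)).card = 0) ∧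
      (∀ i, n ≤ i → (B.filter (· < i)).card = k) := by
    intro B hB
    rw [Finset.mem_powersetCard] at hB
    obtain ⟨hBsub, hBcard⟩ := hB
    refine ⟨fun i => hBcard ▸ Finset.card_le_card (Finset.filter_subset _ _),
      fun i => ?_, fun i hi => ?_, fun i hi => ?_⟩
    · calc (B.filter (· < i)).card ≤ (Finset.range i).card :=
          Finset.card_le_card (fun b hb => Finset.mem_range.mpr (Finset.mem_filter.mp hb).2)
        _ = i := Finset.card_range i
    · rw [Finset.card_eq_zero, Finset.filter_eq_empty_iff]
      intro b hb
      have := Finset.mem_Ico.mp (hBsub hb)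
      omega
    · rw [Finset.filter_true_of_mem, hBcard]
      intro b hb
      have := Finset.mem_Ico.mp (hBsub hb)
      omega
  -- the built chain is a valid cons (rowLen condition)
  have hrowOK : ∀ (B : Finset ℕ), B ∈ (Finset.Ico c n).powersetCard k →
      ∀ (S : ℕ → YoungDiagram), NChain mu k S →
      ∀ i, (S ((B.filter (· < i)).card)).rowLen 0 ≤ min i n - (B.filter (· < i)).card := by
    intro B hB S hS i
    obtain ⟨hk', hi', h0', hn'⟩ := hBfacts B hB
    rcases le_or_gt i c with hic | hic
    · rw [h0' i hic, hS.1, rowLen_bot]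
      omega
    · have h1 : (S ((B.filter (· < i)).card)).rowLen 0 ≤ mu.rowLen 0 :=
        rowLen_mono (hS.le _) 0
      have h2 := hk' i
      have h3 := hi' i
      omega
  have hGchain : ∀ BS, NChain ν n (G BS) := by
    rintro ⟨⟨B, hB⟩, ⟨S, hS⟩⟩
    obtain ⟨hk', hi', h0', hn'⟩ := hBfacts B hB
    have hOK := hrowOK B hB S hS
    show NChain ν n (fun i => cons' (min i n - (B.filter (· < i)).card)
      (S ((B.filter (· < i)).card)))
    refine ⟨?_, ?_, ?_⟩
    · show cons' (min 0 n - (B.filter (· < 0)).card) (S ((B.filter (· < 0)).card)) = ⊥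
      rw [h0' 0 (by omega)]
      have hz : min 0 n - 0 = 0 := by omega
      rw [hz, hS.1, cons'_eq (le_of_eq (rowLen_bot 0)), cons_zero_bot]
    · intro i hi
      show cons' (min i n - (B.filter (· < i)).card) (S ((B.filter (· < i)).card)) = ν
      rw [hn' i hi, min_eq_right hi, hS.2.1 k le_rfl, cons'_eq hm]
    · intro i hi
      have hq := filter_lt_succ_card B i
      have hOKi := hOK i
      have hOKi1 := hOK (i + 1)
      show cons' (min i n - (B.filter (· < i)).card) (S ((B.filter (· < i)).card)) ≤
          cons' (min (i+1) n - (B.filter (· < i+1)).card) (S ((B.filter (· < i+1)).card)) ∧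
        (cons' (min (i+1) n - (B.filter (· < i+1)).card) (S ((B.filter (· < i+1)).card))).card =
          (cons' (min i n - (B.filter (· < i)).card) (S ((B.filter (· < i)).card))).card + 1
      by_cases hiB : i ∈ B
      · rw [if_pos hiB] at hq
        have hlt : (B.filter (· < i)).card < k := by
          have := hk' (i + 1)
          omega
        constructor
        · rw [cons'_eq hOKi, cons'_eq hOKi1]
          have hSle : S ((B.filter (· < i)).card) ≤ S ((B.filter (· < i + 1)).card) := by
            rw [hq]
            exact (hS.2.2 _ hlt).1
          refine cons_mono ?_ hSle
          have := hi' i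
          omega
        · rw [cons'_eq hOKi, cons'_eq hOKi1, card_cons, card_cons, hS.card_eq, hS.card_eq]
          have h3 := hi' i
          have h4 := hk' i
          omega
      · rw [if_neg hiB] at hq
        constructor
        · rw [cons'_eq hOKi, cons'_eq hOKi1]
          have hSle : S ((B.filter (· < i)).card) ≤ S ((B.filter (· < i + 1)).card) := by
            rw [hq]
            exact le_rfl
          refine cons_mono ?_ hSle
          have := hi' i
          omega
        · rw [cons'_eq hOKi, cons'_eq hOKi1, card_cons, card_cons, hS.card_eq, hS.card_eq]
          have h3 := hi' i
          have h4 := hk' i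
          omega
  set G' : ({B : Finset ℕ // B ∈ (Finset.Ico c n).powersetCard k} ×
      {S : ℕ → YoungDiagram // NChain mu k S}) → {T : ℕ → YoungDiagram // NChain ν n T} :=
    fun BS => ⟨G BS, hGchain BS⟩ with hG'
  have hinj : Function.Injective G' := by
    rintro ⟨⟨B, hB⟩, ⟨S, hS⟩⟩ ⟨⟨B', hB'⟩, ⟨S', hS'⟩⟩ hEq
    have hTeq : G ⟨⟨B, hB⟩, ⟨S, hS⟩⟩ = G ⟨⟨B', hB'⟩, ⟨S', hS'⟩⟩ := by
      simpa [hG', Subtype.mk.injEq] using hEq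
    obtain ⟨hk1, hi1, h01, hn1⟩ := hBfacts B hB
    obtain ⟨hk2, hi2, h02, hn2⟩ := hBfacts B' hB'
    have htails : ∀ i, S ((B.filter (· < i)).card) = S' ((B'.filter (· < i)).card) := by
      intro i
      have h1 : cons' (min i n - (B.filter (· < i)).card) (S ((B.filter (· < i)).card)) =
          cons' (min i n - (B'.filter (· < i)).card) (S' ((B'.filter (· < i)).card)) :=
        congrFun hTeq i
      have h2 := congrArg tail h1
      rwa [tail_cons', tail_cons'] at h2
    have hg : ∀ i, (B.filter (· < i)).card = (B'.filter (· < i)).card := by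
      intro i
      have h1 := congrArg YoungDiagram.card (htails i)
      rw [hS.card_eq, hS'.card_eq] at h1
      have := hk1 i
      have := hk2 i
      omega
    have hBB : B = B' := by
      ext b
      have e1 := filter_lt_succ_card B b
      have e2 := filter_lt_succ_card B' b
      have e3 := hg b
      have e4 := hg (b + 1)
      constructor
      · intro hbB
        rw [if_pos hbB] at e1
        by_contra hbB'
        rw [if_neg hbB'] at e2
        omega
      · intro hbB'
        rw [if_pos hbB'] at e2
        by_contra hbB
        rw [if_neg hbB] at e1
        omega
    have hSS : S = S' := by
      funext j
      rcases le_or_gt j k with hj | hj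
      · have hstep : ∀ i, (B.filter (· < i + 1)).card ≤ (B.filter (· < i)).card + 1 := by
          intro i
          have := filter_lt_succ_card B i
          split_ifs at this <;> omega
        obtain ⟨i, _, hi⟩ := nat_ivt (g := fun i => (B.filter (· < i)).card)
          (h01 0 (by omega)) hstep (hj.trans (hn1 n le_rfl).ge)
        have := htails i
        rw [hi] at this
        rw [this, ← hg i, hi]
      · rw [hS.2.1 j (le_of_lt hj), hS'.2.1 j (le_of_lt hj)]
    rw [Prod.mk.injEq]
    exact ⟨Subtype.ext hBB, Subtype.ext hSS⟩
  calc (n - c).choose k * Nat.card {S : ℕ → YoungDiagram // NChain mu k S}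
      = Nat.card ({B : Finset ℕ // B ∈ (Finset.Ico c n).powersetCard k} ×
          {S : ℕ → YoungDiagram // NChain mu k S}) := by
        rw [Nat.card_prod, Nat.card_eq_finsetCard, Finset.card_powersetCard, Nat.card_Ico]
    _ ≤ Nat.card {T : ℕ → YoungDiagram // NChain ν n T} :=
        Nat.card_le_card_of_injective G' hinj

end Bounds


/-- entries of a semistandard tableau in row `i` are at least `i`. -/
theorem rowBound {μ : YoungDiagram} (T : SemistandardYoungTableau μ) :
    ∀ i j, (i, j) ∈ μ → i ≤ T i j := by
  intro i
  induction i with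
  | zero => intro j _; omega
  | succ i ih =>
    intro j hmem
    have h1 : (i, j) ∈ μ := μ.up_left_mem (by omega) le_rfl hmem
    have h2 : T i j < T (i + 1) j := T.col_strict (by omega) hmem
    have := ih j h1
    omega

/-- If a tableau has exactly `rowLen 0` entries equal to `0`, the whole first row is `0`. -/
theorem row0_zero {ν : YoungDiagram} (T : SemistandardYoungTableau ν)
    (hcard : (ν.cells.filter fun c => T c.1 c.2 = 0).card = ν.rowLen 0) :
    ∀ j, (0, j) ∈ ν → T 0 j = 0 := by
  have hsub : (ν.cells.filter fun c => T c.1 c.2 = 0) ⊆ ν.row 0 := by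
    intro c hc
    obtain ⟨hc1, hc2⟩ := Finset.mem_filter.mp hc
    rw [YoungDiagram.mem_row_iff]
    refine ⟨(ν.mem_cells _).mp hc1, ?_⟩
    obtain ⟨a, b⟩ := c
    by_contra ha
    obtain ⟨a', rfl⟩ : ∃ a', a = a' + 1 := ⟨a - 1, by simp at ha ⊢; omega⟩
    have := rowBound T (a' + 1) b ((ν.mem_cells _).mp hc1)
    simp only at hc2
    omega
  have heq : (ν.cells.filter fun c => T c.1 c.2 = 0) = ν.row 0 := by
    apply Finset.eq_of_subset_of_card_le hsub
    rw [hcard, YoungDiagram.rowLen_eq_card]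
  intro j hj
  have : (0, j) ∈ ν.row 0 := YoungDiagram.mk_mem_row_iff.mpr hj
  rw [← heq] at this
  exact (Finset.mem_filter.mp this).2

section KostkaEquiv

variable {mu : YoungDiagram} {m : ℕ} (hm : mu.rowLen 0 ≤ m)

/-- Strip the (all-zero) first row from a tableau of shape `cons m mu`. -/
noncomputable def dnT (T : SemistandardYoungTableau (cons m mu hm)) : SemistandardYoungTableau mu where
  entry i j := T (i + 1) j - 1
  row_weak' := by
    intro i j1 j2 hj hmem
    have h2 : (i + 1, j2) ∈ cons m mu hm := mem_cons_succ.mpr hmem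
    exact Nat.sub_le_sub_right (T.row_weak hj h2) 1
  col_strict' := by
    intro i1 i2 j hi hmem
    have h2 : (i2 + 1, j) ∈ cons m mu hm := mem_cons_succ.mpr hmem
    have h1 : (i1 + 1, j) ∈ cons m mu hm :=
      (cons m mu hm).up_left_mem (by omega) le_rfl h2
    have hlt : T (i1 + 1) j < T (i2 + 1) j := T.col_strict (by omega) h2
    have hge := rowBound T (i1 + 1) j h1
    show T (i1 + 1) j - 1 < T (i2 + 1) j - 1
    omega
  zeros' := by
    intro i j hmem
    have : (i + 1, j) ∉ cons m mu hm := fun hc => hmem (mem_cons_succ.mp hc)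
    show T (i + 1) j - 1 = 0
    rw [T.zeros this]

/-- Extend a tableau of shape `mu` by an all-zero first row. -/
noncomputable def upT (T' : SemistandardYoungTableau mu) : SemistandardYoungTableau (cons m mu hm) where
  entry i j := if (i, j) ∈ cons m mu hm ∧ i ≠ 0 then T' (i - 1) j + 1 else 0
  row_weak' := by
    intro i j1 j2 hj hmem
    cases i with
    | zero =>
      show (if (0, j1) ∈ cons m mu hm ∧ (0:ℕ) ≠ 0 then T' (0 - 1) j1 + 1 else 0) ≤ _
      rw [if_neg (by simp)]
      omega
    | succ i =>
      have h1 : (i + 1, j1) ∈ cons m mu hm :=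
        (cons m mu hm).up_left_mem le_rfl (by omega) hmem
      show (if (i + 1, j1) ∈ cons m mu hm ∧ i + 1 ≠ 0 then T' (i + 1 - 1) j1 + 1 else 0) ≤
        (if (i + 1, j2) ∈ cons m mu hm ∧ i + 1 ≠ 0 then T' (i + 1 - 1) j2 + 1 else 0)
      rw [if_pos ⟨h1, by omega⟩, if_pos ⟨hmem, by omega⟩]
      simp only [Nat.add_sub_cancel]
      have := T'.row_weak hj (mem_cons_succ.mp hmem)
      omega
  col_strict' := by
    intro i1 i2 j hi hmem
    obtain ⟨i2', rfl⟩ : ∃ i2', i2 = i2' + 1 := ⟨i2 - 1, by omega⟩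
    show (if (i1, j) ∈ cons m mu hm ∧ i1 ≠ 0 then T' (i1 - 1) j + 1 else 0) <
      (if (i2' + 1, j) ∈ cons m mu hm ∧ i2' + 1 ≠ 0 then T' (i2' + 1 - 1) j + 1 else 0)
    rw [show (if (i2' + 1, j) ∈ cons m mu hm ∧ i2' + 1 ≠ 0 then T' (i2' + 1 - 1) j + 1 else 0)
      = T' i2' j + 1 by rw [if_pos ⟨hmem, by omega⟩]; simp]
    cases i1 with
    | zero =>
      rw [if_neg (by simp)]
      omega
    | succ i1 =>
      have h1 : (i1 + 1, j) ∈ cons m mu hm :=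
        (cons m mu hm).up_left_mem (by omega) le_rfl hmem
      rw [if_pos ⟨h1, by omega⟩]
      simp only [Nat.add_sub_cancel]
      have := T'.col_strict (show i1 < i2' by omega) (mem_cons_succ.mp hmem)
      omega
  zeros' := by
    intro i j hmem
    show (if (i, j) ∈ cons m mu hm ∧ i ≠ 0 then T' (i - 1) j + 1 else 0) = 0
    rw [if_neg (fun hc => hmem hc.1)]

theorem dnT_apply (T : SemistandardYoungTableau (cons m mu hm)) (i j : ℕ) :
    dnT hm T i j = T (i + 1) j - 1 := rfl

theorem upT_apply (T' : SemistandardYoungTableau mu) (i j : ℕ) :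
    upT hm T' i j = if (i, j) ∈ cons m mu hm ∧ i ≠ 0 then T' (i - 1) j + 1 else 0 := rfl

theorem upT_apply_succ (T' : SemistandardYoungTableau mu) {i j : ℕ}
    (h : (i + 1, j) ∈ cons m mu hm) : upT hm T' (i + 1) j = T' i j + 1 := by
  rw [upT_apply, if_pos ⟨h, by omega⟩]
  simp

theorem upT_apply_succ_notmem (T' : SemistandardYoungTableau mu) {i j : ℕ}
    (h : (i + 1, j) ∉ cons m mu hm) : upT hm T' (i + 1) j = 0 := by
  rw [upT_apply, if_neg (fun hc => h hc.1)]

theorem upT_apply_zero (T' : SemistandardYoungTableau mu) (j : ℕ) :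
    upT hm T' 0 j = 0 := by
  rw [upT_apply, if_neg (by simp)]

variable (w wt : ℕ → ℕ) (hw0 : w 0 = m) (hw : ∀ i, w (i + 1) = wt i)

/-- The weight-preserving equivalence between tableaux of shape `(m, mu)` with first
weight `m` and tableaux of shape `mu`. -/
noncomputable def kostkaEquiv :
    {T : SemistandardYoungTableau (cons m mu hm) //
      ∀ i : ℕ, ((cons m mu hm).cells.filter fun c => T c.1 c.2 = i).card = w i} ≃
    {T' : SemistandardYoungTableau mu //
      ∀ i : ℕ, (mu.cells.filter fun c => T' c.1 c.2 = i).card = wt i} := by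
  refine ⟨fun T => ⟨dnT hm T.1, ?_⟩, fun T' => ⟨upT hm T'.1, ?_⟩, ?_, ?_⟩
  · -- weight of dnT
    obtain ⟨T, hT⟩ := T
    intro i
    have hrow0 : ∀ j, (0, j) ∈ cons m mu hm → T 0 j = 0 :=
      row0_zero T (by rw [hT 0, hw0, rowLen_cons_zero])
    rw [← hw i, ← hT (i + 1)]
    apply Finset.card_bij (fun c _ => (c.1 + 1, c.2))
    · rintro ⟨a, b⟩ hab
      obtain ⟨h1, h2⟩ := Finset.mem_filter.mp hab
      rw [YoungDiagram.mem_cells] at h1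
      simp only at h2
      refine Finset.mem_filter.mpr ⟨(YoungDiagram.mem_cells _).mpr (mem_cons_succ.mpr h1), ?_⟩
      have := rowBound T (a + 1) b (mem_cons_succ.mpr h1)
      rw [dnT_apply] at h2
      show T (a + 1) b = i + 1
      omega
    · rintro ⟨a, b⟩ hab ⟨a', b'⟩ hab' hEq
      simp only [Prod.mk.injEq] at hEq ⊢
      omega
    · rintro ⟨a, b⟩ hab
      obtain ⟨h1, h2⟩ := Finset.mem_filter.mp hab
      rw [YoungDiagram.mem_cells] at h1
      simp only at h2
      obtain ⟨a', rfl⟩ : ∃ a', a = a' + 1 := by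
        refine ⟨a - 1, ?_⟩
        by_contra ha
        have ha0 : a = 0 := by omega
        subst ha0
        rw [hrow0 b h1] at h2
        omega
      refine ⟨(a', b), Finset.mem_filter.mpr ⟨?_, ?_⟩, rfl⟩
      · exact (YoungDiagram.mem_cells _).mpr (mem_cons_succ.mp h1)
      · show dnT hm T a' b = i
        rw [dnT_apply]
        omega
  · -- weight of upT
    obtain ⟨T', hT'⟩ := T'
    intro i
    cases i with
    | zero =>
      rw [hw0]
      have heq : ((cons m mu hm).cells.filter fun c => (upT hm T') c.1 c.2 = 0) =
          (cons m mu hm).row 0 := by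
        ext ⟨a, b⟩
        rw [Finset.mem_filter, YoungDiagram.mem_row_iff, YoungDiagram.mem_cells]
        cases a with
        | zero =>
          constructor
          · rintro ⟨h1, _⟩; exact ⟨h1, rfl⟩
          · rintro ⟨h1, _⟩
            exact ⟨(YoungDiagram.mem_cells _).mpr h1, upT_apply_zero hm T' b⟩
        | succ a =>
          constructor
          · rintro ⟨h1, h2⟩
            exfalso
            have h3 : (upT hm T') (a + 1) b = 0 := h2
            rw [upT_apply_succ hm T' h1] at h3
            omega
          · rintro ⟨_, h2⟩
            exact absurd h2 (by omega)
      rw [heq, ← YoungDiagram.rowLen_eq_card, rowLen_cons_zero]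
    | succ i =>
      rw [hw i, ← hT' i]
      symm
      apply Finset.card_bij (fun c _ => (c.1 + 1, c.2))
      · rintro ⟨a, b⟩ hab
        obtain ⟨h1, h2⟩ := Finset.mem_filter.mp hab
        rw [YoungDiagram.mem_cells] at h1
        simp only at h2
        have hmem : (a + 1, b) ∈ cons m mu hm := mem_cons_succ.mpr h1
        refine Finset.mem_filter.mpr ⟨(YoungDiagram.mem_cells _).mpr hmem, ?_⟩
        show (upT hm T') (a + 1) b = i + 1
        rw [upT_apply_succ hm T' hmem]
        omega
      · rintro ⟨a, b⟩ hab ⟨a', b'⟩ hab' hEq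
        simp only [Prod.mk.injEq] at hEq ⊢
        omega
      · rintro ⟨a, b⟩ hab
        obtain ⟨h1, h2⟩ := Finset.mem_filter.mp hab
        rw [YoungDiagram.mem_cells] at h1
        simp only at h2
        obtain ⟨a', rfl⟩ : ∃ a', a = a' + 1 := by
          refine ⟨a - 1, ?_⟩
          by_contra ha
          have ha0 : a = 0 := by omega
          subst ha0
          rw [upT_apply_zero hm T' b] at h2
          omega
        rw [upT_apply_succ hm T' h1] at h2
        refine ⟨(a', b), Finset.mem_filter.mpr ⟨?_, ?_⟩, rfl⟩
        · exact (YoungDiagram.mem_cells _).mpr (mem_cons_succ.mp h1)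
        · show T' a' b = i
          omega
  · -- left inverse
    rintro ⟨T, hT⟩
    apply Subtype.ext
    apply SemistandardYoungTableau.ext
    intro i j
    have hrow0 : ∀ j, (0, j) ∈ cons m mu hm → T 0 j = 0 :=
      row0_zero T (by rw [hT 0, hw0, rowLen_cons_zero])
    show (upT hm (dnT hm T)) i j = T i j
    cases i with
    | zero =>
      rw [upT_apply_zero]
      by_cases hmem : (0, j) ∈ cons m mu hm
      · rw [hrow0 j hmem]
      · rw [T.zeros hmem]
    | succ i =>
      by_cases hmem : (i + 1, j) ∈ cons m mu hm
      · rw [upT_apply_succ hm _ hmem, dnT_apply]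
        have := rowBound T (i + 1) j hmem
        omega
      · rw [upT_apply_succ_notmem hm _ hmem, T.zeros hmem]
  · -- right inverse
    rintro ⟨T', hT'⟩
    apply Subtype.ext
    apply SemistandardYoungTableau.ext
    intro i j
    show (dnT hm (upT hm T')) i j = T' i j
    rw [dnT_apply]
    by_cases hmem : (i, j) ∈ mu
    · have hmem' : (i + 1, j) ∈ cons m mu hm := mem_cons_succ.mpr hmem
      rw [upT_apply_succ hm _ hmem']
      simp
    · have hmem' : (i + 1, j) ∉ cons m mu hm := fun hc => hmem (mem_cons_succ.mp hc)
      rw [upT_apply_succ_notmem hm _ hmem', T'.zeros hmem]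

theorem kostka_cons (hw0 : w 0 = m) (hw : ∀ i, w (i + 1) = wt i) :
    kostka (cons m mu hm) w = kostka mu wt :=
  Nat.card_congr (kostkaEquiv hm w wt hw0 hw)

end KostkaEquiv


theorem aux1 (a b : ℕ) :
    Tendsto (fun x : ℝ => (x - a) / (x - b)) atTop (nhds 1) := by
  have h1 : Tendsto (fun x : ℝ => x - b) atTop atTop :=
    tendsto_atTop_add_const_right _ _ tendsto_id
  have h2 : Tendsto (fun x : ℝ => (x - b)⁻¹) atTop (nhds 0) := h1.inv_tendsto_atTop
  have h3 : Tendsto (fun x : ℝ => 1 + ((b : ℝ) - a) * (x - b)⁻¹) atTop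
      (nhds (1 + ((b : ℝ) - a) * 0)) := tendsto_const_nhds.add (tendsto_const_nhds.mul h2)
  rw [mul_zero, add_zero] at h3
  refine h3.congr' ?_
  filter_upwards [eventually_gt_atTop (b : ℝ)] with x hx
  have hxb : x - b ≠ 0 := sub_ne_zero.mpr (ne_of_gt hx)
  field_simp
  ring

theorem aux2 (a b : ℕ) :
    Tendsto (fun n : ℕ => ((n - a : ℕ) : ℝ) / ((n - b : ℕ) : ℝ)) atTop (nhds 1) := by
  have := (aux1 a b).comp tendsto_natCast_atTop_atTop (α := ℕ)
  refine this.congr' ?_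
  filter_upwards [eventually_ge_atTop (a + b)] with n hn
  have h1 : ((n - a : ℕ) : ℝ) = (n : ℝ) - a := by
    rw [Nat.cast_sub (by omega)]
  have h2 : ((n - b : ℕ) : ℝ) = (n : ℝ) - b := by
    rw [Nat.cast_sub (by omega)]
  simp only [Function.comp_apply, h1, h2]

theorem tendsto_choose_ratio (c k : ℕ) :
    Tendsto (fun n : ℕ => ((n - c).choose k : ℝ) * ((n - k).factorial : ℝ) / (n.factorial : ℝ))
      atTop (nhds (1 / (k.factorial : ℝ))) := by
  have hprod : Tendsto (fun n : ℕ =>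
      ∏ i ∈ Finset.range k, (((n - (c + i) : ℕ) : ℝ) / ((n - i : ℕ) : ℝ))) atTop
      (nhds 1) := by
    have := tendsto_finset_prod (Finset.range k)
      (fun i _ => aux2 (c + i) i)
    simpa using this
  have h2 : Tendsto (fun n : ℕ =>
      (1 / (k.factorial : ℝ)) * ∏ i ∈ Finset.range k,
        (((n - (c + i) : ℕ) : ℝ) / ((n - i : ℕ) : ℝ))) atTop
      (nhds ((1 / (k.factorial : ℝ)) * 1)) := tendsto_const_nhds.mul hprod
  rw [mul_one] at h2
  refine h2.congr' ?_
  filter_upwards [eventually_ge_atTop (c + k + 1)] with n hn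
  have hkn : k ≤ n - c := by omega
  have hkn' : k ≤ n := by omega
  -- descFactorial identities
  have e1 : (n - c).descFactorial k = k.factorial * (n - c).choose k :=
    Nat.descFactorial_eq_factorial_mul_choose _ _
  have e2 : (n - k).factorial * n.descFactorial k = n.factorial :=
    Nat.factorial_mul_descFactorial hkn'
  have e3 : (n - c).descFactorial k = ∏ i ∈ Finset.range k, (n - c - i) :=
    Nat.descFactorial_eq_prod_range _ _
  have e4 : n.descFactorial k = ∏ i ∈ Finset.range k, (n - i) :=
    Nat.descFactorial_eq_prod_range _ _
  have hb : ∀ i ∈ Finset.range k, ((n - i : ℕ) : ℝ) ≠ 0 := by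
    intro i hi
    rw [Finset.mem_range] at hi
    have : 0 < n - i := by omega
    positivity
  have hbprod : (∏ i ∈ Finset.range k, ((n - i : ℕ) : ℝ)) ≠ 0 :=
    Finset.prod_ne_zero_iff.mpr hb
  have hkf : (k.factorial : ℝ) ≠ 0 := by positivity
  have hnkf : ((n - k).factorial : ℝ) ≠ 0 := by positivity
  -- rewrite both sides
  have key1 : ((n - c).choose k : ℝ) * (k.factorial : ℝ) =
      ∏ i ∈ Finset.range k, ((n - (c + i) : ℕ) : ℝ) := by
    have := congrArg (fun x : ℕ => (x : ℝ)) (e1.symm.trans e3)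
    push_cast at this
    rw [mul_comm] at this
    rw [this]
    apply Finset.prod_congr rfl
    intro i _
    congr 1
    omega
  have key2 : (n.factorial : ℝ) =
      ((n - k).factorial : ℝ) * ∏ i ∈ Finset.range k, ((n - i : ℕ) : ℝ) := by
    have := congrArg (fun x : ℕ => (x : ℝ)) e2
    push_cast at this
    rw [← this, e4]
    push_cast
    ring
  rw [Finset.prod_div_distrib]
  rw [key2]
  rw [eq_div_iff (by positivity)]
  field_simp
  rw [← key1]
  ring

end KD

open KD

/-- For partitions `λ, μ` of `k`, with `D_n = n!/((n-k)!·∏ᵢ λᵢ!)`, the sequence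
`K_{(n-k,μ),(n-k,λ)} · dim (n-k,μ) / D_n` tends to `K_{μ,λ} · dim μ · (∏ᵢ λᵢ!)/k!` as
`n → ∞`.  Here `f n` encodes `K_{(n-k,μ),(n-k,λ)} · dim (n-k,μ)`, the shape `(n-k,μ)`
being characterized by its row lengths. -/
theorem kostka_dim_ratio_tendsto (k : ℕ) (lam mu : YoungDiagram)
    (hlam : lam.card = k) (hmu : mu.card = k)
    (f : ℕ → ℕ)
    (hf : ∀ n : ℕ, k + max (lam.rowLen 0) (mu.rowLen 0) ≤ n → ∀ mu' : YoungDiagram,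
      mu'.rowLen 0 = n - k → (∀ i : ℕ, mu'.rowLen (i + 1) = mu.rowLen i) →
      f n = kostka mu' (fun i => if i = 0 then n - k else lam.rowLen (i - 1)) * dimSYT mu') :
    Filter.Tendsto
      (fun n : ℕ => (f n : ℝ) /
        ((n.factorial : ℝ) / (((n - k).factorial : ℝ) *
          ∏ i ∈ Finset.range k, ((lam.rowLen i).factorial : ℝ))))
      Filter.atTop
      (nhds ((kostka mu (fun i => lam.rowLen i) : ℝ) * (dimSYT mu : ℝ) *
        (∏ i ∈ Finset.range k, ((lam.rowLen i).factorial : ℝ)) / (k.factorial : ℝ))) := by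
  classical
  set P : ℝ := ∏ i ∈ Finset.range k, ((lam.rowLen i).factorial : ℝ) with hP
  set K : ℕ := kostka mu (fun i => lam.rowLen i) with hK
  set d : ℕ := dimSYT mu with hd
  set c : ℕ := k + mu.rowLen 0 with hc
  have hPpos : 0 < P := Finset.prod_pos (fun i _ => by positivity)
  set D : ℕ → ℝ := fun n => (n.factorial : ℝ) / (((n - k).factorial : ℝ) * P) with hD
  have hDpos : ∀ n, 0 < D n := fun n => div_pos (by positivity) (by positivity)
  have hdcc : d = chainCount ⊥ mu k := by rw [hd, dimSYT, hmu]
  set target : ℝ := (K : ℝ) * (d : ℝ) * P / (k.factorial : ℝ) with htarget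
  -- eventual bounds on f
  have hbound : ∀ᶠ n in Filter.atTop,
      (K * d * ((n - c).choose k) : ℕ) ≤ f n ∧ f n ≤ (K * d * (n.choose k) : ℕ) := by
    filter_upwards [Filter.eventually_ge_atTop (k + max (lam.rowLen 0) (mu.rowLen 0) + c + 1)]
      with n hn
    have hmr : mu.rowLen 0 ≤ max (lam.rowLen 0) (mu.rowLen 0) := le_max_right _ _
    have hm : mu.rowLen 0 ≤ n - k := by omega
    have hfn : f n = K * chainCount ⊥ (cons (n - k) mu hm) n := by
      rw [hf n (by omega) (cons (n - k) mu hm) rowLen_cons_zero (fun i => rowLen_cons_succ)]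
      congr 1
      · rw [hK]
        exact kostka_cons hm _ _ (by simp) (fun i => by simp)
      · rw [dimSYT, card_cons, hmu, show n - k + k = n by omega]
    constructor
    · have hle := le_chainCount (k := k) (n := n) hmu (by omega) hm
      rw [← hc] at hle
      rw [hfn, hdcc]
      calc K * chainCount ⊥ mu k * (n - c).choose k
          = K * ((n - c).choose k * chainCount ⊥ mu k) := by ring
        _ ≤ K * chainCount ⊥ (cons (n - k) mu hm) n := Nat.mul_le_mul_left K hle
    · have hle := chainCount_le (k := k) (n := n) hmu hm
      rw [hfn, hdcc]
      calc K * chainCount ⊥ (cons (n - k) mu hm) n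
          ≤ K * (n.choose k * chainCount ⊥ mu k) := Nat.mul_le_mul_left K hle
        _ = K * chainCount ⊥ mu k * n.choose k := by ring
  -- limits of the bounding sequences
  have hPne : P ≠ 0 := ne_of_gt hPpos
  have hlow_eq : ∀ n : ℕ, ((K * d * ((n - c).choose k) : ℕ) : ℝ) / D n =
      ((K : ℝ) * (d : ℝ) * P) *
        (((n - c).choose k : ℝ) * ((n - k).factorial : ℝ) / (n.factorial : ℝ)) := by
    intro n
    have h1 : (n.factorial : ℝ) ≠ 0 := by positivity
    have h2 : ((n - k).factorial : ℝ) ≠ 0 := by positivity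
    rw [hD]
    push_cast
    field_simp
  have hlow : Filter.Tendsto (fun n : ℕ => ((K * d * ((n - c).choose k) : ℕ) : ℝ) / D n)
      Filter.atTop (nhds target) := by
    have h3 : Filter.Tendsto (fun n : ℕ => ((K : ℝ) * (d : ℝ) * P) *
        (((n - c).choose k : ℝ) * ((n - k).factorial : ℝ) / (n.factorial : ℝ)))
        Filter.atTop (nhds (((K : ℝ) * (d : ℝ) * P) * (1 / (k.factorial : ℝ)))) :=
      tendsto_const_nhds.mul (tendsto_choose_ratio c k)
    have h4 : (K : ℝ) * (d : ℝ) * P * (1 / (k.factorial : ℝ)) = target := by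
      rw [htarget]; ring
    rw [h4] at h3
    exact h3.congr (fun n => (hlow_eq n).symm)
  have hupp : Filter.Tendsto (fun n : ℕ => ((K * d * (n.choose k) : ℕ) : ℝ) / D n)
      Filter.atTop (nhds target) := by
    refine Filter.Tendsto.congr' ?_
      (tendsto_const_nhds : Filter.Tendsto (fun _ : ℕ => target) Filter.atTop (nhds target))
    filter_upwards [Filter.eventually_ge_atTop k] with n hn
    have hch : ((n.choose k : ℕ) : ℝ) * (k.factorial : ℝ) * (((n - k).factorial : ℕ) : ℝ) =
        (n.factorial : ℝ) := by
      exact_mod_cast congrArg (fun x : ℕ => (x : ℝ)) (Nat.choose_mul_factorial_mul_factorial hn)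
    have h1 : (n.factorial : ℝ) ≠ 0 := by positivity
    have h2 : ((n - k).factorial : ℝ) ≠ 0 := by positivity
    have h3 : (k.factorial : ℝ) ≠ 0 := by positivity
    rw [htarget, hD]
    push_cast
    field_simp
    linear_combination (-1 * (K : ℝ) * (d : ℝ)) * hch
  -- squeeze
  refine tendsto_of_tendsto_of_tendsto_of_le_of_le' hlow hupp ?_ ?_
  · filter_upwards [hbound] with n hn
    rw [div_eq_mul_inv, div_eq_mul_inv]
    exact mul_le_mul_of_nonneg_right (by exact_mod_cast hn.1) (inv_nonneg.mpr (hDpos n).le)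
  · filter_upwards [hbound] with n hn
    rw [div_eq_mul_inv, div_eq_mul_inv]
    exact mul_le_mul_of_nonneg_right (by exact_mod_cast hn.2) (inv_nonneg.mpr (hDpos n).le)
end

section
/- Let μ be a partition of k, and let 1^k denote the weight (1, 1, …, 1) with k parts. Then K_{(n−k,μ),(n−k,1^k)}·dim (n−k,μ) / (n!/(n−k)!) tends to (dim μ)²/k! as n → ∞; that is, for partitions of ℕ-type consisting of one growing first row and k singleton parts, the limiting spectral weights are the Plancherel weights (dim μ)²/k!. -/
open scoped BigOperators

namespace PlancherelAux

/-- Helper: identify `rowLen` from a membership characterization. -/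
lemma rowLen_eq_of (μ : YoungDiagram) (i r : ℕ) (h : ∀ j, (i, j) ∈ μ ↔ j < r) :
    μ.rowLen i = r := by
  rcases Nat.lt_trichotomy (μ.rowLen i) r with hlt | he | hgt
  · exfalso
    have := (h (μ.rowLen i)).2 hlt
    rw [YoungDiagram.mem_iff_lt_rowLen] at this
    omega
  · exact he
  · exfalso
    have := (h r).1 (by rw [YoungDiagram.mem_iff_lt_rowLen]; omega)
    omega

/-- The cells of `glue m d`. -/
def glueCells (m : ℕ) (d : YoungDiagram) : Finset (ℕ × ℕ) :=
  ((Finset.range (max m (d.rowLen 0))).map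
      ⟨fun j => (0, j), fun a b h => by simpa using h⟩)
    ∪ d.cells.map ⟨fun c => (c.1 + 1, c.2), fun a b h => by
        simp only [Prod.mk.injEq] at h; exact Prod.ext (by omega) h.2⟩

lemma mem_glueCells {m : ℕ} {d : YoungDiagram} {i j : ℕ} :
    (i, j) ∈ glueCells m d ↔
      (i = 0 ∧ j < max m (d.rowLen 0)) ∨ (∃ i', i = i' + 1 ∧ (i', j) ∈ d) := by
  simp only [glueCells, Finset.mem_union, Finset.mem_map, Finset.mem_range,
    Function.Embedding.coeFn_mk, Prod.mk.injEq]
  dsimp only [DFunLike.coe]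
  simp only [Prod.mk.injEq]
  constructor
  · rintro (⟨x, hx, h0, hxj⟩ | ⟨⟨a, b⟩, hc, h1, h2⟩)
    · exact Or.inl ⟨h0.symm, by omega⟩
    · exact Or.inr ⟨a, by omega, by simpa [← h2] using hc⟩
  · rintro (⟨rfl, hj⟩ | ⟨i', rfl, hc⟩)
    · exact Or.inl ⟨j, hj, rfl, rfl⟩
    · exact Or.inr ⟨(i', j), hc, rfl, rfl⟩

/-- The diagram with first row of length `max m (d.rowLen 0)` on top of `d` shifted down. -/
def glue (m : ℕ) (d : YoungDiagram) : YoungDiagram where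
  cells := glueCells m d
  isLowerSet := by
    rintro ⟨i, j⟩ ⟨a, b⟩ ⟨h1, h2⟩ hm
    simp only [Finset.mem_coe, mem_glueCells] at hm ⊢
    simp only at h1 h2
    rcases hm with ⟨rfl, hj⟩ | ⟨i', rfl, hc⟩
    · obtain rfl : a = 0 := by omega
      exact Or.inl ⟨rfl, by omega⟩
    · rcases Nat.eq_zero_or_pos a with rfl | ha
      · left
        refine ⟨rfl, ?_⟩
        have hj : j < d.rowLen i' := by
          rw [← YoungDiagram.mem_iff_lt_rowLen]; exact hc
        have := d.rowLen_anti 0 i' (Nat.zero_le _)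
        omega
      · right
        exact ⟨a - 1, by omega, d.up_left_mem (by omega) h2 hc⟩

lemma mem_glue_zero {m : ℕ} {d : YoungDiagram} {j : ℕ} :
    (0, j) ∈ glue m d ↔ j < max m (d.rowLen 0) := by
  show (0, j) ∈ glueCells m d ↔ _
  rw [mem_glueCells]
  simp

lemma mem_glue_succ {m : ℕ} {d : YoungDiagram} {i j : ℕ} :
    (i + 1, j) ∈ glue m d ↔ (i, j) ∈ d := by
  show (i + 1, j) ∈ glueCells m d ↔ _
  rw [mem_glueCells]
  constructor
  · rintro (⟨h, _⟩ | ⟨i', h, hc⟩)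
    · omega
    · obtain rfl : i' = i := by omega
      exact hc
  · intro h; exact Or.inr ⟨i, rfl, h⟩

lemma rowLen_glue_zero (m : ℕ) (d : YoungDiagram) :
    (glue m d).rowLen 0 = max m (d.rowLen 0) :=
  rowLen_eq_of _ _ _ fun _ => mem_glue_zero

lemma rowLen_glue_succ (m : ℕ) (d : YoungDiagram) (i : ℕ) :
    (glue m d).rowLen (i + 1) = d.rowLen i :=
  rowLen_eq_of _ _ _ fun j => by rw [mem_glue_succ, YoungDiagram.mem_iff_lt_rowLen]

lemma card_glue (m : ℕ) (d : YoungDiagram) :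
    (glue m d).card = max m (d.rowLen 0) + d.card := by
  show (glueCells m d).card = _
  rw [glueCells, Finset.card_union_of_disjoint, Finset.card_map, Finset.card_map,
    Finset.card_range]
  rw [Finset.disjoint_left]
  rintro ⟨a, b⟩ h1 h2
  simp only [Finset.mem_map, Finset.mem_range, Function.Embedding.coeFn_mk,
    Prod.mk.injEq] at h1 h2
  obtain ⟨x, _, hx, _⟩ := h1
  obtain ⟨c, _, hc, _⟩ := h2

lemma card_glue' {m : ℕ} {d : YoungDiagram} (h : d.rowLen 0 ≤ m) :
    (glue m d).card = m + d.card := by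
  rw [card_glue, max_eq_left h]

lemma glue_mono_left {a b : ℕ} (hab : a ≤ b) (d : YoungDiagram) : glue a d ≤ glue b d := by
  intro c hc
  rcases c with ⟨i, j⟩
  rcases i with _ | i
  · rw [mem_glue_zero] at hc ⊢; omega
  · rw [mem_glue_succ] at hc ⊢; exact hc

/-- rowLen is monotone in the diagram. -/
lemma rowLen_mono {d d' : YoungDiagram} (h : d ≤ d') (i : ℕ) : d.rowLen i ≤ d'.rowLen i := by
  by_contra hcon
  push_neg at hcon
  have h1 : (i, d'.rowLen i) ∈ d := by rw [YoungDiagram.mem_iff_lt_rowLen]; omega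
  have h2 := h h1
  rw [YoungDiagram.mem_iff_lt_rowLen] at h2
  omega

lemma glue_mono_right (a : ℕ) {d d' : YoungDiagram} (h : d ≤ d') : glue a d ≤ glue a d' := by
  intro c hc
  rcases c with ⟨i, j⟩
  rcases i with _ | i
  · rw [mem_glue_zero] at hc ⊢
    have := rowLen_mono h 0
    omega
  · rw [mem_glue_succ] at hc ⊢
    exact h hc

/-- The part of a Young diagram below the first row, shifted up. -/
def lowp (μ : YoungDiagram) : YoungDiagram where
  cells := (μ.cells.filter (fun c => c.1 ≠ 0)).image (fun c => (c.1 - 1, c.2))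
  isLowerSet := by
    rintro ⟨i, j⟩ ⟨a, b⟩ ⟨h1, h2⟩ hm
    simp only [Finset.coe_image, Set.mem_image, Finset.mem_coe, Finset.mem_filter] at hm ⊢
    obtain ⟨⟨ci, cj⟩, ⟨hc, hne⟩, heq⟩ := hm
    simp only [Prod.mk.injEq] at heq h1 h2 ⊢
    simp only at hne
    refine ⟨(a + 1, b), ⟨?_, by simp⟩, by simp, by simp⟩
    exact μ.up_left_mem (by omega) (by omega) hc


lemma mem_lowp {μ : YoungDiagram} {i j : ℕ} : (i, j) ∈ lowp μ ↔ (i + 1, j) ∈ μ := by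
  simp only [lowp, ← YoungDiagram.mem_cells, Finset.mem_image, Finset.mem_filter, Prod.mk.injEq]
  constructor
  · rintro ⟨⟨a, b⟩, ⟨hc, hne⟩, h1, h2⟩
    simp only at hne h1 h2
    have ha : a = i + 1 := by omega
    subst ha; subst h2; exact hc
  · intro h
    exact ⟨(i + 1, j), ⟨h, by simp⟩, by simp, by simp⟩

lemma rowLen_lowp (μ : YoungDiagram) (i : ℕ) : (lowp μ).rowLen i = μ.rowLen (i + 1) :=
  rowLen_eq_of _ _ _ fun j => by rw [mem_lowp, YoungDiagram.mem_iff_lt_rowLen]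

lemma lowp_glue (m : ℕ) (d : YoungDiagram) : lowp (glue m d) = d := by
  ext ⟨i, j⟩
  rw [YoungDiagram.mem_cells, YoungDiagram.mem_cells, mem_lowp, mem_glue_succ]

lemma glue_lowp_eq (μ : YoungDiagram) : glue (μ.rowLen 0) (lowp μ) = μ := by
  ext ⟨i, j⟩
  rw [YoungDiagram.mem_cells, YoungDiagram.mem_cells]
  rcases i with _ | i
  · rw [mem_glue_zero, YoungDiagram.mem_iff_lt_rowLen]
    rw [rowLen_lowp]
    have := YoungDiagram.rowLen_anti μ 0 (0 + 1) (by omega)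
    omega
  · rw [mem_glue_succ, mem_lowp]

lemma lowp_mono {μ ν : YoungDiagram} (h : μ ≤ ν) : lowp μ ≤ lowp ν := by
  rintro ⟨i, j⟩ hc
  rw [mem_lowp] at hc ⊢
  exact h hc

lemma eq_of_le_of_card_le {μ ν : YoungDiagram} (h : μ ≤ ν) (hc : ν.card ≤ μ.card) : μ = ν := by
  ext c
  have := Finset.eq_of_subset_of_card_le (YoungDiagram.cells_subset_iff.2 h) hc
  rw [this]

lemma card_mono {μ ν : YoungDiagram} (h : μ ≤ ν) : μ.card ≤ ν.card :=
  Finset.card_le_card (YoungDiagram.cells_subset_iff.2 h)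

/-- A diagram is determined by its first-row length together with its lower part. -/
lemma eq_of_lowp_rowLen {μ ν : YoungDiagram} (h1 : lowp μ = lowp ν)
    (h2 : μ.rowLen 0 = ν.rowLen 0) : μ = ν := by
  rw [← glue_lowp_eq μ, ← glue_lowp_eq ν, h1, h2]

lemma card_eq_rowLen_add_card_lowp (μ : YoungDiagram) :
    μ.card = μ.rowLen 0 + (lowp μ).card := by
  conv_lhs => rw [← glue_lowp_eq μ]
  rw [card_glue']
  rw [rowLen_lowp]
  exact YoungDiagram.rowLen_anti μ 0 (0 + 1) (by omega)


lemma lowp_bot : lowp ⊥ = ⊥ := by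
  ext ⟨i, j⟩
  rw [YoungDiagram.mem_cells, YoungDiagram.mem_cells, mem_lowp]
  simp

lemma eq_bot_of_card_eq_zero {μ : YoungDiagram} (h : μ.card = 0) : μ = ⊥ := by
  ext c
  rw [Finset.card_eq_zero] at h
  rw [h, YoungDiagram.cells_bot]

/-- The one-step dichotomy: adding one cell either grows the first row or the lower part. -/
lemma step_dichotomy {μ ν : YoungDiagram} (hle : μ ≤ ν) (hc : ν.card = μ.card + 1) :
    (lowp ν = lowp μ ∧ ν.rowLen 0 = μ.rowLen 0 + 1) ∨
    (ν.rowLen 0 = μ.rowLen 0 ∧ (lowp ν).card = (lowp μ).card + 1) := by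
  have h1 := card_eq_rowLen_add_card_lowp μ
  have h2 := card_eq_rowLen_add_card_lowp ν
  have h3 := rowLen_mono hle 0
  have h4 := card_mono (lowp_mono hle)
  rcases Nat.lt_or_ge (μ.rowLen 0) (ν.rowLen 0) with h | h
  · left
    have hcl : (lowp ν).card = (lowp μ).card := by omega
    exact ⟨(eq_of_le_of_card_le (lowp_mono hle) hcl.le).symm, by omega⟩
  · right
    omega

lemma glue_bot_zero : glue 0 ⊥ = ⊥ := by
  ext ⟨i, j⟩
  rcases i with _ | i
  · rw [YoungDiagram.mem_cells, YoungDiagram.mem_cells, mem_glue_zero]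
    have : (⊥ : YoungDiagram).rowLen 0 = 0 := by
      refine rowLen_eq_of _ _ _ fun j => ?_
      simp [YoungDiagram.notMem_bot]
    rw [this]
    simp [YoungDiagram.notMem_bot]
  · rw [YoungDiagram.mem_cells, YoungDiagram.mem_cells, mem_glue_succ]
    simp [YoungDiagram.notMem_bot]

/-- The type of saturated chains from `⊥` to `ν` of length `m`. -/
def ChainTo (m : ℕ) (ν : YoungDiagram) :=
  {t : Fin (m + 1) → YoungDiagram //
    t 0 = ⊥ ∧ t (Fin.last m) = ν ∧
    ∀ i : Fin m, t i.castSucc ≤ t i.succ ∧ (t i.succ).card = (t i.castSucc).card + 1}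

lemma chain_mono {m : ℕ} {ν : YoungDiagram} (t : ChainTo m ν) : Monotone t.1 :=
  Fin.monotone_iff_le_succ.2 fun i => (t.2.2.2 i).1

lemma chain_le {m : ℕ} {ν : YoungDiagram} (t : ChainTo m ν) (i : Fin (m + 1)) : t.1 i ≤ ν := by
  calc t.1 i ≤ t.1 (Fin.last m) := chain_mono t (Fin.le_last i)
    _ = ν := t.2.2.1

lemma chain_card {m : ℕ} {ν : YoungDiagram} (t : ChainTo m ν) (i : Fin (m + 1)) :
    (t.1 i).card = i.val := by
  induction i using Fin.induction with
  | zero => rw [t.2.1]; simp [YoungDiagram.cells_bot]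
  | succ i ih =>
    rw [(t.2.2.2 i).2, ih]
    simp

instance chainFinite (m : ℕ) (ν : YoungDiagram) : Finite (ChainTo m ν) := by
  have : Function.Injective (fun (t : ChainTo m ν) =>
      (fun i (c : ↥ν.cells) => decide ((c : ℕ × ℕ) ∈ t.1 i) : Fin (m+1) → ↥ν.cells → Bool)) := by
    intro t t' h
    apply Subtype.ext
    funext i
    ext c
    rw [YoungDiagram.mem_cells, YoungDiagram.mem_cells]
    constructor
    · intro hc
      have hcv : c ∈ ν.cells := chain_le t i hc
      have := congrFun (congrFun h i) ⟨c, hcv⟩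
      simp only [decide_eq_decide] at this
      exact this.1 hc
    · intro hc
      have hcv : c ∈ ν.cells := chain_le t' i hc
      have := congrFun (congrFun h i) ⟨c, hcv⟩
      simp only [decide_eq_decide] at this
      exact this.2 hc
  exact Finite.of_injective _ this

lemma card_filter_le_val (n c : ℕ) :
    ((Finset.univ : Finset (Fin n)).filter (fun x => c ≤ x.val)).card = n - c := by
  have h1 : ((Finset.univ : Finset (Fin n)).filter (fun x => c ≤ x.val)).card
      = (((Finset.univ : Finset (Fin n)).map Fin.valEmbedding).filter (fun x => c ≤ x)).card := by
    rw [Finset.filter_map, Finset.card_map]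
    rfl
  rw [h1, Fin.map_valEmbedding_univ]
  have : (Finset.Iio n) = Finset.Ico 0 n := by
    ext x; simp
  rw [this, Finset.Ico_filter_le, Nat.card_Ico]
  simp

/-- Counting `k`-subsets of `Fin n`. -/
lemma card_setsK (n k : ℕ) :
    Nat.card {S : Finset (Fin n) // S.card = k} = n.choose k := by
  have e : {S : Finset (Fin n) // S.card = k} ≃
      ↥(Finset.powersetCard k (Finset.univ : Finset (Fin n))) :=
    Equiv.subtypeEquivRight (by
      intro S
      simp [Finset.mem_powersetCard_univ])
  rw [Nat.card_congr e, Nat.card_eq_finsetCard, Finset.card_powersetCard, Finset.card_univ,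
    Fintype.card_fin]

/-- Counting `k`-subsets of `Fin n` with all elements `≥ c`. -/
lemma card_setsK' (n k c : ℕ) :
    Nat.card {S : Finset (Fin n) // S.card = k ∧ ∀ a ∈ S, c ≤ a.val} = (n - c).choose k := by
  have e : {S : Finset (Fin n) // S.card = k ∧ ∀ a ∈ S, c ≤ a.val} ≃
      ↥(Finset.powersetCard k ((Finset.univ : Finset (Fin n)).filter (fun x => c ≤ x.val))) :=
    Equiv.subtypeEquivRight (by
      intro S
      rw [Finset.mem_powersetCard]
      constructor
      · rintro ⟨h1, h2⟩
        exact ⟨fun a ha => by simp [h2 a ha], h1⟩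
      · rintro ⟨h1, h2⟩
        refine ⟨h2, fun a ha => ?_⟩
        have := h1 ha
        simp only [Finset.mem_filter] at this
        exact this.2)
  rw [Nat.card_congr e, Nat.card_eq_finsetCard, Finset.card_powersetCard, card_filter_le_val]

/-- Discrete intermediate value: a `ℕ`-valued function starting at 0 with steps `≤ +1`
attains every value up to `G n`. -/
lemma discrete_ivt (G : ℕ → ℕ) (h0 : G 0 = 0) (hstep : ∀ i, G (i + 1) ≤ G i + 1) :
    ∀ n j, j ≤ G n → ∃ i, i ≤ n ∧ G i = j := by
  intro n
  induction n with
  | zero => intro j hj; exact ⟨0, le_rfl, by omega⟩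
  | succ n ih =>
    intro j hj
    rcases Nat.lt_or_ge (G n) j with h | h
    rotate_left
    · obtain ⟨i, hi, hGi⟩ := ih j h
      exact ⟨i, by omega, hGi⟩
    · have := hstep n
      exact ⟨n + 1, le_rfl, by omega⟩

/-- Counting steps: the number of indices `i < n` where `G` jumps equals `G n - G 0`. -/
lemma count_jumps (G : ℕ → ℕ) (hstep : ∀ i, G i ≤ G (i + 1) ∧ G (i + 1) ≤ G i + 1) :
    ∀ n, ((Finset.range n).filter (fun i => G (i + 1) = G i + 1)).card = G n - G 0 := by
  intro n
  induction n with
  | zero => simp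
  | succ n ih =>
    rw [Finset.range_add_one, Finset.filter_insert]
    have h1 := (hstep n).1
    have h2 := (hstep n).2
    have hmono : G 0 ≤ G n := by
      clear ih h1 h2
      induction n with
      | zero => exact le_rfl
      | succ n ih2 => exact le_trans ih2 (hstep n).1
    by_cases h : G (n + 1) = G n + 1
    · rw [if_pos h, Finset.card_insert_of_notMem (by simp), ih]
      omega
    · rw [if_neg h, ih]
      omega

/-! ### Monotonicity of SSYT entries -/

lemma ssyt_mono {ν : YoungDiagram} (T : SemistandardYoungTableau ν) {a b i j : ℕ}
    (ha : a ≤ i) (hb : b ≤ j) (hc : (i, j) ∈ ν) : T a b ≤ T i j :=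
  le_trans (T.row_weak_of_le hb (ν.up_left_mem ha le_rfl hc)) (T.col_weak ha hc)

section KostkaGlue

variable {mu : YoungDiagram} {m : ℕ}

lemma T_pos (T : SemistandardYoungTableau (glue m mu)) {i j : ℕ}
    (h : (i + 1, j) ∈ glue m mu) : 1 ≤ T (i + 1) j := by
  have h0 : (0, j) ∈ glue m mu := (glue m mu).up_left_mem (by omega) le_rfl h
  have := T.col_strict (show 0 < i + 1 by omega) h
  omega

/-- The weight function for the Kostka number in question. -/
def wt (m k : ℕ) : ℕ → ℕ := fun i => if i = 0 then m else if i ≤ k then 1 else 0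

/-- `KT` is the subtype appearing in the definition of the Kostka number. -/
def KT (mu : YoungDiagram) (m : ℕ) :=
  {T : SemistandardYoungTableau (glue m mu) //
    ∀ i : ℕ, ((glue m mu).cells.filter fun c => T c.1 c.2 = i).card = wt m mu.card i}

variable (hm : mu.rowLen 0 ≤ m)

lemma T_le (T : KT mu m) {c : ℕ × ℕ} (hc : c ∈ (glue m mu).cells) :
    T.1 c.1 c.2 ≤ mu.card := by
  by_contra hcon
  push_neg at hcon
  set v := T.1 c.1 c.2 with hv
  have h1 : c ∈ (glue m mu).cells.filter fun c => T.1 c.1 c.2 = v :=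
    Finset.mem_filter.2 ⟨hc, rfl⟩
  have h2 := T.2 v
  rw [wt, if_neg (by omega), if_neg (by omega)] at h2
  rw [Finset.card_eq_zero] at h2
  rw [h2] at h1
  exact absurd h1 (Finset.notMem_empty _)

include hm in
lemma row0_zero (T : KT mu m) {j : ℕ} (hj : (0, j) ∈ glue m mu) : T.1 0 j = 0 := by
  have hsub : ((glue m mu).cells.filter fun c => T.1 c.1 c.2 = 0) ⊆ (glue m mu).row 0 := by
    intro c hc
    rw [Finset.mem_filter] at hc
    rw [YoungDiagram.mem_row_iff]
    refine ⟨hc.1, ?_⟩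
    by_contra hcon
    obtain ⟨i, j'⟩ := c
    simp only at hcon
    rcases i with _ | i
    · exact hcon rfl
    · have hmem : (i + 1, j') ∈ glue m mu := (YoungDiagram.mem_cells _).1 hc.1
      have := T_pos T.1 hmem
      have h0 : T.1 (i + 1) j' = 0 := hc.2
      omega
  have hcard : ((glue m mu).cells.filter fun c => T.1 c.1 c.2 = 0).card = m := by
    have := T.2 0
    rwa [wt, if_pos rfl] at this
  have hrow : ((glue m mu).row 0).card = m := by
    rw [← YoungDiagram.rowLen_eq_card, rowLen_glue_zero, max_eq_left hm]
  have heq := Finset.eq_of_subset_of_card_le hsub (by rw [hcard, hrow])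
  have hmem : (0, j) ∈ (glue m mu).cells.filter fun c => T.1 c.1 c.2 = 0 := by
    rw [heq, YoungDiagram.mem_row_iff]
    exact ⟨hj, rfl⟩
  exact (Finset.mem_filter.1 hmem).2

include hm in
lemma lower_count (T : KT mu m) {a : ℕ} (ha : a ≠ 0) :
    (mu.cells.filter fun c => T.1 (c.1 + 1) c.2 = a).card
      = ((glue m mu).cells.filter fun c => T.1 c.1 c.2 = a).card := by
  apply Finset.card_bij (fun c _ => (c.1 + 1, c.2))
  · rintro ⟨i, j⟩ hc
    rw [Finset.mem_filter] at hc ⊢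
    exact ⟨(YoungDiagram.mem_cells _).2 (mem_glue_succ.2 ((YoungDiagram.mem_cells _).1 hc.1)),
      hc.2⟩
  · rintro ⟨i, j⟩ _ ⟨i', j'⟩ _ h
    simp only [Prod.mk.injEq] at h
    exact Prod.ext (by omega) h.2
  · rintro ⟨i, j⟩ hc
    rw [Finset.mem_filter] at hc
    rcases i with _ | i
    · exact absurd hc.2 (by rw [row0_zero hm T hc.1]; omega)
    · refine ⟨(i, j), Finset.mem_filter.2 ⟨?_, hc.2⟩, rfl⟩
      exact (YoungDiagram.mem_cells _).2 (mem_glue_succ.1 ((YoungDiagram.mem_cells _).1 hc.1))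

/-- The chain associated to a tableau: `j`-th diagram is the cells of `mu` whose (shifted)
entry in `T` is at most `j`. -/
def sChain (T : SemistandardYoungTableau (glue m mu)) (j : ℕ) : YoungDiagram where
  cells := mu.cells.filter fun c => T (c.1 + 1) c.2 ≤ j
  isLowerSet := by
    rintro ⟨i2, j2⟩ ⟨a, b⟩ ⟨h1, h2⟩ hmem
    simp only [Finset.mem_coe, Finset.mem_filter] at hmem ⊢
    simp only at h1 h2
    obtain ⟨hcell, hval⟩ := hmem
    refine ⟨mu.up_left_mem h1 h2 hcell, le_trans ?_ hval⟩
    exact ssyt_mono T (by omega) h2 (mem_glue_succ.2 ((YoungDiagram.mem_cells _).1 hcell))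

lemma mem_sChain {T : SemistandardYoungTableau (glue m mu)} {j : ℕ} {c : ℕ × ℕ} :
    c ∈ (sChain T j).cells ↔ c ∈ mu.cells ∧ T (c.1 + 1) c.2 ≤ j :=
  Finset.mem_filter

lemma sChain_zero (T : SemistandardYoungTableau (glue m mu)) : sChain T 0 = ⊥ := by
  ext ⟨i, j⟩
  rw [mem_sChain, YoungDiagram.cells_bot]
  simp only [Finset.notMem_empty, iff_false, not_and]
  intro hc
  have := T_pos T (mem_glue_succ.2 ((YoungDiagram.mem_cells _).1 hc))
  omega

lemma sChain_last (T : KT mu m) : sChain T.1 mu.card = mu := by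
  ext c
  rw [mem_sChain]
  refine ⟨fun h => h.1, fun h => ⟨h, ?_⟩⟩
  exact T_le T (by
    rw [YoungDiagram.mem_cells] at h ⊢
    exact mem_glue_succ.2 (by exact h))

include hm in
lemma sChain_step (T : KT mu m) (j : ℕ) (hj : j < mu.card) :
    sChain T.1 j ≤ sChain T.1 (j + 1) ∧
      (sChain T.1 (j + 1)).card = (sChain T.1 j).card + 1 := by
  constructor
  · intro c hc
    have hc' : c ∈ (sChain T.1 j).cells := hc
    rw [mem_sChain] at hc'
    show c ∈ (sChain T.1 (j + 1)).cells
    rw [mem_sChain]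
    exact ⟨hc'.1, by omega⟩
  · show (Finset.card _) = (Finset.card _) + 1
    have hsplit : (sChain T.1 (j + 1)).cells
        = (sChain T.1 j).cells ∪ (mu.cells.filter fun c => T.1 (c.1 + 1) c.2 = j + 1) := by
      ext c
      rw [mem_sChain, Finset.mem_union, mem_sChain, Finset.mem_filter]
      by_cases hA : c ∈ mu.cells <;>
        simp only [hA, true_and, false_and, false_or, or_false] <;>
        first | omega | simp
    rw [hsplit, Finset.card_union_of_disjoint]
    · congr 1
      rw [lower_count hm T (by omega)]
      have := T.2 (j + 1)
      rwa [wt, if_neg (by omega), if_pos (by omega)] at this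
    · rw [Finset.disjoint_right]
      rintro c hc1 hc2
      rw [Finset.mem_filter] at hc1
      rw [mem_sChain] at hc2
      omega

end KostkaGlue

section KostkaGlue2

variable {mu : YoungDiagram} {m : ℕ}

/-- The predicate "cell `c` belongs to the `min a (mu.card)`-th diagram of the chain `s`". -/
def eP (s : ChainTo mu.card mu) (c : ℕ × ℕ) (a : ℕ) : Prop :=
  c ∈ s.1 ⟨min a mu.card, by omega⟩

instance (s : ChainTo mu.card mu) (c : ℕ × ℕ) : DecidablePred (eP s c) := fun a => by
  unfold eP; infer_instance

lemma minFin_eq (k a : ℕ) (h : a ≤ k) : (⟨min a k, by omega⟩ : Fin (k + 1)) = ⟨a, by omega⟩ := by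
  ext; simp [min_eq_left h]

lemma eP_top (s : ChainTo mu.card mu) {c : ℕ × ℕ} (hc : c ∈ mu.cells) : eP s c mu.card := by
  unfold eP
  have h1 : (⟨min mu.card mu.card, by omega⟩ : Fin (mu.card + 1)) = Fin.last mu.card := by
    ext; simp [Fin.last]
  rw [h1, s.2.2.1]
  try exact hc

lemma eP_exists (s : ChainTo mu.card mu) {c : ℕ × ℕ} (hc : c ∈ mu.cells) : ∃ a, eP s c a :=
  ⟨mu.card, eP_top s hc⟩

/-- The entry value of cell `c`: the first time `c` appears in the chain `s`. -/
noncomputable def eV (s : ChainTo mu.card mu) (c : ℕ × ℕ) : ℕ :=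
  if h : c ∈ mu.cells then Nat.find (eP_exists s h) else 0

lemma eV_le (s : ChainTo mu.card mu) {c : ℕ × ℕ} (hc : c ∈ mu.cells) : eV s c ≤ mu.card := by
  rw [eV, dif_pos hc]
  exact Nat.find_le (eP_top s hc)

lemma eV_mem_iff (s : ChainTo mu.card mu) {c : ℕ × ℕ} (hc : c ∈ mu.cells)
    (j : Fin (mu.card + 1)) : c ∈ s.1 j ↔ eV s c ≤ j.val := by
  constructor
  · intro hj
    rw [eV, dif_pos hc]
    refine Nat.find_le ?_
    unfold eP
    rw [minFin_eq _ _ (by omega)]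
    have hjj : (⟨j.val, by omega⟩ : Fin (mu.card + 1)) = j := Fin.ext rfl
    rw [hjj]
    exact hj
  · intro hj
    have hspec := Nat.find_spec (eP_exists s hc)
    rw [eV, dif_pos hc] at hj
    unfold eP at hspec
    have hle : (⟨min (Nat.find (eP_exists s hc)) mu.card, by omega⟩ : Fin (mu.card + 1)) ≤ j := by
      rw [Fin.le_def]
      simp only
      omega
    exact YoungDiagram.cells_subset_iff.2 (chain_mono s hle) hspec

lemma eV_pos (s : ChainTo mu.card mu) {c : ℕ × ℕ} (hc : c ∈ mu.cells) : 1 ≤ eV s c := by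
  rcases Nat.eq_zero_or_pos (eV s c) with h0 | h
  · exfalso
    have hmem : c ∈ s.1 0 := (eV_mem_iff s hc 0).2 (by omega)
    rw [s.2.1] at hmem
    exact YoungDiagram.notMem_bot _ hmem
  · exact h

lemma eV_mono (s : ChainTo mu.card mu) {a b i j : ℕ} (ha : a ≤ i) (hb : b ≤ j)
    (hc : (i, j) ∈ mu.cells) : eV s (a, b) ≤ eV s (i, j) := by
  have hc' : (a, b) ∈ mu.cells := mu.up_left_mem ha hb hc
  have h1 : (i, j) ∈ s.1 ⟨eV s (i, j), by have := eV_le s hc; omega⟩ := by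
    rw [eV_mem_iff s hc]
  have h2 : (a, b) ∈ s.1 ⟨eV s (i, j), by have := eV_le s hc; omega⟩ :=
    (s.1 _).up_left_mem ha hb h1
  rw [eV_mem_iff s hc'] at h2
  exact h2

lemma step_singleton (s : ChainTo mu.card mu) (b : Fin mu.card) {x y : ℕ × ℕ}
    (hx : x ∈ (s.1 b.succ).cells \ (s.1 b.castSucc).cells)
    (hy : y ∈ (s.1 b.succ).cells \ (s.1 b.castSucc).cells) : x = y := by
  have hsub : (s.1 b.castSucc).cells ⊆ (s.1 b.succ).cells :=
    YoungDiagram.cells_subset_iff.2 (s.2.2.2 b).1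
  have hcard : ((s.1 b.succ).cells \ (s.1 b.castSucc).cells).card = 1 := by
    rw [Finset.card_sdiff_of_subset hsub]
    have h1 := chain_card s b.succ
    have h2 := chain_card s b.castSucc
    have h3 : b.succ.val = b.val + 1 := rfl
    have h4 : b.castSucc.val = b.val := rfl
    unfold YoungDiagram.card at h1 h2
    omega
  exact Finset.card_le_one.1 (le_of_eq hcard) x hx y hy

lemma eV_strict (s : ChainTo mu.card mu) {i j : ℕ} (hc : (i + 1, j) ∈ mu.cells) :
    eV s (i, j) < eV s (i + 1, j) := by
  have hc' : (i, j) ∈ mu.cells := mu.up_left_mem (by omega) le_rfl hc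
  set a := eV s (i + 1, j) with hav
  have ha1 : 1 ≤ a := eV_pos s hc
  have ha2 : a ≤ mu.card := eV_le s hc
  set b : Fin mu.card := ⟨a - 1, by omega⟩ with hb
  have hsv : b.succ = (⟨a, by omega⟩ : Fin (mu.card + 1)) := by ext; simp [hb]; omega
  have hcv : b.castSucc = (⟨a - 1, by omega⟩ : Fin (mu.card + 1)) := by ext; simp [hb]
  have mem1 : (i + 1, j) ∈ s.1 b.succ := by
    rw [eV_mem_iff s hc, hsv]
  have nmem1 : (i + 1, j) ∉ s.1 b.castSucc := by
    rw [eV_mem_iff s hc, hcv]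
    simp only
    omega
  have mem2 : (i, j) ∈ s.1 b.succ := (s.1 b.succ).up_left_mem (by omega) le_rfl mem1
  by_cases h : (i, j) ∈ s.1 b.castSucc
  · rw [eV_mem_iff s hc', hcv] at h
    simp only at h
    omega
  · exfalso
    have := step_singleton s b
      (Finset.mem_sdiff.2 ⟨mem2, h⟩) (Finset.mem_sdiff.2 ⟨mem1, nmem1⟩)
    simp only [Prod.mk.injEq] at this
    omega

/-- The tableau associated to a chain. -/
noncomputable def Tof (s : ChainTo mu.card mu) : SemistandardYoungTableau (glue m mu) where
  entry i j := match i with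
    | 0 => 0
    | Nat.succ i' => if (i', j) ∈ mu.cells then eV s (i', j) else 0
  row_weak' := by
    intro i j1 j2 hj hcell
    rcases i with _ | i'
    · exact le_rfl
    · have h2 : (i', j2) ∈ mu.cells := mem_glue_succ.1 hcell
      have h1 : (i', j1) ∈ mu.cells := mu.up_left_mem le_rfl (by omega) h2
      simp only [h1, h2, if_pos]
      exact eV_mono s le_rfl (by omega) h2
  col_strict' := by
    intro i1 i2 j hi hcell
    rcases i2 with _ | i2'
    · omega
    · have h2 : (i2', j) ∈ mu.cells := mem_glue_succ.1 hcell
      rcases i1 with _ | i1'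
      · simp only [h2, if_pos]
        exact eV_pos s h2
      · have hlt : i1' < i2' := by omega
        have h1 : (i1', j) ∈ mu.cells := mu.up_left_mem (by omega) le_rfl h2
        simp only [h1, h2, if_pos]
        have h3 : (i2' - 1, j) ∈ mu.cells := mu.up_left_mem (by omega) le_rfl h2
        have h4 : eV s (i1', j) ≤ eV s (i2' - 1, j) := eV_mono s (by omega) le_rfl h3
        have h5 : eV s (i2' - 1, j) < eV s (i2' - 1 + 1, j) := by
          refine eV_strict s ?_
          have : i2' - 1 + 1 = i2' := by omega
          rw [this]
          exact h2
        have : i2' - 1 + 1 = i2' := by omega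
        rw [this] at h5
        omega
  zeros' := by
    intro i j hcell
    rcases i with _ | i'
    · rfl
    · have : (i', j) ∉ mu.cells := fun h => hcell (mem_glue_succ.2 h)
      simp only [this, if_neg]
      simp

lemma Tof_apply_succ (s : ChainTo mu.card mu) (i j : ℕ) :
    (Tof (m := m) s) (i + 1) j = if (i, j) ∈ mu.cells then eV s (i, j) else 0 := rfl

lemma Tof_apply_zero (s : ChainTo mu.card mu) (j : ℕ) : (Tof (m := m) s) 0 j = 0 := rfl

variable (hm : mu.rowLen 0 ≤ m)

include hm in
lemma Tof_weight (s : ChainTo mu.card mu) (a : ℕ) :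
    ((glue m mu).cells.filter fun c => (Tof (m := m) s) c.1 c.2 = a).card = wt m mu.card a := by
  rcases Nat.eq_zero_or_pos a with rfl | hapos
  · rw [wt, if_pos rfl]
    have heq : ((glue m mu).cells.filter fun c => (Tof (m := m) s) c.1 c.2 = 0)
        = (glue m mu).row 0 := by
      ext ⟨i, j⟩
      rw [Finset.mem_filter, YoungDiagram.mem_row_iff]
      rcases i with _ | i'
      · simp [Tof_apply_zero]
      · simp only [YoungDiagram.mem_cells]
        constructor
        · rintro ⟨h1, h2⟩
          have h2' : (Tof (m := m) s) (i' + 1) j = 0 := h2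
          rw [Tof_apply_succ, if_pos (show (i', j) ∈ mu.cells from mem_glue_succ.1 h1)] at h2'
          have := eV_pos s (show (i', j) ∈ mu.cells from mem_glue_succ.1 h1)
          omega
        · rintro ⟨h1, h2⟩
          omega
    rw [heq, ← YoungDiagram.rowLen_eq_card, rowLen_glue_zero, max_eq_left hm]
  rcases Nat.lt_or_ge mu.card a with hgt | hle
  · rw [wt, if_neg (by omega), if_neg (by omega)]
    rw [Finset.card_eq_zero]
    ext ⟨i, j⟩
    simp only [Finset.mem_filter, Finset.notMem_empty, iff_false, not_and]
    intro hcell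
    rcases i with _ | i'
    · rw [Tof_apply_zero]; omega
    · rw [Tof_apply_succ]
      have h1 : (i', j) ∈ mu.cells := mem_glue_succ.1 ((YoungDiagram.mem_cells _).1 hcell)
      rw [if_pos h1]
      have := eV_le s h1
      omega
  · -- 1 ≤ a ≤ mu.card
    rw [wt, if_neg (by omega), if_pos hle]
    set b : Fin mu.card := ⟨a - 1, by omega⟩ with hb
    have hsv : (b.succ : Fin (mu.card + 1)).val = a := by simp [hb]; omega
    have hcv : (b.castSucc : Fin (mu.card + 1)).val = a - 1 := by simp [hb]
    have hsub : (s.1 b.castSucc).cells ⊆ (s.1 b.succ).cells :=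
      YoungDiagram.cells_subset_iff.2 (s.2.2.2 b).1
    have hcard : ((s.1 b.succ).cells \ (s.1 b.castSucc).cells).card = 1 := by
      rw [Finset.card_sdiff_of_subset hsub]
      have h1 := chain_card s b.succ
      have h2 := chain_card s b.castSucc
      unfold YoungDiagram.card at h1 h2
      omega
    obtain ⟨x, hx⟩ := Finset.card_eq_one.1 hcard
    have hxmem : x ∈ (s.1 b.succ).cells \ (s.1 b.castSucc).cells := by rw [hx]; simp
    have hxmu : x ∈ mu.cells :=
      YoungDiagram.cells_subset_iff.2 (chain_le s b.succ) (Finset.mem_sdiff.1 hxmem).1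
    have heq : ((glue m mu).cells.filter fun c => (Tof (m := m) s) c.1 c.2 = a)
        = {(x.1 + 1, x.2)} := by
      ext ⟨i, j⟩
      rw [Finset.mem_filter, Finset.mem_singleton, Prod.mk.injEq]
      rcases i with _ | i'
      · rw [Tof_apply_zero]
        constructor
        · rintro ⟨_, h⟩; omega
        · rintro ⟨h, _⟩; omega
      · constructor
        · rintro ⟨hcell, hval⟩
          have h1 : (i', j) ∈ mu.cells := mem_glue_succ.1 ((YoungDiagram.mem_cells _).1 hcell)
          have hval' : (Tof (m := m) s) (i' + 1) j = a := hval
          rw [Tof_apply_succ, if_pos h1] at hval'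
          have hmem : (i', j) ∈ (s.1 b.succ).cells := by
            rw [YoungDiagram.mem_cells, eV_mem_iff s h1, hsv]
            omega
          have hnmem : (i', j) ∉ (s.1 b.castSucc).cells := by
            rw [YoungDiagram.mem_cells, eV_mem_iff s h1, hcv]
            omega
          clear hval
          have : (i', j) ∈ ({x} : Finset (ℕ × ℕ)) := by
            rw [← hx]; exact Finset.mem_sdiff.2 ⟨hmem, hnmem⟩
          rw [Finset.mem_singleton] at this
          rw [← this]
          exact ⟨rfl, rfl⟩
        · rintro ⟨h1, h2⟩
          have hxe : (i', j) = x := Prod.ext (by omega) h2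
          rw [← hxe] at hxmu hxmem
          refine ⟨(YoungDiagram.mem_cells _).2 (mem_glue_succ.2 hxmu), ?_⟩
          show (Tof (m := m) s) (i' + 1) j = a
          rw [Tof_apply_succ, if_pos hxmu]
          have hd := Finset.mem_sdiff.1 hxmem
          have hv1 : eV s (i', j) ≤ b.succ.val :=
            (eV_mem_iff s hxmu b.succ).1 ((YoungDiagram.mem_cells _).1 hd.1)
          have hv2 : ¬ (eV s (i', j) ≤ b.castSucc.val) := by
            intro hcon
            exact hd.2 ((YoungDiagram.mem_cells _).2 ((eV_mem_iff s hxmu b.castSucc).2 hcon))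
          rw [hsv] at hv1
          rw [hcv] at hv2
          omega
    rw [heq, Finset.card_singleton]

/-- The chain associated to a tableau, as an element of `ChainTo`. -/
def chainOf (T : KT mu m) : ChainTo mu.card mu :=
  ⟨fun j => sChain T.1 j.val, sChain_zero T.1, sChain_last T,
    fun i => sChain_step hm T i.val i.isLt⟩

/-- The tableau associated to a chain, as an element of `KT`. -/
noncomputable def tabOf (s : ChainTo mu.card mu) : KT mu m :=
  ⟨Tof s, Tof_weight hm s⟩

include hm in
lemma kostka_glue_eq : Nat.card (KT mu m) = Nat.card (ChainTo mu.card mu) := by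
  refine Nat.card_congr ⟨chainOf hm, tabOf hm, ?_, ?_⟩
  · -- left inverse : tabOf (chainOf T) = T
    intro T
    apply Subtype.ext
    apply SemistandardYoungTableau.ext
    intro i j
    show (Tof (chainOf hm T)) i j = T.1 i j
    rcases i with _ | i'
    · rw [Tof_apply_zero]
      by_cases hcell : (0, j) ∈ glue m mu
      · rw [row0_zero hm T hcell]
      · rw [T.1.zeros hcell]
    · rw [Tof_apply_succ]
      by_cases hc : (i', j) ∈ mu.cells
      · rw [if_pos hc]
        have hglue : (i' + 1, j) ∈ glue m mu := mem_glue_succ.2 hc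
        set v := T.1 (i' + 1) j with hv
        have hvle : v ≤ mu.card := T_le T ((YoungDiagram.mem_cells _).2 hglue)
        rw [eV, dif_pos hc]
        rw [Nat.find_eq_iff]
        constructor
        · unfold eP
          show (i', j) ∈ (sChain T.1 (min v mu.card)).cells
          rw [mem_sChain]
          refine ⟨hc, ?_⟩
          show v ≤ min v mu.card
          rw [min_eq_left hvle]
        · intro b hb
          unfold eP
          show ¬ (i', j) ∈ (sChain T.1 (min b mu.card)).cells
          rw [mem_sChain]
          rintro ⟨_, hle2⟩
          have hle3 : v ≤ min b mu.card := hle2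
          have hle4 := min_le_left b mu.card
          omega
      · rw [if_neg hc, T.1.zeros (fun h => hc (mem_glue_succ.1 h))]
  · -- right inverse : chainOf (tabOf s) = s
    intro s
    apply Subtype.ext
    funext j
    show sChain (Tof s) j.val = s.1 j
    ext ⟨c1, c2⟩
    rw [mem_sChain, Tof_apply_succ]
    constructor
    · rintro ⟨hc, hle⟩
      rw [if_pos hc] at hle
      exact (eV_mem_iff s hc j).2 hle
    · intro hmem
      have hc : (c1, c2) ∈ mu.cells :=
        YoungDiagram.cells_subset_iff.2 (chain_le s j) hmem
      refine ⟨hc, ?_⟩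
      rw [if_pos hc]
      exact (eV_mem_iff s hc j).1 hmem

end KostkaGlue2

section Profile

lemma rowLen_bot (i : ℕ) : (⊥ : YoungDiagram).rowLen i = 0 :=
  rowLen_eq_of _ _ _ fun j => by simp [YoungDiagram.notMem_bot]

variable {n : ℕ} {ν : YoungDiagram}

/-- The profile of a chain: the number of cells below the first row at each time. -/
def gpro (t : ChainTo n ν) (v : ℕ) : ℕ := (lowp (t.1 ⟨min v n, by omega⟩)).card

lemma gpro_eq_card (t : ChainTo n ν) (v : ℕ) (i : Fin (n + 1)) (h : min v n = i.val) :
    gpro t v = (lowp (t.1 i)).card := by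
  have hx : (⟨min v n, by omega⟩ : Fin (n + 1)) = i := Fin.ext h
  unfold gpro
  rw [hx]

lemma gpro_at (t : ChainTo n ν) (i : Fin (n + 1)) : gpro t i.val = (lowp (t.1 i)).card :=
  gpro_eq_card t i.val i (by have := i.isLt; omega)

lemma gpro_zero (t : ChainTo n ν) : gpro t 0 = 0 := by
  have h0 := gpro_at t 0
  simp only [Fin.val_zero] at h0
  rw [h0, t.2.1, lowp_bot]
  simp [YoungDiagram.card, YoungDiagram.cells_bot]

lemma gpro_last (t : ChainTo n ν) : gpro t n = (lowp ν).card := by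
  have h0 := gpro_at t (Fin.last n)
  simp only [Fin.val_last] at h0
  rw [h0, t.2.2.1]

lemma gpro_step (t : ChainTo n ν) (v : ℕ) :
    gpro t v ≤ gpro t (v + 1) ∧ gpro t (v + 1) ≤ gpro t v + 1 := by
  rcases Nat.lt_or_ge v n with hv | hv
  · have h1 : gpro t v = (lowp (t.1 (⟨v, hv⟩ : Fin n).castSucc)).card :=
      gpro_eq_card t v _ (by rw [Fin.coe_castSucc]; show min v n = v; omega)
    have h2 : gpro t (v + 1) = (lowp (t.1 (⟨v, hv⟩ : Fin n).succ)).card :=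
      gpro_eq_card t (v + 1) _ (by rw [Fin.val_succ]; show min (v + 1) n = v + 1; omega)
    obtain ⟨hle, hcard⟩ := t.2.2.2 ⟨v, hv⟩
    rcases step_dichotomy hle hcard with ⟨he, _⟩ | ⟨_, he⟩
    · rw [h1, h2, he]
      omega
    · rw [h1, h2, he]
      omega
  · have h1 : gpro t (v + 1) = gpro t v := by
      rw [gpro_eq_card t (v + 1) (Fin.last n) (by rw [Fin.val_last]; omega),
        gpro_eq_card t v (Fin.last n) (by rw [Fin.val_last]; omega)]
    omega

lemma gpro_mono (t : ChainTo n ν) : Monotone (gpro t) :=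
  monotone_nat_of_le_succ fun v => (gpro_step t v).1

lemma gpro_le (t : ChainTo n ν) (v : ℕ) : gpro t v ≤ (lowp ν).card := by
  rcases Nat.lt_or_ge v n with hv | hv
  · rw [← gpro_last t]
    exact gpro_mono t (by omega)
  · have h1 : gpro t v = gpro t n := by
      rw [gpro_eq_card t v (Fin.last n) (by rw [Fin.val_last]; omega),
        gpro_eq_card t n (Fin.last n) (by rw [Fin.val_last]; omega)]
    rw [h1, gpro_last t]

lemma gpro_exists (t : ChainTo n ν) (j : ℕ) (hj : j ≤ (lowp ν).card) :
    ∃ v, gpro t v = j := by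
  obtain ⟨i, _, h⟩ := discrete_ivt (gpro t) (gpro_zero t)
    (fun v => (gpro_step t v).2) n j (by rw [gpro_last t]; exact hj)
  exact ⟨i, h⟩

open Classical in
/-- The first time a chain has `j` cells below the first row. -/
noncomputable def idxOf (t : ChainTo n ν) (j : ℕ) : ℕ :=
  if hj : ∃ v, gpro t v = j then Nat.find hj else 0

lemma idxOf_spec (t : ChainTo n ν) {j : ℕ} (hj : j ≤ (lowp ν).card) :
    gpro t (idxOf t j) = j := by
  unfold idxOf
  rw [dif_pos (gpro_exists t j hj)]
  exact Nat.find_spec (gpro_exists t j hj)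

lemma idxOf_le (t : ChainTo n ν) {j v : ℕ} (hv : gpro t v = j) : idxOf t j ≤ v := by
  unfold idxOf
  rw [dif_pos ⟨v, hv⟩]
  exact Nat.find_le hv

/-- The chain of lower parts, indexed by the number of lower cells. -/
noncomputable def lowChain (t : ChainTo n ν) (j : ℕ) : YoungDiagram :=
  lowp (t.1 ⟨min (idxOf t j) n, by omega⟩)

lemma lowChain_card (t : ChainTo n ν) {j : ℕ} (hj : j ≤ (lowp ν).card) :
    (lowChain t j).card = j :=
  idxOf_spec t hj

lemma lowp_eq_lowChain (t : ChainTo n ν) (i : Fin (n + 1)) :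
    lowp (t.1 i) = lowChain t (gpro t i.val) := by
  set j := gpro t i.val with hj
  have hjle : j ≤ (lowp ν).card := by rw [hj]; exact gpro_le t i.val
  have hidx : idxOf t j ≤ i.val := idxOf_le t rfl
  have hile : i.val ≤ n := by have := i.isLt; omega
  have hmin : (⟨min (idxOf t j) n, by omega⟩ : Fin (n + 1)) ≤ i := by
    rw [Fin.le_def]; simp only; omega
  have hle : lowChain t j ≤ lowp (t.1 i) := lowp_mono (chain_mono t hmin)
  have hcard : (lowp (t.1 i)).card ≤ (lowChain t j).card := by
    rw [lowChain_card t hjle, ← gpro_at t i]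
  exact (eq_of_le_of_card_le hle hcard).symm

lemma lowChain_le (t : ChainTo n ν) {j j' : ℕ} (h : j ≤ j') (hj : j ≤ (lowp ν).card)
    (hj' : j' ≤ (lowp ν).card) : lowChain t j ≤ lowChain t j' := by
  have h1 : idxOf t j ≤ idxOf t j' := by
    by_contra hcon
    push_neg at hcon
    have := gpro_mono t hcon.le
    rw [idxOf_spec t hj, idxOf_spec t hj'] at this
    rcases Nat.eq_or_lt_of_le h with rfl | hlt
    · omega
    · omega
  exact lowp_mono (chain_mono t (by rw [Fin.le_def]; simp only; omega))

end Profile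

section CardFilterFin

lemma card_filter_fin_eq (n : ℕ) (p : ℕ → Prop) [DecidablePred p] :
    ((Finset.univ : Finset (Fin n)).filter (fun i => p i.val)).card
      = ((Finset.range n).filter p).card := by
  have h1 : ((Finset.univ : Finset (Fin n)).filter (fun i => p i.val)).card
      = (((Finset.univ : Finset (Fin n)).map Fin.valEmbedding).filter p).card := by
    rw [Finset.filter_map, Finset.card_map]
    rfl
  rw [h1, Fin.map_valEmbedding_univ]
  congr 1
  ext x
  simp [Finset.mem_filter, Finset.mem_range]

end CardFilterFin

section Upper

variable {mu : YoungDiagram} {m : ℕ}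

lemma chain_upper (hm : mu.rowLen 0 ≤ m) :
    Nat.card (ChainTo (m + mu.card) (glue m mu))
      ≤ (m + mu.card).choose mu.card * Nat.card (ChainTo mu.card mu) := by
  classical
  set k := mu.card with hk
  set n := m + k with hn
  have hlowglue : lowp (glue m mu) = mu := lowp_glue m mu
  have hlowcard : (lowp (glue m mu)).card = k := by rw [hlowglue]
  -- the jump set
  have hScard : ∀ t : ChainTo n (glue m mu),
      ((Finset.univ : Finset (Fin n)).filter
        (fun i => gpro t (i.val + 1) = gpro t i.val + 1)).card = k := by
    intro t
    rw [card_filter_fin_eq n (fun v => gpro t (v + 1) = gpro t v + 1)]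
    rw [count_jumps (gpro t) (fun v => gpro_step t v) n]
    rw [gpro_last t, gpro_zero t, hlowcard]
    omega
  -- the lower chain
  have hsOf : ∀ t : ChainTo n (glue m mu),
      (fun j : Fin (k + 1) => lowChain t j.val) 0 = ⊥ ∧
      (fun j : Fin (k + 1) => lowChain t j.val) (Fin.last k) = mu ∧
      ∀ j : Fin k, lowChain t j.castSucc.val ≤ lowChain t j.succ.val ∧
        (lowChain t j.succ.val).card = (lowChain t j.castSucc.val).card + 1 := by
    intro t
    refine ⟨?_, ?_, ?_⟩
    · simp only [Fin.val_zero]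
      exact eq_bot_of_card_eq_zero (lowChain_card t (by omega))
    · simp only [Fin.val_last]
      have h2 : gpro t n = k := by rw [gpro_last t, hlowcard]
      have h1 := lowp_eq_lowChain t (Fin.last n)
      rw [t.2.2.1, hlowglue, Fin.val_last, h2] at h1
      exact h1.symm
    · intro j
      have hj1 : j.castSucc.val ≤ k := by
        rw [Fin.coe_castSucc]; have := j.isLt; omega
      have hj2 : j.succ.val ≤ k := by
        rw [Fin.val_succ]; have := j.isLt; omega
      refine ⟨lowChain_le t (by rw [Fin.coe_castSucc, Fin.val_succ]; omega) (by omega)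
        (by omega), ?_⟩
      rw [lowChain_card t (by omega), lowChain_card t (by omega), Fin.coe_castSucc, Fin.val_succ]
  -- the injection
  have hinj : Function.Injective (fun t : ChainTo n (glue m mu) =>
      ((⟨(Finset.univ : Finset (Fin n)).filter
          (fun i => gpro t (i.val + 1) = gpro t i.val + 1), hScard t⟩ :
        {S : Finset (Fin n) // S.card = k}),
       (⟨fun j : Fin (k + 1) => lowChain t j.val, hsOf t⟩ : ChainTo k mu))) := by
    intro t t' heq
    have hS : ((Finset.univ : Finset (Fin n)).filter
          (fun i => gpro t (i.val + 1) = gpro t i.val + 1))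
        = ((Finset.univ : Finset (Fin n)).filter
          (fun i => gpro t' (i.val + 1) = gpro t' i.val + 1)) :=
      congrArg (fun x => (Prod.fst x).val) heq
    have hlc : ∀ j : Fin (k + 1), lowChain t j.val = lowChain t' j.val := by
      intro j
      exact congrFun (congrArg (fun x => (Prod.snd x).val) heq) j
    -- profiles agree
    have hgeq : ∀ v, gpro t v = gpro t' v := by
      intro v
      induction v with
      | zero => rw [gpro_zero, gpro_zero]
      | succ v ih =>
        rcases Nat.lt_or_ge v n with hv | hv
        · have hs1 := gpro_step t v
          have hs2 := gpro_step t' v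
          by_cases hjump : gpro t (v + 1) = gpro t v + 1
          · have hmem : (⟨v, hv⟩ : Fin n) ∈ (Finset.univ : Finset (Fin n)).filter
                (fun i => gpro t (i.val + 1) = gpro t i.val + 1) :=
              Finset.mem_filter.2 ⟨Finset.mem_univ _, hjump⟩
            rw [hS] at hmem
            have hjump' : gpro t' (v + 1) = gpro t' v + 1 := (Finset.mem_filter.1 hmem).2
            omega
          · have hmem : (⟨v, hv⟩ : Fin n) ∉ (Finset.univ : Finset (Fin n)).filter
                (fun i => gpro t (i.val + 1) = gpro t i.val + 1) := by
              intro hcon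
              exact hjump (Finset.mem_filter.1 hcon).2
            rw [hS] at hmem
            have hjump' : ¬ (gpro t' (v + 1) = gpro t' v + 1) := by
              intro hcon
              exact hmem (Finset.mem_filter.2 ⟨Finset.mem_univ _, hcon⟩)
            omega
        · have h1 : gpro t (v + 1) = gpro t v := by
            rw [gpro_eq_card t (v + 1) (Fin.last n) (by rw [Fin.val_last]; omega),
              gpro_eq_card t v (Fin.last n) (by rw [Fin.val_last]; omega)]
          have h2 : gpro t' (v + 1) = gpro t' v := by
            rw [gpro_eq_card t' (v + 1) (Fin.last n) (by rw [Fin.val_last]; omega),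
              gpro_eq_card t' v (Fin.last n) (by rw [Fin.val_last]; omega)]
          omega
    -- conclude
    apply Subtype.ext
    funext i
    have hl1 := lowp_eq_lowChain t i
    have hl2 := lowp_eq_lowChain t' i
    have hgle : gpro t i.val ≤ k := by
      have := gpro_le t i.val
      rwa [hlowcard] at this
    have hlow : lowp (t.1 i) = lowp (t'.1 i) := by
      rw [hl1, hl2, ← hgeq i.val]
      exact hlc ⟨gpro t i.val, by omega⟩
    have hc1 := chain_card t i
    have hc2 := chain_card t' i
    have hr1 := card_eq_rowLen_add_card_lowp (t.1 i)
    have hr2 := card_eq_rowLen_add_card_lowp (t'.1 i)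
    refine eq_of_lowp_rowLen hlow ?_
    have : (lowp (t.1 i)).card = (lowp (t'.1 i)).card := by rw [hlow]
    omega
  calc Nat.card (ChainTo n (glue m mu))
      ≤ Nat.card ({S : Finset (Fin n) // S.card = k} × ChainTo k mu) :=
        Nat.card_le_card_of_injective _ hinj
    _ = n.choose k * Nat.card (ChainTo k mu) := by
        rw [Nat.card_prod, card_setsK]

end Upper

section Lower

variable {n : ℕ}

/-- The number of elements of `S` below `v`. -/
def cnt (S : Finset (Fin n)) (v : ℕ) : ℕ := (S.filter (fun a => a.val < v)).card

lemma cnt_zero (S : Finset (Fin n)) : cnt S 0 = 0 := by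
  unfold cnt
  rw [Finset.card_eq_zero]
  ext a
  simp

lemma cnt_mono (S : Finset (Fin n)) {v w : ℕ} (h : v ≤ w) : cnt S v ≤ cnt S w :=
  Finset.card_le_card (Finset.monotone_filter_right S (fun a _ (ha : a.val < v) => by omega))

lemma cnt_le_card (S : Finset (Fin n)) (v : ℕ) : cnt S v ≤ S.card :=
  Finset.card_le_card (Finset.filter_subset _ _)

lemma cnt_full (S : Finset (Fin n)) : cnt S n = S.card := by
  unfold cnt
  congr 1
  ext a
  simp [a.isLt]

lemma cnt_succ (S : Finset (Fin n)) (v : ℕ) :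
    cnt S (v + 1) = cnt S v + (S.filter (fun a => a.val = v)).card := by
  unfold cnt
  rw [← Finset.card_union_of_disjoint]
  · congr 1
    ext a
    simp only [Finset.mem_union, Finset.mem_filter]
    constructor
    · rintro ⟨h1, h2⟩
      rcases Nat.lt_or_ge a.val v with h | h
      · exact Or.inl ⟨h1, h⟩
      · exact Or.inr ⟨h1, by omega⟩
    · rintro (⟨h1, h2⟩ | ⟨h1, h2⟩) <;> exact ⟨h1, by omega⟩
  · rw [Finset.disjoint_right]
    rintro a h1 h2
    rw [Finset.mem_filter] at h1 h2
    omega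

lemma cnt_val_card_le (S : Finset (Fin n)) (v : ℕ) :
    (S.filter (fun a => a.val = v)).card ≤ 1 := by
  rw [Finset.card_le_one]
  rintro a ha b hb
  rw [Finset.mem_filter] at ha hb
  exact Fin.ext (by omega)

lemma cnt_succ_mem (S : Finset (Fin n)) (i : Fin n) (hi : i ∈ S) :
    cnt S (i.val + 1) = cnt S i.val + 1 := by
  rw [cnt_succ]
  congr 1
  rw [show (S.filter (fun a => a.val = i.val)) = {i} from ?_]
  · exact Finset.card_singleton i
  · ext a
    rw [Finset.mem_filter, Finset.mem_singleton]
    constructor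
    · rintro ⟨_, h⟩; exact Fin.ext h
    · rintro rfl; exact ⟨hi, rfl⟩

lemma cnt_succ_not (S : Finset (Fin n)) (v : ℕ) (hv : ∀ h : v < n, (⟨v, h⟩ : Fin n) ∉ S) :
    cnt S (v + 1) = cnt S v := by
  rw [cnt_succ]
  rw [show (S.filter (fun a => a.val = v)) = ∅ from ?_]
  · simp
  · ext a
    rw [Finset.mem_filter]
    simp only [Finset.notMem_empty, iff_false, not_and]
    intro ha hav
    exact (hv (by omega) (by rwa [show (⟨v, by omega⟩ : Fin n) = a from Fin.ext hav.symm])).elim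

lemma cnt_step_le (S : Finset (Fin n)) (v : ℕ) : cnt S (v + 1) ≤ cnt S v + 1 := by
  rw [cnt_succ]
  have := cnt_val_card_le S v
  omega

lemma cnt_le_self (S : Finset (Fin n)) (v : ℕ) : cnt S v ≤ v := by
  induction v with
  | zero => rw [cnt_zero]
  | succ v ih =>
    have := cnt_step_le S v
    omega

variable {k : ℕ} {ν : YoungDiagram}

/-- The chain `s` evaluated at a clamped natural index. -/
def sAt (s : ChainTo k ν) (j : ℕ) : YoungDiagram := s.1 ⟨min j k, by omega⟩

lemma sAt_eq (s : ChainTo k ν) {j : ℕ} (hj : j ≤ k) :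
    sAt s j = s.1 ⟨j, by omega⟩ := by
  unfold sAt
  have hx : (⟨min j k, by omega⟩ : Fin (k + 1)) = ⟨j, by omega⟩ :=
    Fin.ext (by show min j k = j; omega)
  rw [hx]

lemma sAt_zero (s : ChainTo k ν) : sAt s 0 = ⊥ := by
  rw [sAt_eq s (by omega), show (⟨0, by omega⟩ : Fin (k + 1)) = 0 from rfl, s.2.1]

lemma sAt_last (s : ChainTo k ν) : sAt s k = ν := by
  rw [sAt_eq s le_rfl, show (⟨k, by omega⟩ : Fin (k + 1)) = Fin.last k from rfl, s.2.2.1]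

lemma sAt_card (s : ChainTo k ν) {j : ℕ} (hj : j ≤ k) : (sAt s j).card = j := by
  rw [sAt_eq s hj]
  exact chain_card s _

lemma sAt_le (s : ChainTo k ν) {j j' : ℕ} (h : j ≤ j') : sAt s j ≤ sAt s j' :=
  chain_mono s (by rw [Fin.le_def]; show min j k ≤ min j' k; omega)

lemma sAt_rowLen_le (s : ChainTo k ν) (j : ℕ) : (sAt s j).rowLen 0 ≤ ν.rowLen 0 := by
  have := sAt_le s (le_max_left j k)
  have h2 : sAt s (max j k) = ν := by
    unfold sAt
    rw [show (⟨min (max j k) k, by omega⟩ : Fin (k + 1)) = Fin.last k from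
      Fin.ext (by show min (max j k) k = k; omega), s.2.2.1]
  rw [h2] at this
  exact rowLen_mono this 0

lemma sAt_step (s : ChainTo k ν) {j : ℕ} (hj : j < k) :
    sAt s j ≤ sAt s (j + 1) ∧ (sAt s (j + 1)).card = (sAt s j).card + 1 := by
  have h := s.2.2.2 ⟨j, hj⟩
  rw [sAt_eq s (by omega), sAt_eq s (by omega)]
  have h1 : (⟨j, by omega⟩ : Fin (k + 1)) = (⟨j, hj⟩ : Fin k).castSucc := rfl
  have h2 : (⟨j + 1, by omega⟩ : Fin (k + 1)) = (⟨j, hj⟩ : Fin k).succ := rfl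
  rw [h1, h2]
  exact h

variable {mu : YoungDiagram} {m : ℕ}

/-- The chain built from a sparse subset and a chain for `mu`. -/
def tlow (S : Finset (Fin n)) (s : ChainTo mu.card mu) (i : Fin (n + 1)) : YoungDiagram :=
  glue (i.val - cnt S i.val) (sAt s (cnt S i.val))

lemma chain_lower (hm : mu.rowLen 0 ≤ m) :
    (m - mu.rowLen 0).choose mu.card * Nat.card (ChainTo mu.card mu)
      ≤ Nat.card (ChainTo (m + mu.card) (glue m mu)) := by
  classical
  set k := mu.card with hk
  set n := m + k with hn
  set cS := mu.rowLen 0 + k with hcS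
  -- the main construction
  have hmk : ∀ (S : Finset (Fin n)) (s : ChainTo k mu), S.card = k → (∀ a ∈ S, cS ≤ a.val) →
      (tlow S s 0 = ⊥ ∧ tlow S s (Fin.last n) = glue m mu ∧
        ∀ i : Fin n, tlow S s i.castSucc ≤ tlow S s i.succ ∧
          (tlow S s i.succ).card = (tlow S s i.castSucc).card + 1) := by
    intro S s h1 h2
    have hjle : ∀ v, cnt S v ≤ k := fun v => h1 ▸ cnt_le_card S v
    have hbound : ∀ v, 1 ≤ cnt S v → cS + 1 ≤ v := by
      intro v hv
      have hne : (S.filter (fun a => a.val < v)).Nonempty := by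
        rw [← Finset.card_pos]
        exact hv
      obtain ⟨a, ha⟩ := hne
      rw [Finset.mem_filter] at ha
      have := h2 a ha.1
      omega
    have hfit : ∀ v, (sAt s (cnt S v)).rowLen 0 ≤ v - cnt S v := by
      intro v
      rcases Nat.eq_zero_or_pos (cnt S v) with h0 | hpos
      · rw [h0, sAt_zero, rowLen_bot]
        omega
      · have hb := hbound v hpos
        have hr := sAt_rowLen_le s (cnt S v)
        have := hjle v
        omega
    refine ⟨?_, ?_, ?_⟩
    · show glue ((0 : Fin (n+1)).val - cnt S (0 : Fin (n+1)).val)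
        (sAt s (cnt S (0 : Fin (n+1)).val)) = ⊥
      rw [show ((0 : Fin (n+1)).val) = 0 from rfl, cnt_zero, sAt_zero]
      exact glue_bot_zero
    · show glue ((Fin.last n).val - cnt S (Fin.last n).val)
        (sAt s (cnt S (Fin.last n).val)) = glue m mu
      rw [Fin.val_last, cnt_full, h1, sAt_last]
      congr 1
      omega
    · intro i
      have hcv : (i.castSucc : Fin (n + 1)).val = i.val := rfl
      have hsv : (i.succ : Fin (n + 1)).val = i.val + 1 := rfl
      set v := i.val with hv
      set j := cnt S v with hj
      have hjv : j ≤ v := cnt_le_self S v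
      by_cases hmem : i ∈ S
      · have hstep : cnt S (v + 1) = j + 1 := cnt_succ_mem S i hmem
        have hjk : j + 1 ≤ k := by rw [← hstep]; exact hjle (v + 1)
        have hvge : cS ≤ v := h2 i hmem
        have hrow1 : (sAt s j).rowLen 0 ≤ v - j := by
          have := sAt_rowLen_le s j
          omega
        have hrow2 : (sAt s (j + 1)).rowLen 0 ≤ v - j := by
          have := sAt_rowLen_le s (j + 1)
          omega
        constructor
        · show glue (v - j) (sAt s j) ≤ glue (v + 1 - cnt S (v + 1)) (sAt s (cnt S (v + 1)))
          rw [hstep, show v + 1 - (j + 1) = v - j from by omega]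
          exact glue_mono_right _ (sAt_step s (by omega)).1
        · show (glue (v + 1 - cnt S (v + 1)) (sAt s (cnt S (v + 1)))).card
            = (glue (v - j) (sAt s j)).card + 1
          rw [hstep, show v + 1 - (j + 1) = v - j from by omega,
            card_glue' hrow2, card_glue' hrow1, sAt_card s hjk, sAt_card s (by omega)]
          omega
      · have hstep : cnt S (v + 1) = j := by
          refine cnt_succ_not S v ?_
          intro h hcon
          exact hmem (by rwa [show (⟨v, h⟩ : Fin n) = i from Fin.ext rfl] at hcon)
        have hrow1 : (sAt s j).rowLen 0 ≤ v - j := hfit v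
        constructor
        · show glue (v - j) (sAt s j) ≤ glue (v + 1 - cnt S (v + 1)) (sAt s (cnt S (v + 1)))
          rw [hstep]
          exact glue_mono_left (by omega) _
        · show (glue (v + 1 - cnt S (v + 1)) (sAt s (cnt S (v + 1)))).card
            = (glue (v - j) (sAt s j)).card + 1
          rw [hstep, card_glue' (by omega : (sAt s j).rowLen 0 ≤ v + 1 - j),
            card_glue' hrow1]
          omega
  -- the injection
  have hinj : Function.Injective
      (fun p : {S : Finset (Fin n) // S.card = k ∧ ∀ a ∈ S, cS ≤ a.val} × ChainTo k mu =>
        (⟨tlow p.1.1 p.2, hmk p.1.1 p.2 p.1.2.1 p.1.2.2⟩ : ChainTo n (glue m mu))) := by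
    rintro ⟨⟨S, hS1, hS2⟩, s⟩ ⟨⟨S', hS1', hS2'⟩, s'⟩ heq
    have heqf : ∀ i : Fin (n + 1), tlow S s i = tlow S' s' i := by
      intro i
      exact congrFun (congrArg Subtype.val heq) i
    have hcnt : ∀ i : Fin (n + 1), cnt S i.val = cnt S' i.val := by
      intro i
      have h1 := congrArg (fun d => (lowp d).card) (heqf i)
      simp only [tlow, lowp_glue] at h1
      rwa [sAt_card s (hS1 ▸ cnt_le_card S _), sAt_card s' (hS1' ▸ cnt_le_card S' _)] at h1
    have hcnt' : ∀ v : ℕ, v ≤ n → cnt S v = cnt S' v := by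
      intro v hvn
      have := hcnt ⟨v, by omega⟩
      exact this
    have hSS : S = S' := by
      ext a
      have h1 := hcnt' a.val (by have := a.isLt; omega)
      have h2 := hcnt' (a.val + 1) (by have := a.isLt; omega)
      constructor
      · intro ha
        have := cnt_succ_mem S a ha
        by_contra hcon
        have := cnt_succ_not S' a.val (fun h hc => hcon (by
          rwa [show (⟨a.val, h⟩ : Fin n) = a from Fin.ext rfl] at hc))
        omega
      · intro ha
        have := cnt_succ_mem S' a ha
        by_contra hcon
        have := cnt_succ_not S a.val (fun h hc => hcon (by
          rwa [show (⟨a.val, h⟩ : Fin n) = a from Fin.ext rfl] at hc))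
        omega
    subst hSS
    have hss : s = s' := by
      apply Subtype.ext
      funext j
      have hjk : j.val ≤ k := by have := j.isLt; omega
      obtain ⟨v, hvn, hcv⟩ := discrete_ivt (cnt S) (cnt_zero S) (cnt_step_le S) n j.val
        (by rw [cnt_full, hS1]; exact hjk)
      have h1 := congrArg lowp (heqf ⟨v, by omega⟩)
      simp only [tlow, lowp_glue] at h1
      rw [hcv] at h1
      rwa [sAt_eq s hjk, sAt_eq s' hjk,
        show (⟨j.val, by omega⟩ : Fin (k + 1)) = j from Fin.ext rfl] at h1
    subst hss
    rfl
  calc (m - mu.rowLen 0).choose k * Nat.card (ChainTo k mu)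
      = Nat.card ({S : Finset (Fin n) // S.card = k ∧ ∀ a ∈ S, cS ≤ a.val} × ChainTo k mu) := by
        rw [Nat.card_prod, card_setsK']
        congr 2
        omega
    _ ≤ Nat.card (ChainTo n (glue m mu)) := Nat.card_le_card_of_injective _ hinj

end Lower

section Limits

open Filter

lemma tendsto_ratio (a b : ℝ) :
    Tendsto (fun x : ℝ => (x - a) / (x - b)) atTop (nhds 1) := by
  have hnum : ∀ c : ℝ, Tendsto (fun x : ℝ => 1 - c * x⁻¹) atTop (nhds 1) := by
    intro c
    have h1 : Tendsto (fun x : ℝ => c * x⁻¹) atTop (nhds 0) := by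
      simpa using tendsto_inv_atTop_zero.const_mul c
    simpa using (tendsto_const_nhds (x := (1 : ℝ)) (f := atTop)).sub h1
  have h := ((hnum a).div (hnum b) one_ne_zero)
  simp only [div_one] at h
  refine h.congr' ?_
  filter_upwards [eventually_gt_atTop (|a| + |b| + 1)] with x hx
  have ha := le_abs_self a
  have hb := le_abs_self b
  have ha' := abs_nonneg a
  have hb' := abs_nonneg b
  have hx0 : x ≠ 0 := by nlinarith
  have hxb : x - b ≠ 0 := by nlinarith
  simp only [Pi.div_apply]
  field_simp
  try ring

lemma tendsto_sub_div (a b : ℕ) :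
    Tendsto (fun nn : ℕ => ((nn - a : ℕ) : ℝ) / ((nn - b : ℕ) : ℝ)) atTop (nhds 1) := by
  have h := (tendsto_ratio (a : ℝ) (b : ℝ)).comp tendsto_natCast_atTop_atTop (f := fun n : ℕ => (n : ℝ))
  refine h.congr' ?_
  filter_upwards [eventually_ge_atTop (a + b)] with nn hnn
  simp only [Function.comp_apply]
  rw [Nat.cast_sub (by omega), Nat.cast_sub (by omega)]

lemma tendsto_choose_ratio (c q : ℕ) :
    Tendsto (fun nn : ℕ => (((nn - c).choose q : ℕ) : ℝ) / ((nn.choose q : ℕ) : ℝ))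
      atTop (nhds 1) := by
  have hprod : Tendsto (fun nn : ℕ =>
      ∏ i ∈ Finset.range q, (((nn - (c + i) : ℕ) : ℝ) / ((nn - i : ℕ) : ℝ)))
      atTop (nhds 1) := by
    have := tendsto_finset_prod (f := fun (i : ℕ) (nn : ℕ) =>
        (((nn - (c + i) : ℕ) : ℝ) / ((nn - i : ℕ) : ℝ)))
      (x := atTop) (a := fun _ => (1 : ℝ)) (Finset.range q)
      (fun i _ => tendsto_sub_div (c + i) i)
    simpa using this
  refine hprod.congr' ?_
  filter_upwards [eventually_ge_atTop (c + q + 1)] with nn hnn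
  have hq : q ≤ nn := by omega
  have hq' : q ≤ nn - c := by omega
  have hfac : (q.factorial : ℝ) ≠ 0 := by
    exact_mod_cast Nat.factorial_pos q |>.ne'
  have hd1 : (((nn - c).choose q : ℕ) : ℝ) = ((nn - c).descFactorial q : ℝ) / (q.factorial : ℝ) := by
    rw [Nat.descFactorial_eq_factorial_mul_choose]
    push_cast
    field_simp
  have hd2 : ((nn.choose q : ℕ) : ℝ) = (nn.descFactorial q : ℝ) / (q.factorial : ℝ) := by
    rw [Nat.descFactorial_eq_factorial_mul_choose]
    push_cast
    field_simp
  rw [hd1, hd2, div_div_div_comm, div_self hfac, div_one]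
  rw [Nat.descFactorial_eq_prod_range, Nat.descFactorial_eq_prod_range]
  push_cast
  rw [← Finset.prod_div_distrib]
  refine Finset.prod_congr rfl ?_
  intro i hi
  rw [Finset.mem_range] at hi
  rw [Nat.sub_sub]

end Limits

lemma kostka_glue_val {mu : YoungDiagram} {m : ℕ} (hm : mu.rowLen 0 ≤ m) :
    kostka (glue m mu) (wt m mu.card) = Nat.card (ChainTo mu.card mu) := by
  have h0 : kostka (glue m mu) (wt m mu.card) = Nat.card (KT mu m) := rfl
  rw [h0]
  exact kostka_glue_eq hm

lemma dimSYT_eq_chainTo (ν : YoungDiagram) : dimSYT ν = Nat.card (ChainTo ν.card ν) := rfl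

end PlancherelAux

open PlancherelAux Filter in
/-- For a partition `μ` of `k` and the weight `1^k`, the sequence
`K_{(n-k,μ),(n-k,1^k)} · dim (n-k,μ) / (n!/(n-k)!)` tends to the Plancherel weight
`(dim μ)²/k!` as `n → ∞`.  Here `f n` encodes `K_{(n-k,μ),(n-k,1^k)} · dim (n-k,μ)`, the
shape `(n-k,μ)` being characterized by its row lengths. -/
theorem kostka_dim_tendsto_plancherel (k : ℕ) (mu : YoungDiagram) (hmu : mu.card = k)
    (f : ℕ → ℕ)
    (hf : ∀ n : ℕ, k + mu.rowLen 0 ≤ n → ∀ mu' : YoungDiagram,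
      mu'.rowLen 0 = n - k → (∀ i : ℕ, mu'.rowLen (i + 1) = mu.rowLen i) →
      f n = kostka mu'
          (fun i => if i = 0 then n - k else if i ≤ k then 1 else 0) * dimSYT mu') :
    Filter.Tendsto
      (fun n : ℕ => (f n : ℝ) / ((n.factorial : ℝ) / ((n - k).factorial : ℝ)))
      Filter.atTop
      (nhds ((dimSYT mu : ℝ) ^ 2 / (k.factorial : ℝ))) := by
  classical
  subst hmu
  set K : ℕ := mu.card with hK
  set c0 : ℕ := mu.rowLen 0 with hc0
  set D : ℕ := dimSYT mu with hD
  have hDchain : Nat.card (ChainTo K mu) = D := by rw [hD, dimSYT_eq_chainTo]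
  -- eventual bounds on f
  have hbounds : ∀ n : ℕ, K + c0 + K + 1 ≤ n →
      (n - (K + c0)).choose K * (D * D) ≤ f n ∧ f n ≤ n.choose K * (D * D) := by
    intro n hn
    set m : ℕ := n - K with hmdef
    have hm : c0 ≤ m := by omega
    have hrow0 : (glue m mu).rowLen 0 = n - K := by
      rw [rowLen_glue_zero, max_eq_left hm]
    have hrows : ∀ i, (glue m mu).rowLen (i + 1) = mu.rowLen i := rowLen_glue_succ m mu
    have hfn := hf n (by omega) (glue m mu) hrow0 hrows
    have hkost : kostka (glue m mu)
        (fun i => if i = 0 then n - K else if i ≤ K then 1 else 0) = D := by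
      have h1 : (fun i => if i = 0 then n - K else if i ≤ K then 1 else 0) = wt m K := rfl
      rw [h1, kostka_glue_val hm, hDchain]
    have hdim : dimSYT (glue m mu) = Nat.card (ChainTo (m + K) (glue m mu)) := by
      rw [dimSYT_eq_chainTo, card_glue' hm]
    rw [hfn, hkost, hdim]
    constructor
    · have hlow := chain_lower hm
      rw [hDchain] at hlow
      have he : n - (K + c0) = m - c0 := by omega
      rw [he]
      calc (m - c0).choose K * (D * D) = D * ((m - c0).choose K * D) := by ring
        _ ≤ D * Nat.card (ChainTo (m + K) (glue m mu)) := Nat.mul_le_mul_left D hlow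
    · have hup := chain_upper hm
      rw [hDchain] at hup
      calc D * Nat.card (ChainTo (m + K) (glue m mu)) ≤ D * ((m + K).choose K * D) :=
            Nat.mul_le_mul_left D hup
        _ = (m + K).choose K * (D * D) := by ring
        _ = n.choose K * (D * D) := by rw [show m + K = n from by omega]
  -- the limit value
  have hfacpos : (0 : ℝ) < (K.factorial : ℝ) := by exact_mod_cast K.factorial_pos
  set L : ℝ := (D : ℝ) ^ 2 / (K.factorial : ℝ) with hL
  have hlo_t : Tendsto
      (fun n : ℕ => L * (((n - (K + c0)).choose K : ℝ) / (n.choose K : ℝ)))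
      atTop (nhds L) := by
    have := (tendsto_choose_ratio (K + c0) K).const_mul L
    simpa using this
  refine tendsto_of_tendsto_of_tendsto_of_le_of_le' hlo_t
    (tendsto_const_nhds (x := L) (f := atTop)) ?_ ?_
  · -- lower bound eventually
    filter_upwards [eventually_ge_atTop (K + c0 + K + 1)] with n hn
    obtain ⟨h1, _⟩ := hbounds n hn
    have hkn : K ≤ n := by omega
    have hchoosepos : (0 : ℝ) < (n.choose K : ℝ) := by
      exact_mod_cast Nat.choose_pos hkn
    have hden : (n.factorial : ℝ) / ((n - K).factorial : ℝ)
        = (n.choose K : ℝ) * (K.factorial : ℝ) := by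
      have hid := Nat.choose_mul_factorial_mul_factorial hkn
      have h2 : (0 : ℝ) < ((n - K).factorial : ℝ) := by
        exact_mod_cast (n - K).factorial_pos
      rw [div_eq_iff h2.ne']
      exact_mod_cast hid.symm
    rw [hden]
    rw [hL, div_mul_div_comm]
    have hnum : ((D : ℝ) ^ 2 * ((n - (K + c0)).choose K : ℝ)) ≤ (f n : ℝ) := by
      calc ((D : ℝ) ^ 2 * ((n - (K + c0)).choose K : ℝ))
          = (((n - (K + c0)).choose K * (D * D) : ℕ) : ℝ) := by push_cast; ring
        _ ≤ (f n : ℝ) := by exact_mod_cast h1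
    calc (D : ℝ) ^ 2 * ((n - (K + c0)).choose K : ℝ) / ((K.factorial : ℝ) * (n.choose K : ℝ))
        = ((D : ℝ) ^ 2 * ((n - (K + c0)).choose K : ℝ)) / ((n.choose K : ℝ) * (K.factorial : ℝ)) := by
          rw [mul_comm ((K.factorial : ℝ)) ((n.choose K : ℝ))]
      _ ≤ (f n : ℝ) / ((n.choose K : ℝ) * (K.factorial : ℝ)) := by
          gcongr
  · -- upper bound eventually
    filter_upwards [eventually_ge_atTop (K + c0 + K + 1)] with n hn
    obtain ⟨_, h2⟩ := hbounds n hn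
    have hkn : K ≤ n := by omega
    have hchoosepos : (0 : ℝ) < (n.choose K : ℝ) := by
      exact_mod_cast Nat.choose_pos hkn
    have hden : (n.factorial : ℝ) / ((n - K).factorial : ℝ)
        = (n.choose K : ℝ) * (K.factorial : ℝ) := by
      have hid := Nat.choose_mul_factorial_mul_factorial hkn
      have h2' : (0 : ℝ) < ((n - K).factorial : ℝ) := by
        exact_mod_cast (n - K).factorial_pos
      rw [div_eq_iff h2'.ne']
      exact_mod_cast hid.symm
    rw [hden]
    have hnum : (f n : ℝ) ≤ (D : ℝ) ^ 2 * (n.choose K : ℝ) := by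
      calc (f n : ℝ) ≤ ((n.choose K * (D * D) : ℕ) : ℝ) := by exact_mod_cast h2
        _ = (D : ℝ) ^ 2 * (n.choose K : ℝ) := by push_cast; ring
    have hstep : (f n : ℝ) / ((n.choose K : ℝ) * (K.factorial : ℝ))
        ≤ ((D : ℝ) ^ 2 * (n.choose K : ℝ)) / ((n.choose K : ℝ) * (K.factorial : ℝ)) := by
      gcongr
    refine hstep.trans_eq ?_
    rw [hL]
    field_simp
end
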